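/- arXiv:2205.05179 — 8 statements merged into one kernel-verified Lean document; each statement's English description precedes it below -/
import Mathlib

section
/- Every topological n-manifold M has topological (covering) dimension at most n: every open cover of M possesses an open refinement of order at most n. -/
/-- The closed half-space in `ℝ^n` (`≅ ℝ^{n-1} × [0,∞)` for `n ≥ 1`):
points of `ℝ^n` whose last coordinate is nonnegative. -/
def HalfSpace (n : ℕ) : Set (Fin n → ℝ) :=
  {y | ∀ i : Fin n, (i : ℕ) + 1 = n → 0 ≤ y i}

/-- A topological `n`-manifold (with or without boundary): a second-countable Hausdorff
space each of whose points has an open neighbourhood homeomorphic to an open subset of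
`ℝ^n` or to an open subset of the half-space `ℝ^{n-1} × [0,∞)`. -/
def IsTopManifold (n : ℕ) (M : Type*) [TopologicalSpace M] : Prop :=
  SecondCountableTopology M ∧ T2Space M ∧
    ∀ x : M, ∃ U : Set M, IsOpen U ∧ x ∈ U ∧
      ∃ s : Set (Fin n → ℝ),
        (IsOpen s ∨ ∃ t : Set (Fin n → ℝ), IsOpen t ∧ s = t ∩ HalfSpace n) ∧
        Nonempty (↥U ≃ₜ ↥s)

/-- A family `𝒜` of subsets of `X` has order at most `m`: no point of `X` lies in more
than `m + 1` distinct elements of `𝒜`. -/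
def OrderAtMost {X : Type*} (𝒜 : Set (Set X)) (m : ℕ) : Prop :=
  ∀ (x : X) (𝒮 : Finset (Set X)), (∀ A ∈ 𝒮, A ∈ 𝒜 ∧ x ∈ A) → 𝒮.card ≤ m + 1

/-- The topological (covering) dimension of `X` is at most `m`: every open cover of `X`
possesses an open refinement (an open cover each of whose members is contained in some
member of the original cover) of order at most `m`. -/
def TopDimLE (X : Type*) [TopologicalSpace X] (m : ℕ) : Prop :=
  ∀ 𝒰 : Set (Set X), (∀ U ∈ 𝒰, IsOpen U) → ⋃₀ 𝒰 = Set.univ →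
    ∃ 𝒱 : Set (Set X), (∀ V ∈ 𝒱, IsOpen V) ∧ ⋃₀ 𝒱 = Set.univ ∧
      (∀ V ∈ 𝒱, ∃ U ∈ 𝒰, V ⊆ U) ∧ OrderAtMost 𝒱 m

namespace DimM
open Set Metric Topology

/-- membership condition for the brick at `u ∈ ℤ^n`, scale `δ`. -/
def Valid (n : ℕ) (δ : ℝ) (u : Fin n → ℤ) (x : Fin n → ℝ) : Prop :=
  (∀ j, x j - δ * u j < δ) ∧ (∀ j, δ * u j - x j < δ) ∧
    (∀ j l, (x j - δ * u j) + (δ * u l - x l) < δ)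

def brick (n : ℕ) (δ : ℝ) (u : Fin n → ℤ) : Set (Fin n → ℝ) := {x | Valid n δ u x}

lemma isOpen_brick (n : ℕ) (δ : ℝ) (u : Fin n → ℤ) : IsOpen (brick n δ u) := by
  have : brick n δ u =
      (⋂ j, {x : Fin n → ℝ | x j - δ * u j < δ}) ∩
      ((⋂ j, {x : Fin n → ℝ | δ * u j - x j < δ}) ∩
       (⋂ j, ⋂ l, {x : Fin n → ℝ | (x j - δ * u j) + (δ * u l - x l) < δ})) := by
    ext x
    simp [brick, Valid, mem_iInter, and_assoc]
  rw [this]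
  refine (isOpen_iInter_of_finite fun j => ?_).inter
    ((isOpen_iInter_of_finite fun j => ?_).inter
      (isOpen_iInter_of_finite fun j => isOpen_iInter_of_finite fun l => ?_))
  · exact isOpen_lt (by fun_prop) continuous_const
  · exact isOpen_lt (by fun_prop) continuous_const
  · exact isOpen_lt (by fun_prop) continuous_const

lemma valid_abs {n : ℕ} {δ : ℝ} {u : Fin n → ℤ} {x : Fin n → ℝ}
    (h : Valid n δ u x) (j : Fin n) : |x j - δ * u j| < δ := by
  rcases h with ⟨h1, h2, -⟩
  rw [abs_sub_lt_iff]
  exact ⟨h1 j, h2 j⟩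

lemma brick_subset_ball {n : ℕ} {δ : ℝ} (hδ : 0 < δ) {u : Fin n → ℤ} {z : Fin n → ℝ}
    (hz : z ∈ brick n δ u) : brick n δ u ⊆ ball z (2 * δ) := by
  intro x hx
  rw [mem_ball, dist_pi_lt_iff (by linarith)]
  intro j
  have h1 := valid_abs hx j
  have h2 := valid_abs hz j
  rw [Real.dist_eq]
  have : |x j - z j| ≤ |x j - δ * u j| + |δ * u j - z j| := by
    have := abs_sub_abs_le_abs_sub (x j) (z j)
    calc |x j - z j| = |(x j - δ * u j) + (δ * u j - z j)| := by ring_nf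
      _ ≤ _ := abs_add_le _ _
  have h2' : |δ * u j - z j| < δ := by rwa [abs_sub_comm]
  linarith

lemma exists_valid {n : ℕ} {δ : ℝ} (hδ : 0 < δ) (x : Fin n → ℝ) :
    ∃ u : Fin n → ℤ, Valid n δ u x := by
  have key : ∀ j : Fin n, -(δ / 2) ≤ x j - δ * ⌊x j / δ + 1 / 2⌋ ∧
      x j - δ * ⌊x j / δ + 1 / 2⌋ < δ / 2 := by
    intro j
    have h1 : (⌊x j / δ + 1 / 2⌋ : ℝ) ≤ x j / δ + 1 / 2 := Int.floor_le _
    have h2 : x j / δ + 1 / 2 < ⌊x j / δ + 1 / 2⌋ + 1 := Int.lt_floor_add_one _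
    constructor
    · have := mul_le_mul_of_nonneg_left h1 hδ.le
      rw [mul_add] at this
      have hx : δ * (x j / δ) = x j := by field_simp
      nlinarith
    · have := mul_lt_mul_of_pos_left h2 hδ
      rw [mul_add] at this
      have hx : δ * (x j / δ) = x j := by field_simp
      nlinarith
  refine ⟨fun j => ⌊x j / δ + 1 / 2⌋, fun j => ?_, fun j => ?_, fun j l => ?_⟩
  · have := key j; simp only at this ⊢; linarith [this.1, this.2]
  · have := key j; linarith [this.1, this.2]
  · have hj := key j; have hl := key l; linarith [hj.1, hj.2, hl.1, hl.2]

lemma valid_range {n : ℕ} {δ : ℝ} (hδ : 0 < δ) {u : Fin n → ℤ} {x : Fin n → ℝ}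
    (h : Valid n δ u x) (j : Fin n) : u j = ⌊x j / δ⌋ ∨ u j = ⌊x j / δ⌋ + 1 := by
  have h1 := h.1 j
  have h2 := h.2.1 j
  have hfl : (⌊x j / δ⌋ : ℝ) ≤ x j / δ := Int.floor_le _
  have hfu : x j / δ < ⌊x j / δ⌋ + 1 := Int.lt_floor_add_one _
  have hx : δ * (x j / δ) = x j := by field_simp
  -- u j > x j / δ - 1  and u j < x j / δ + 1
  have hu1 : (x j / δ) - 1 < (u j : ℝ) := by
    rw [div_sub' hδ.ne', div_lt_iff₀ hδ]; nlinarith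
  have hu2 : (u j : ℝ) < (x j / δ) + 1 := by
    rw [div_add' _ _ _ hδ.ne', lt_div_iff₀ hδ]; nlinarith
  have lb : (⌊x j / δ⌋ : ℤ) ≤ u j := by
    have : ((⌊x j / δ⌋ : ℤ) : ℝ) - 1 < u j := by linarith
    have := Int.cast_lt.mp (by push_cast; linarith : ((⌊x j / δ⌋ - 1 : ℤ) : ℝ) < (u j : ℤ))
    omega
  have ub : u j ≤ ⌊x j / δ⌋ + 1 := by
    have h' : ((u j : ℤ) : ℝ) < ((⌊x j / δ⌋ + 2 : ℤ) : ℝ) := by push_cast; linarith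
    have := Int.cast_lt.mp h'
    omega
  omega

/-- at a fixed point, the valid `u`'s inject into `Fin (n+1)`. -/
lemma exists_order_inj (n : ℕ) {δ : ℝ} (hδ : 0 < δ) (x : Fin n → ℝ) :
    ∃ g : (Fin n → ℤ) → Fin (n + 1), ∀ u v, Valid n δ u x → Valid n δ v x →
      g u = g v → u = v := by
  classical
  obtain ⟨m, hm⟩ : ∃ m : Fin n → ℤ, ∀ j, m j = ⌊x j / δ⌋ := ⟨_, fun j => rfl⟩
  refine ⟨fun u => ⟨min n (∑ j, (u j - m j)).toNat, by omega⟩, fun u v hu hv hg => ?_⟩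
  by_contra hne
  have hur : ∀ j, u j = m j ∨ u j = m j + 1 := by
    intro j; rw [hm j]; exact valid_range hδ hu j
  have hvr : ∀ j, v j = m j ∨ v j = m j + 1 := by
    intro j; rw [hm j]; exact valid_range hδ hv j
  have hgv : min n (∑ j, (u j - m j)).toNat = min n (∑ j, (v j - m j)).toNat :=
    congrArg Fin.val hg
  have bound : ∀ w : Fin n → ℤ, (∀ j, w j = m j ∨ w j = m j + 1) →
      0 ≤ (∑ j, (w j - m j)) ∧ (∑ j, (w j - m j)) ≤ n := by
    intro w hw
    constructor
    · refine Finset.sum_nonneg fun j _ => ?_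
      rcases hw j with h | h <;> rw [h] <;> ring_nf <;> simp
    · have h1 : (∑ j, (w j - m j)) ≤ ∑ _j : Fin n, (1 : ℤ) := by
        refine Finset.sum_le_sum fun j _ => ?_
        rcases hw j with h | h <;> rw [h] <;> ring_nf <;> simp
      simpa using h1
  have hSu := bound u hur
  have hSv := bound v hvr
  have hsub : ∑ j, (u j - v j) = (∑ j, (u j - m j)) - (∑ j, (v j - m j)) := by
    rw [← Finset.sum_sub_distrib]; congr 1; ext j; ring
  have hsub2 : ∑ j, (v j - u j) = -∑ j, (u j - v j) := by
    rw [← Finset.sum_neg_distrib]; congr 1; ext j; ring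
  obtain ⟨Su, hSu'⟩ : ∃ S, (∑ j, (u j - m j)) = S := ⟨_, rfl⟩
  obtain ⟨Sv, hSv'⟩ : ∃ S, (∑ j, (v j - m j)) = S := ⟨_, rfl⟩
  obtain ⟨D, hD⟩ : ∃ D, (∑ j, (u j - v j)) = D := ⟨_, rfl⟩
  obtain ⟨D', hD'⟩ : ∃ D, (∑ j, (v j - u j)) = D := ⟨_, rfl⟩
  rw [hSu', hSv'] at hgv hsub
  rw [hSu'] at hSu
  rw [hSv'] at hSv
  rw [hD] at hsub hsub2
  rw [hD'] at hsub2
  have hD0 : D = 0 ∧ D' = 0 := by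
    clear hg bound hm hur hvr hu hv hne
    omega
  -- find j with u j < v j and l with u l > v l
  have hex : ∃ j, u j ≠ v j := by
    by_contra hc; push_neg at hc; exact hne (funext hc)
  obtain ⟨j0, hj0⟩ := hex
  have hexj : ∃ j, u j < v j := by
    by_contra hc; push_neg at hc
    have hpos : 0 < ∑ j, (u j - v j) := by
      apply Finset.sum_pos' (fun j _ => by linarith [hc j])
      refine ⟨j0, Finset.mem_univ _, ?_⟩
      have h1 := hc j0
      have : v j0 < u j0 := lt_of_le_of_ne h1 (Ne.symm hj0)
      linarith
    rw [hD] at hpos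
    linarith [hD0.1]
  have hexl : ∃ l, v l < u l := by
    by_contra hc; push_neg at hc
    obtain ⟨j1, hj1⟩ := hexj
    have hpos : 0 < ∑ j, (v j - u j) := by
      apply Finset.sum_pos' (fun j _ => by linarith [hc j])
      exact ⟨j1, Finset.mem_univ _, by linarith⟩
    rw [hD'] at hpos
    linarith [hD0.2]
  obtain ⟨j, hj⟩ := hexj
  obtain ⟨l, hl⟩ := hexl
  have hvj : v j = u j + 1 := by
    have h1 := hur j; have h2 := hvr j
    clear hg bound hm hSu' hSv' hD hD' hu hv hur hvr
    omega
  have hvl : v l = u l - 1 := by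
    have h1 := hur l; have h2 := hvr l
    clear hg bound hm hSu' hSv' hD hD' hu hv hur hvr
    omega
  have c1 := hu.2.2 j l
  have c2 := hv.2.2 l j
  have hvjr : ((v j : ℤ) : ℝ) = ((u j : ℤ) : ℝ) + 1 := by exact_mod_cast hvj
  have hvlr : ((v l : ℤ) : ℝ) = ((u l : ℤ) : ℝ) - 1 := by exact_mod_cast hvl
  rw [hvjr, hvlr] at c2
  nlinarith [c1, c2]

lemma isClosed_halfSpace (n : ℕ) : IsClosed (HalfSpace n) := by
  have : HalfSpace n = ⋂ i : Fin n, {y : Fin n → ℝ | (i : ℕ) + 1 = n → 0 ≤ y i} := by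
    ext y; simp [HalfSpace, mem_iInter]
  rw [this]
  refine isClosed_iInter fun i => ?_
  by_cases h : (i : ℕ) + 1 = n
  · have : {y : Fin n → ℝ | (i : ℕ) + 1 = n → 0 ≤ y i} = {y | 0 ≤ y i} := by
      ext y; simp [h]
    rw [this]
    exact isClosed_le continuous_const (continuous_apply i)
  · have : {y : Fin n → ℝ | (i : ℕ) + 1 = n → 0 ≤ y i} = univ := by
      ext y; simp [h]
    rw [this]; exact isClosed_univ

lemma weaklyLocallyCompact_of_manifold {n : ℕ} {M : Type*} [TopologicalSpace M]
    (hM : IsTopManifold n M) : WeaklyLocallyCompactSpace M := by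
  constructor
  intro x
  obtain ⟨U, hUo, hxU, s, hs, ⟨φ⟩⟩ := hM.2.2 x
  haveI : LocallyCompactSpace ↥s := by
    rcases hs with hs | ⟨t, ht, rfl⟩
    · exact hs.isLocallyClosed.locallyCompactSpace
    · exact (ht.isLocallyClosed.inter (isClosed_halfSpace n).isLocallyClosed).locallyCompactSpace
  haveI : LocallyCompactSpace ↥U := φ.locallyCompactSpace_iff.2 ‹_›
  obtain ⟨K, hKc, hKn⟩ := exists_compact_mem_nhds (⟨x, hxU⟩ : ↥U)
  refine ⟨Subtype.val '' K, hKc.image continuous_subtype_val, ?_⟩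
  have := (hUo.isOpenEmbedding_subtypeVal.map_nhds_eq ⟨x, hxU⟩)
  rw [← this]
  exact Filter.image_mem_map hKn

/-- Abstract iteration: starting from any open cover `V0`, repeatedly replace it near the
compact pieces `Fk k` by the order-control families provided by `STEP`, cutting along the
closed sets `C` inside the windows `win k`.  Local finiteness of the windows makes the
limit family open; it covers, refines `V0` and has order `≤ n`. -/
lemma iterate_refine {M : Type*} [TopologicalSpace M] {ι : Type*} (n : ℕ)
    (V0 : ι → Set M) (Fk win : ℕ → Set M)
    (hF : ∀ x : M, ∃ k, x ∈ Fk k)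
    (hlf : ∀ x : M, ∃ N : Set M, IsOpen N ∧ x ∈ N ∧ {k | (win k ∩ N).Nonempty}.Finite)
    (hV0o : ∀ i, IsOpen (V0 i)) (hV0c : ∀ x, ∃ i, x ∈ V0 i)
    (hstep : ∀ (V : ι → Set M) (k : ℕ), (∀ i, IsOpen (V i)) → (∀ x, ∃ i, x ∈ V i) →
      ∃ (W : ι → Set M) (C : Set M),
        (∀ i, IsOpen (W i)) ∧ (∀ i, W i ⊆ V i) ∧ (∀ i, W i ⊆ win k) ∧
        IsClosed C ∧ C ⊆ win k ∧ C ⊆ ⋃ i, W i ∧ Fk k ⊆ interior C ∧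
        (∀ x : M, ∃ g : ι → Fin (n + 1),
          ∀ i i', x ∈ W i → x ∈ W i' → g i = g i' → i = i')) :
    ∃ Vf : ι → Set M, (∀ i, IsOpen (Vf i)) ∧ (∀ x, ∃ i, x ∈ Vf i) ∧
      (∀ i, Vf i ⊆ V0 i) ∧
      (∀ x : M, ∃ g : ι → Fin (n + 1),
        ∀ i i', x ∈ Vf i → x ∈ Vf i' → g i = g i' → i = i') := by
  classical
  -- total step function
  have hstep' : ∀ (V : ι → Set M) (k : ℕ), ∃ (W : ι → Set M) (C : Set M),
      (∀ i, IsOpen (V i)) → (∀ x, ∃ i, x ∈ V i) →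
      ((∀ i, IsOpen (W i)) ∧ (∀ i, W i ⊆ V i) ∧ (∀ i, W i ⊆ win k) ∧
        IsClosed C ∧ C ⊆ win k ∧ C ⊆ ⋃ i, W i ∧ Fk k ⊆ interior C ∧
        (∀ x : M, ∃ g : ι → Fin (n + 1),
          ∀ i i', x ∈ W i → x ∈ W i' → g i = g i' → i = i')) := by
    intro V k
    by_cases h1 : (∀ i, IsOpen (V i)) ∧ (∀ x, ∃ i, x ∈ V i)
    · obtain ⟨W, C, hWC⟩ := hstep V k h1.1 h1.2
      exact ⟨W, C, fun _ _ => hWC⟩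
    · refine ⟨fun _ => ∅, ∅, fun h2 h3 => absurd ⟨h2, h3⟩ h1⟩
  choose Wf Cf hWC using hstep'
  -- the iteration
  let Vs : ℕ → ι → Set M := fun k =>
    Nat.rec V0 (fun k V => fun i => Wf V k i ∪ (V i \ Cf V k)) k
  have hsucc : ∀ k, Vs (k + 1) = fun i => Wf (Vs k) k i ∪ (Vs k i \ Cf (Vs k) k) :=
    fun k => rfl
  have inv : ∀ k, (∀ i, IsOpen (Vs k i)) ∧ (∀ x, ∃ i, x ∈ Vs k i) := by
    intro k
    induction k with
    | zero => exact ⟨hV0o, hV0c⟩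
    | succ k ih =>
      obtain ⟨hWo, hWV, hWwin, hCc, hCwin, hCW, hFC, hord⟩ := hWC (Vs k) k ih.1 ih.2
      constructor
      · intro i
        rw [hsucc k]
        exact (hWo i).union ((ih.1 i).sdiff hCc)
      · intro x
        by_cases hxC : x ∈ Cf (Vs k) k
        · obtain ⟨i, hi⟩ := mem_iUnion.1 (hCW hxC)
          exact ⟨i, by rw [hsucc k]; exact Or.inl hi⟩
        · obtain ⟨i, hi⟩ := ih.2 x
          exact ⟨i, by rw [hsucc k]; exact Or.inr ⟨hi, hxC⟩⟩
  have spec : ∀ k, (∀ i, IsOpen (Wf (Vs k) k i)) ∧ (∀ i, Wf (Vs k) k i ⊆ Vs k i) ∧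
      (∀ i, Wf (Vs k) k i ⊆ win k) ∧ IsClosed (Cf (Vs k) k) ∧ Cf (Vs k) k ⊆ win k ∧
      Cf (Vs k) k ⊆ ⋃ i, Wf (Vs k) k i ∧ Fk k ⊆ interior (Cf (Vs k) k) ∧
      (∀ x : M, ∃ g : ι → Fin (n + 1),
        ∀ i i', x ∈ Wf (Vs k) k i → x ∈ Wf (Vs k) k i' → g i = g i' → i = i') :=
    fun k => hWC (Vs k) k (inv k).1 (inv k).2
  have mono : ∀ k i, Vs (k + 1) i ⊆ Vs k i := by
    intro k i x hx
    rw [hsucc k] at hx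
    rcases hx with hx | hx
    · exact (spec k).2.1 i hx
    · exact hx.1
  have mono' : ∀ k l, k ≤ l → ∀ i, Vs l i ⊆ Vs k i := by
    intro k l hkl i
    induction l with
    | zero => rw [Nat.le_zero.1 hkl]
    | succ l ih =>
      rcases Nat.lt_or_ge k (l + 1) with h | h
      · exact (ih (Nat.lt_succ_iff.1 h)).trans' (mono l i) |>.trans subset_rfl
      · rw [Nat.le_antisymm hkl h]
  have stab : ∀ (N : Set M) (k : ℕ), (win k ∩ N) = ∅ → ∀ i,
      Vs (k + 1) i ∩ N = Vs k i ∩ N := by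
    intro N k hN i
    apply subset_antisymm
    · exact inter_subset_inter_left _ (mono k i)
    · rintro x ⟨hx, hxN⟩
      refine ⟨?_, hxN⟩
      rw [hsucc k]
      refine Or.inr ⟨hx, fun hxC => ?_⟩
      have : x ∈ win k ∩ N := ⟨(spec k).2.2.2.2.1 hxC, hxN⟩
      rw [hN] at this
      exact this
  refine ⟨fun i => ⋂ k, Vs k i, ?_, ?_, ?_, ?_⟩
  · -- open
    intro i
    rw [isOpen_iff_forall_mem_open]
    intro x hx
    obtain ⟨N, hNo, hxN, hNfin⟩ := hlf x
    obtain ⟨B, hB⟩ : ∃ B : ℕ, ∀ k, (win k ∩ N).Nonempty → k < B := by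
      obtain ⟨B, hB⟩ := hNfin.bddAbove
      exact ⟨B + 1, fun k hk => Nat.lt_succ_of_le (hB hk)⟩
    have stabB : ∀ k, B ≤ k → Vs k i ∩ N = Vs B i ∩ N := by
      intro k hk
      induction k with
      | zero => rw [Nat.le_zero.1 hk]
      | succ k ih =>
        rcases Nat.lt_or_ge B (k + 1) with h | h
        · have hkB := Nat.lt_succ_iff.1 h
          rw [← ih hkB]
          apply stab
          by_contra hne
          have := hB k (Set.nonempty_iff_ne_empty.2 hne)
          omega
        · rw [Nat.le_antisymm hk h]
    refine ⟨Vs B i ∩ N, ?_, ((inv B).1 i).inter hNo, mem_iInter.1 hx B, hxN⟩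
    intro y hy
    apply mem_iInter.2
    intro k
    rcases Nat.lt_or_ge k B with h | h
    · exact mono' k B h.le i hy.1
    · have := stabB k h
      rw [← this] at hy
      exact hy.1
  · -- covers
    intro x
    obtain ⟨N, hNo, hxN, hNfin⟩ := hlf x
    obtain ⟨B, hB⟩ : ∃ B : ℕ, ∀ k, (win k ∩ N).Nonempty → k < B := by
      obtain ⟨B, hB⟩ := hNfin.bddAbove
      exact ⟨B + 1, fun k hk => Nat.lt_succ_of_le (hB hk)⟩
    have stabB : ∀ (i : ι) (k), B ≤ k → Vs k i ∩ N = Vs B i ∩ N := by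
      intro i k hk
      induction k with
      | zero => rw [Nat.le_zero.1 hk]
      | succ k ih =>
        rcases Nat.lt_or_ge B (k + 1) with h | h
        · have hkB := Nat.lt_succ_iff.1 h
          rw [← ih hkB]
          apply stab
          by_contra hne
          have := hB k (Set.nonempty_iff_ne_empty.2 hne)
          omega
        · rw [Nat.le_antisymm hk h]
    obtain ⟨i, hi⟩ := (inv B).2 x
    refine ⟨i, mem_iInter.2 fun k => ?_⟩
    rcases Nat.lt_or_ge k B with h | h
    · exact mono' k B h.le i hi
    · have := stabB i k h
      have hx' : x ∈ Vs k i ∩ N := by rw [this]; exact ⟨hi, hxN⟩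
      exact hx'.1
  · intro i x hx
    exact mem_iInter.1 hx 0
  · -- order
    intro x
    obtain ⟨k, hk⟩ := hF x
    obtain ⟨g, hg⟩ := (spec k).2.2.2.2.2.2.2 x
    refine ⟨g, fun i i' hi hi' hgg => ?_⟩
    have hxC : x ∈ Cf (Vs k) k := interior_subset ((spec k).2.2.2.2.2.2.1 hk)
    have hWi : x ∈ Wf (Vs k) k i := by
      have : x ∈ Vs (k + 1) i := mem_iInter.1 hi (k + 1)
      rw [hsucc k] at this
      rcases this with h | h
      · exact h
      · exact absurd hxC h.2
    have hWi' : x ∈ Wf (Vs k) k i' := by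
      have : x ∈ Vs (k + 1) i' := mem_iInter.1 hi' (k + 1)
      rw [hsucc k] at this
      rcases this with h | h
      · exact h
      · exact absurd hxC h.2
    exact hg i i' hWi hWi' hgg
/-- Chart-local stage lemma: near a compact chart piece `F` we can produce an
order-`≤ n` open partial refinement `W` of `V`, inside the window `win`,
together with a closed "protected core" `C`. -/
lemma stage {n : ℕ} {M : Type*} [TopologicalSpace M] [T2Space M] [LocallyCompactSpace M]
    {ι : Type*} (V : ι → Set M) (hVo : ∀ i, IsOpen (V i)) (hVc : ∀ x, ∃ i, x ∈ V i)
    (F O win : Set M) (hFc : IsCompact F) (hOo : IsOpen O) (hFO : F ⊆ O)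
    (hwino : IsOpen win) (hFwin : F ⊆ win)
    (hchart : ∃ s : Set (Fin n → ℝ), Nonempty (↥O ≃ₜ ↥s)) :
    ∃ (W : ι → Set M) (C : Set M),
      (∀ i, IsOpen (W i)) ∧ (∀ i, W i ⊆ V i) ∧ (∀ i, W i ⊆ win) ∧
      IsClosed C ∧ C ⊆ win ∧ C ⊆ ⋃ i, W i ∧ F ⊆ interior C ∧
      (∀ x : M, ∃ g : ι → Fin (n + 1),
        ∀ i i', x ∈ W i → x ∈ W i' → g i = g i' → i = i') := by
  classical
  rcases F.eq_empty_or_nonempty with hFe | hFne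
  · refine ⟨fun _ => ∅, ∅, fun _ => isOpen_empty, fun _ => empty_subset _,
      fun _ => empty_subset _, isClosed_empty, empty_subset _, empty_subset _,
      by rw [hFe]; exact empty_subset _, fun x => ⟨fun _ => 0, fun i i' hi => absurd hi (by simp)⟩⟩
  obtain ⟨x0, hx0⟩ := hFne
  obtain ⟨i0, _⟩ := hVc x0
  obtain ⟨s, ⟨φ⟩⟩ := hchart
  set ρ : ↥s → M := fun y => ((φ.symm y : ↥O) : M) with hρdef
  have hρ : IsOpenEmbedding ρ := hOo.isOpenEmbedding_subtypeVal.comp φ.symm.isOpenEmbedding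
  set σ : ↥O → (Fin n → ℝ) := fun y => ((φ y : ↥s) : Fin n → ℝ) with hσdef
  have hσcont : Continuous σ := continuous_subtype_val.comp φ.continuous
  have hρφ : ∀ y : ↥O, ρ (φ y) = (y : M) := by
    intro y; simp [hρdef]
  have hσφ : ∀ z : ↥s, σ (φ.symm z) = (z : Fin n → ℝ) := by
    intro z; simp [hσdef]
  -- compact image of F in ℝ^n
  have hFOc : IsCompact (Subtype.val ⁻¹' F : Set ↥O) := by
    refine (IsEmbedding.subtypeVal.isInducing.isCompact_preimage_iff ?_).2 hFc
    rw [Subtype.range_coe]; exact hFO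
  set Fc : Set (Fin n → ℝ) := σ '' (Subtype.val ⁻¹' F) with hFcdef
  have hFcc : IsCompact Fc := hFOc.image hσcont
  -- ambient-open targets
  have hto : ∀ i : ι, ∃ t : Set (Fin n → ℝ), IsOpen t ∧
      Subtype.val ⁻¹' t = ρ ⁻¹' (V i ∩ win) := by
    intro i
    have : IsOpen (ρ ⁻¹' (V i ∩ win)) := ((hVo i).inter hwino).preimage hρ.continuous
    obtain ⟨t, hto, htp⟩ := isOpen_induced_iff.1 this
    exact ⟨t, hto, htp⟩
  choose t hto htp using hto
  have hcov : Fc ⊆ ⋃ i, t i := by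
    rintro z ⟨y, hyF, rfl⟩
    obtain ⟨i, hi⟩ := hVc (y : M)
    have hy2 : ρ (φ y) ∈ V i ∩ win := by
      rw [hρφ]; exact ⟨hi, hFwin hyF⟩
    have : φ y ∈ Subtype.val ⁻¹' t i := by rw [htp]; exact hy2
    exact mem_iUnion.2 ⟨i, this⟩
  obtain ⟨δL, hδL, hball⟩ := lebesgue_number_lemma_of_metric hFcc hto hcov
  set δ : ℝ := δL / 3 with hδdef
  have hδ : 0 < δ := by positivity
  set Z : Set (Fin n → ℤ) := {u | (brick n δ u ∩ Fc).Nonempty} with hZdef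
  have hsel : ∀ u : Fin n → ℤ, ∃ i : ι, u ∈ Z → brick n δ u ⊆ t i := by
    intro u
    by_cases hu : u ∈ Z
    · obtain ⟨z, hzb, hzF⟩ := hu
      obtain ⟨i, hib⟩ := hball z hzF
      refine ⟨i, fun _ w hw => hib ?_⟩
      have h2 : w ∈ ball z (2 * δ) := brick_subset_ball hδ hzb hw
      exact ball_subset_ball (by linarith) h2
    · exact ⟨i0, fun h => absurd h hu⟩
  choose a ha using hsel
  set Mb : (Fin n → ℤ) → Set M := fun u => ρ '' (Subtype.val ⁻¹' brick n δ u) with hMbdef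
  have hMbo : ∀ u, IsOpen (Mb u) :=
    fun u => hρ.isOpenMap _ ((isOpen_brick n δ u).preimage continuous_subtype_val)
  have hMbO : ∀ u, Mb u ⊆ O := by
    rintro u x ⟨y, _, rfl⟩
    exact (φ.symm y).2
  have hMbsub : ∀ u, u ∈ Z → Mb u ⊆ V (a u) ∩ win := by
    rintro u hu x ⟨y, hyb, rfl⟩
    have h1 : (y : Fin n → ℝ) ∈ t (a u) := ha u hu hyb
    have : y ∈ Subtype.val ⁻¹' t (a u) := h1
    rw [htp] at this
    exact this
  -- membership in Mb in terms of σ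
  have hmem : ∀ (x : ↥O) (u : Fin n → ℤ), ((x : M) ∈ Mb u ↔ σ x ∈ brick n δ u) := by
    intro x u
    constructor
    · rintro ⟨y, hyb, hyx⟩
      have : φ.symm y = x := Subtype.val_injective hyx
      rw [← this, hσφ]
      exact hyb
    · intro hx
      exact ⟨φ x, by rwa [hσdef] at hx, hρφ x⟩
  set W : ι → Set M := fun i => ⋃ u : Fin n → ℤ, ⋃ (_ : u ∈ Z ∧ a u = i), Mb u with hWdef
  have hWo : ∀ i, IsOpen (W i) := fun i => isOpen_iUnion fun u => isOpen_iUnion fun _ => hMbo u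
  have hWsub : ∀ i, W i ⊆ V i ∩ win := by
    intro i x hx
    obtain ⟨u, ⟨hu, rfl⟩, hxu⟩ := by simpa [hWdef] using hx
    exact hMbsub u hu hxu
  have hFW : F ⊆ ⋃ i, W i := by
    intro x hx
    set y : ↥O := ⟨x, hFO hx⟩ with hydef
    have hzF : σ y ∈ Fc := ⟨y, hx, rfl⟩
    obtain ⟨u, hu⟩ := exists_valid hδ (σ y)
    have huZ : u ∈ Z := ⟨σ y, hu, hzF⟩
    have hxu : x ∈ Mb u := (hmem y u).2 hu
    exact mem_iUnion.2 ⟨a u, mem_iUnion.2 ⟨u, mem_iUnion.2 ⟨⟨huZ, rfl⟩, hxu⟩⟩⟩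
  have horder : ∀ x : M, ∃ g : ι → Fin (n + 1),
      ∀ i i', x ∈ W i → x ∈ W i' → g i = g i' → i = i' := by
    intro x
    by_cases hxO : x ∈ O
    · set y : ↥O := ⟨x, hxO⟩ with hydef
      obtain ⟨g', hg'⟩ := exists_order_inj n hδ (σ y)
      have hP : ∀ i, x ∈ W i → ∃ u, (u ∈ Z ∧ a u = i) ∧ σ y ∈ brick n δ u := by
        intro i hx
        obtain ⟨u, ⟨hu, rfl⟩, hxu⟩ := by simpa [hWdef] using hx
        exact ⟨u, ⟨hu, rfl⟩, (hmem y u).1 hxu⟩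
      refine ⟨fun i => if h : ∃ u, (u ∈ Z ∧ a u = i) ∧ σ y ∈ brick n δ u
        then g' h.choose else 0, fun i i' hi hi' hgg => ?_⟩
      have h1 := hP i hi
      have h2 := hP i' hi'
      dsimp only at hgg
      rw [dif_pos h1, dif_pos h2] at hgg
      have hu1 := h1.choose_spec
      have hu2 := h2.choose_spec
      have := hg' _ _ hu1.2 hu2.2 hgg
      rw [← hu1.1.2, ← hu2.1.2, this]
    · refine ⟨fun _ => 0, fun i i' hi => absurd ?_ hxO⟩
      obtain ⟨u, ⟨hu, rfl⟩, hxu⟩ := by simpa [hWdef] using hi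
      exact hMbO u hxu
  have hΩo : IsOpen (⋃ i, W i) := isOpen_iUnion hWo
  obtain ⟨C, hCc, hFC, hCΩ⟩ := exists_compact_between hFc hΩo hFW
  refine ⟨W, C, hWo, fun i => (hWsub i).trans inter_subset_left,
    fun i => (hWsub i).trans inter_subset_right, hCc.isClosed, ?_, hCΩ, hFC, horder⟩
  exact hCΩ.trans (iUnion_subset fun i => (hWsub i).trans inter_subset_right)

/-- A countable family of compact pieces, each inside a chart and a window,
the windows being locally finite. -/
lemma exists_family {n : ℕ} {M : Type*} [TopologicalSpace M] [T2Space M]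
    [LocallyCompactSpace M] [SigmaCompactSpace M] [Nonempty M]
    (hchart : ∀ x : M, ∃ U : Set M, IsOpen U ∧ x ∈ U ∧
      ∃ s : Set (Fin n → ℝ), Nonempty (↥U ≃ₜ ↥s)) :
    ∃ F O win : ℕ → Set M,
      (∀ k, IsCompact (F k)) ∧ (∀ x : M, ∃ k, x ∈ F k) ∧
      (∀ k, IsOpen (O k)) ∧ (∀ k, F k ⊆ O k) ∧
      (∀ k, ∃ s : Set (Fin n → ℝ), Nonempty (↥(O k) ≃ₜ ↥s)) ∧
      (∀ k, IsOpen (win k)) ∧ (∀ k, F k ⊆ win k) ∧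
      (∀ x : M, ∃ N : Set M, IsOpen N ∧ x ∈ N ∧ {k | (win k ∩ N).Nonempty}.Finite) := by
  classical
  set e := CompactExhaustion.choice M with he
  set shel : ℕ → Set M := fun p => if p = 0 then e 1 else e (p + 1) \ interior (e p)
    with hshel
  set wn : ℕ → Set M := fun p => if p = 0 then interior (e 2)
    else interior (e (p + 2)) \ e (p - 1) with hwn
  have hshelc : ∀ p, IsCompact (shel p) := by
    intro p
    rcases Nat.eq_zero_or_pos p with h | h
    · simp only [hshel, h, if_pos rfl]; exact e.isCompact 1
    · simp only [hshel, Nat.pos_iff_ne_zero.1 h, if_neg (Nat.pos_iff_ne_zero.1 h)]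
      exact (e.isCompact (p + 1)).diff isOpen_interior
  have hwno : ∀ p, IsOpen (wn p) := by
    intro p
    rcases Nat.eq_zero_or_pos p with h | h
    · simp only [hwn, h, if_pos rfl]; exact isOpen_interior
    · simp only [hwn, Nat.pos_iff_ne_zero.1 h, if_neg (Nat.pos_iff_ne_zero.1 h)]
      exact isOpen_interior.sdiff (e.isCompact _).isClosed
  have hshelwn : ∀ p, shel p ⊆ wn p := by
    intro p
    rcases Nat.eq_zero_or_pos p with h | h
    · subst h
      simp only [hshel, hwn, if_pos rfl]
      exact (e.subset_interior_succ 1)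
    · have hp : p ≠ 0 := Nat.pos_iff_ne_zero.1 h
      simp only [hshel, hwn, if_neg hp]
      rintro x ⟨hx1, hx2⟩
      refine ⟨e.subset_interior_succ _ hx1, fun hx3 => hx2 ?_⟩
      have : e (p - 1) ⊆ interior (e p) := by
        have := e.subset_interior_succ (p - 1)
        rwa [Nat.sub_add_cancel h] at this
      exact this hx3
  have hshelcov : ∀ x : M, ∃ p, x ∈ shel p := by
    intro x
    rcases Nat.lt_or_ge (e.find x) 2 with h | h
    · refine ⟨0, ?_⟩
      simp only [hshel, if_pos rfl]
      exact e.subset (by omega) (e.mem_find x)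
    · refine ⟨e.find x - 1, ?_⟩
      have hp : e.find x - 1 ≠ 0 := by omega
      simp only [hshel, if_neg hp]
      have h1 : e.find x - 1 + 1 = e.find x := by omega
      rw [h1]
      refine ⟨e.mem_find x, fun hx => ?_⟩
      have : x ∈ e (e.find x - 1) := interior_subset hx
      have := e.mem_iff_find_le.1 this
      omega
  -- local finiteness of the windows
  have hwnlf : ∀ x : M, ∃ N : Set M, IsOpen N ∧ x ∈ N ∧
      ∀ p, (wn p ∩ N).Nonempty → p ≤ e.find x + 2 := by
    intro x
    refine ⟨interior (e (e.find x + 1)), isOpen_interior,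
      e.subset_interior_succ _ (e.mem_find x), fun p hp => ?_⟩
    by_contra hgt
    push_neg at hgt
    obtain ⟨z, hz1, hz2⟩ := hp
    have hp0 : p ≠ 0 := by omega
    simp only [hwn, if_neg hp0] at hz1
    apply hz1.2
    have hsub : e (e.find x + 1) ⊆ e (p - 1) := e.subset (by omega)
    exact hsub (interior_subset hz2)
  -- compact chart-nbhd at every point of a window
  have hnb : ∀ (x : M) (p : ℕ), ∃ (N U : Set M), x ∈ wn p →
      (IsCompact N ∧ x ∈ interior N ∧ N ⊆ wn p ∧ IsOpen U ∧ N ⊆ U ∧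
        ∃ s : Set (Fin n → ℝ), Nonempty (↥U ≃ₜ ↥s)) := by
    intro x p
    by_cases hx : x ∈ wn p
    · obtain ⟨U, hUo, hxU, hUs⟩ := hchart x
      obtain ⟨N, hNc, hxN, hNsub⟩ := exists_compact_subset (hUo.inter (hwno p)) ⟨hxU, hx⟩
      exact ⟨N, U, fun _ => ⟨hNc, hxN, hNsub.trans inter_subset_right, hUo,
        hNsub.trans inter_subset_left, hUs⟩⟩
    · exact ⟨∅, ∅, fun h => absurd h hx⟩
  choose NB UC hnb using hnb
  -- finite subcovers of the shells
  have hsub : ∀ p, ∃ t : Finset M, (∀ y ∈ t, y ∈ shel p) ∧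
      shel p ⊆ ⋃ y ∈ t, interior (NB y p) := by
    intro p
    refine (hshelc p).elim_nhds_subcover (fun y => interior (NB y p)) fun y hy => ?_
    exact isOpen_interior.mem_nhds (hnb y p (hshelwn p hy)).2.1
  choose tp htp using hsub
  set L : ℕ → List M := fun p => (tp p).toList with hL
  -- the global family
  have hmemwn : ∀ p (i : ℕ) (h : i < (L p).length), (L p).get ⟨i, h⟩ ∈ wn p := by
    intro p i h
    exact hshelwn p ((htp p).1 _ (Finset.mem_toList.1 (List.get_mem _ _)))
  refine ⟨fun k => if h : (Nat.unpair k).2 < (L (Nat.unpair k).1).length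
      then NB ((L (Nat.unpair k).1).get ⟨(Nat.unpair k).2, h⟩) (Nat.unpair k).1 else ∅,
    fun k => if h : (Nat.unpair k).2 < (L (Nat.unpair k).1).length
      then UC ((L (Nat.unpair k).1).get ⟨(Nat.unpair k).2, h⟩) (Nat.unpair k).1
      else (hchart (Classical.arbitrary M)).choose,
    fun k => if h : (Nat.unpair k).2 < (L (Nat.unpair k).1).length
      then wn (Nat.unpair k).1 else ∅, ?_, ?_, ?_, ?_, ?_, ?_, ?_, ?_⟩
  · intro k
    dsimp only
    by_cases h : (Nat.unpair k).2 < (L (Nat.unpair k).1).length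
    · rw [dif_pos h]; exact (hnb _ _ (hmemwn _ _ h)).1
    · rw [dif_neg h]; exact isCompact_empty
  · intro x
    obtain ⟨p, hp⟩ := hshelcov x
    have := (htp p).2 hp
    rw [mem_iUnion₂] at this
    obtain ⟨y, hyt, hxy⟩ := this
    obtain ⟨⟨i, hi⟩, hget⟩ := List.mem_iff_get.1 (Finset.mem_toList.2 hyt)
    refine ⟨Nat.pair p i, ?_⟩
    dsimp only
    rw [Nat.unpair_pair]
    rw [dif_pos hi]
    subst hget
    exact interior_subset hxy
  · intro k
    dsimp only
    by_cases h : (Nat.unpair k).2 < (L (Nat.unpair k).1).length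
    · rw [dif_pos h]; exact (hnb _ _ (hmemwn _ _ h)).2.2.2.1
    · rw [dif_neg h]; exact (hchart (Classical.arbitrary M)).choose_spec.1
  · intro k
    dsimp only
    by_cases h : (Nat.unpair k).2 < (L (Nat.unpair k).1).length
    · simp only [dif_pos h]; exact (hnb _ _ (hmemwn _ _ h)).2.2.2.2.1
    · simp only [dif_neg h]; exact empty_subset _
  · intro k
    dsimp only
    by_cases h : (Nat.unpair k).2 < (L (Nat.unpair k).1).length
    · obtain ⟨s, ⟨f⟩⟩ := (hnb _ _ (hmemwn _ _ h)).2.2.2.2.2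
      exact ⟨s, ⟨(Homeomorph.setCongr (dif_pos h)).trans f⟩⟩
    · obtain ⟨s, ⟨f⟩⟩ := (hchart (Classical.arbitrary M)).choose_spec.2.2
      exact ⟨s, ⟨(Homeomorph.setCongr (dif_neg h)).trans f⟩⟩
  · intro k
    dsimp only
    by_cases h : (Nat.unpair k).2 < (L (Nat.unpair k).1).length
    · rw [dif_pos h]; exact hwno _
    · rw [dif_neg h]; exact isOpen_empty
  · intro k
    dsimp only
    by_cases h : (Nat.unpair k).2 < (L (Nat.unpair k).1).length
    · simp only [dif_pos h]; exact (hnb _ _ (hmemwn _ _ h)).2.2.1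
    · simp only [dif_neg h]; exact empty_subset _
  · intro x
    obtain ⟨N, hNo, hxN, hNf⟩ := hwnlf x
    refine ⟨N, hNo, hxN, ?_⟩
    set B := e.find x + 2 with hB
    have : {k | ((if h : (Nat.unpair k).2 < (L (Nat.unpair k).1).length
        then wn (Nat.unpair k).1 else ∅) ∩ N).Nonempty} ⊆
        ↑((Finset.range (B + 1)).biUnion fun p =>
          (Finset.range (L p).length).image fun i => Nat.pair p i) := by
      intro k hk
      rw [mem_setOf_eq] at hk
      by_cases h : (Nat.unpair k).2 < (L (Nat.unpair k).1).length
      · rw [dif_pos h] at hk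
        have hp := hNf _ hk
        rw [Finset.mem_coe, Finset.mem_biUnion]
        refine ⟨(Nat.unpair k).1, Finset.mem_range.2 (by omega), ?_⟩
        rw [Finset.mem_image]
        exact ⟨(Nat.unpair k).2, Finset.mem_range.2 h, Nat.pair_unpair k⟩
      · rw [dif_neg h] at hk
        rw [Set.empty_inter] at hk
        exact absurd hk Set.not_nonempty_empty
    exact Set.Finite.subset (Finset.finite_toSet _) this

end DimM

/-- Every topological `n`-manifold has covering dimension at most `n`. -/
theorem statement2 (n : ℕ) (M : Type) [TopologicalSpace M] (hM : IsTopManifold n M) :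
    TopDimLE M n := by
  classical
  intro 𝒰 h𝒰o h𝒰c
  haveI hsc : SecondCountableTopology M := hM.1
  haveI ht2 : T2Space M := hM.2.1
  by_cases hME : IsEmpty M
  · refine ⟨∅, by simp, ?_, by simp, ?_⟩
    · rw [Set.sUnion_empty]
      exact (Set.univ_eq_empty_iff.2 hME).symm
    · intro x
      exact (hME.false x).elim
  haveI hMne : Nonempty M := not_isEmpty_iff.1 hME
  haveI := DimM.weaklyLocallyCompact_of_manifold hM
  haveI : LocallyCompactSpace M := WeaklyLocallyCompactSpace.locallyCompactSpace
  haveI : SigmaCompactSpace M := inferInstance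
  have hchart : ∀ x : M, ∃ U : Set M, IsOpen U ∧ x ∈ U ∧
      ∃ s : Set (Fin n → ℝ), Nonempty (↥U ≃ₜ ↥s) := by
    intro x
    obtain ⟨U, h1, h2, s, _, h4⟩ := hM.2.2 x
    exact ⟨U, h1, h2, s, h4⟩
  obtain ⟨F, O, win, hFc, hFcov, hOo, hFO, hOs, hwino, hFwin, hlf⟩ :=
    DimM.exists_family hchart
  have hV0o : ∀ i : {U : Set M // U ∈ 𝒰}, IsOpen i.1 := fun i => h𝒰o i.1 i.2
  have hV0c : ∀ x : M, ∃ i : {U : Set M // U ∈ 𝒰}, x ∈ i.1 := by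
    intro x
    have hx : x ∈ ⋃₀ 𝒰 := by rw [h𝒰c]; trivial
    obtain ⟨U, hU, hxU⟩ := hx
    exact ⟨⟨U, hU⟩, hxU⟩
  obtain ⟨Vf, hVfo, hVfc, hVfsub, hVford⟩ :=
    DimM.iterate_refine n (fun i : {U : Set M // U ∈ 𝒰} => i.1) F win hFcov hlf hV0o hV0c
      (fun V k hVo hVc => DimM.stage V hVo hVc (F k) (O k) (win k) (hFc k) (hOo k)
        (hFO k) (hwino k) (hFwin k) (hOs k))
  refine ⟨{A | ∃ i : {U : Set M // U ∈ 𝒰}, A = Vf i}, ?_, ?_, ?_, ?_⟩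
  · rintro V ⟨i, rfl⟩
    exact hVfo i
  · rw [Set.eq_univ_iff_forall]
    intro x
    obtain ⟨i, hi⟩ := hVfc x
    exact ⟨Vf i, ⟨i, rfl⟩, hi⟩
  · rintro V ⟨i, rfl⟩
    exact ⟨i.1, i.2, hVfsub i⟩
  · intro x 𝒮 h𝒮
    obtain ⟨g, hg⟩ := hVford x
    have hcard : 𝒮.card ≤ (Finset.univ : Finset (Fin (n + 1))).card := by
      apply Finset.card_le_card_of_injOn
        (fun A => if h : ∃ i : {U : Set M // U ∈ 𝒰}, A = Vf i ∧ x ∈ A then g h.choose else 0)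
      · intro A _
        exact Finset.mem_univ _
      · intro A hA B hB hfAB
        have hA' : ∃ i : {U : Set M // U ∈ 𝒰}, A = Vf i ∧ x ∈ A := by
          obtain ⟨⟨i, hi⟩, hxA⟩ := h𝒮 A (Finset.mem_coe.1 hA)
          exact ⟨i, hi, hxA⟩
        have hB' : ∃ i : {U : Set M // U ∈ 𝒰}, B = Vf i ∧ x ∈ B := by
          obtain ⟨⟨i, hi⟩, hxB⟩ := h𝒮 B (Finset.mem_coe.1 hB)
          exact ⟨i, hi, hxB⟩
        dsimp only at hfAB
        rw [dif_pos hA', dif_pos hB'] at hfAB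
        have hsA := hA'.choose_spec
        have hsB := hB'.choose_spec
        have : hA'.choose = hB'.choose := by
          apply hg
          · rw [← hsA.1]; exact hsA.2
          · rw [← hsB.1]; exact hsB.2
          · exact hfAB
        rw [hsA.1, hsB.1, this]
    simpa using hcard
end

section
/- Every compact subspace K of ℝ^n has topological dimension at most n: every open cover of K (in the subspace topology) possesses an open refinement of order at most n. -/
open Set

/-- Scaled open star of the Kuhn triangulation at lattice point `v`. -/
def cell {n : ℕ} (δ : ℝ) (v : Fin n → ℤ) : Set (Fin n → ℝ) :=
  {x | (∀ i, |x i - δ * v i| < δ) ∧ ∀ i j, (x i - δ * v i) - (x j - δ * v j) < δ}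

lemma cell_isOpen {n : ℕ} (δ : ℝ) (v : Fin n → ℤ) : IsOpen (cell δ v) := by
  have h1 : cell δ v =
      (⋂ i, {x : Fin n → ℝ | |x i - δ * v i| < δ}) ∩
      ⋂ i, ⋂ j, {x : Fin n → ℝ | (x i - δ * v i) - (x j - δ * v j) < δ} := by
    ext x; simp [cell, Set.mem_iInter]
  rw [h1]
  apply IsOpen.inter
  · exact isOpen_iInter_of_finite fun i =>
      isOpen_lt (by continuity) continuous_const
  · exact isOpen_iInter_of_finite fun i => isOpen_iInter_of_finite fun j =>
      isOpen_lt (by continuity) continuous_const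

lemma mem_cell_ceil {n : ℕ} {δ : ℝ} (hδ : 0 < δ) (x : Fin n → ℝ) :
    x ∈ cell δ (fun i => ⌈x i / δ⌉) := by
  have key : ∀ i, δ * ⌈x i / δ⌉ - δ < x i ∧ x i ≤ δ * ⌈x i / δ⌉ := by
    intro i
    have h2 : x i ≤ δ * ⌈x i / δ⌉ := by
      rw [mul_comm]; exact (div_le_iff₀ hδ).mp (Int.le_ceil _)
    have h1 : ((⌈x i / δ⌉ : ℝ) - 1) * δ < x i := by
      have h0 : (⌈x i / δ⌉ : ℝ) - 1 < x i / δ := by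
        linarith [Int.ceil_lt_add_one (x i / δ)]
      exact (lt_div_iff₀ hδ).mp h0
    constructor
    · nlinarith
    · exact h2
  constructor
  · intro i
    rcases key i with ⟨h1, h2⟩
    rw [abs_lt]; constructor <;> linarith
  · intro i j
    rcases key i with ⟨_, h2⟩
    rcases key j with ⟨h3, _⟩
    linarith

lemma cell_order {n : ℕ} {δ : ℝ} (hδ : 0 < δ) (x : Fin n → ℝ)
    (S : Finset (Fin n → ℤ)) (hS : ∀ v ∈ S, x ∈ cell δ v) : S.card ≤ n + 1 := by
  classical
  set T : (Fin n → ℤ) → Finset (Fin n) := fun v =>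
    Finset.univ.filter (fun i => (δ * v i : ℝ) ≤ x i) with hT
  -- comparability
  have comp : ∀ v ∈ S, ∀ w ∈ S, T v ⊆ T w ∨ T w ⊆ T v := by
    intro v hv w hw
    by_contra hc
    push_neg at hc
    obtain ⟨hnvw, hnwv⟩ := hc
    obtain ⟨i, hiv, hiw⟩ := Finset.not_subset.mp hnvw
    obtain ⟨j, hjw, hjv⟩ := Finset.not_subset.mp hnwv
    simp only [hT, Finset.mem_filter, Finset.mem_univ, true_and, not_le] at hiv hiw hjw hjv
    obtain ⟨hv1, hv2⟩ := hS v hv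
    obtain ⟨hw1, hw2⟩ := hS w hw
    have avi := abs_lt.mp (hv1 i); have avj := abs_lt.mp (hv1 j)
    have awi := abs_lt.mp (hw1 i); have awj := abs_lt.mp (hw1 j)
    -- w i = v i + 1, v j = w j + 1
    have hwi : (w i : ℝ) = v i + 1 := by
      have h1 : (0:ℝ) < w i - v i := by
        have : δ * v i ≤ x i := hiv
        have : x i < δ * w i := hiw
        nlinarith
      have h2 : (w i : ℝ) - v i < 2 := by nlinarith
      have : w i - v i = 1 := by
        have g1 : (0:ℤ) < w i - v i := by exact_mod_cast (by push_cast; linarith : (0:ℝ) < ((w i - v i : ℤ) : ℝ))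
        have g2 : (w i - v i : ℤ) < 2 := by exact_mod_cast (by push_cast; linarith : ((w i - v i : ℤ) : ℝ) < 2)
        omega
      have := congrArg (fun z : ℤ => (z : ℝ)) this
      push_cast at this; linarith
    have hvj : (v j : ℝ) = w j + 1 := by
      have h1 : (0:ℝ) < v j - w j := by nlinarith
      have h2 : (v j : ℝ) - w j < 2 := by nlinarith
      have : v j - w j = 1 := by
        have g1 : (0:ℤ) < v j - w j := by exact_mod_cast (by push_cast; linarith : (0:ℝ) < ((v j - w j : ℤ) : ℝ))
        have g2 : (v j - w j : ℤ) < 2 := by exact_mod_cast (by push_cast; linarith : ((v j - w j : ℤ) : ℝ) < 2)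
        omega
      have := congrArg (fun z : ℤ => (z : ℝ)) this
      push_cast at this; linarith
    have c1 := hv2 i j
    have c2 := hw2 j i
    rw [hwi] at c2
    rw [hvj] at c1
    linarith
  -- equal T implies equal v
  have Tinj : ∀ v ∈ S, ∀ w ∈ S, T v = T w → v = w := by
    intro v hv w hw hTeq
    obtain ⟨hv1, _⟩ := hS v hv
    obtain ⟨hw1, _⟩ := hS w hw
    funext i
    have avi := abs_lt.mp (hv1 i); have awi := abs_lt.mp (hw1 i)
    have habs : |(v i : ℝ) - w i| < 1 := by
      by_cases hi : i ∈ T v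
      · have hi' : i ∈ T w := hTeq ▸ hi
        simp only [hT, Finset.mem_filter, Finset.mem_univ, true_and] at hi hi'
        rw [abs_lt]; constructor <;> nlinarith
      · have hi' : i ∉ T w := fun h => hi (hTeq ▸ h)
        simp only [hT, Finset.mem_filter, Finset.mem_univ, true_and, not_le] at hi hi'
        rw [abs_lt]; constructor <;> nlinarith
    have : |v i - w i| < 1 := by
      have : ((|v i - w i| : ℤ) : ℝ) < 1 := by push_cast [abs_lt] at habs ⊢; exact habs
      exact_mod_cast this
    have := Int.abs_lt_one_iff.mp this
    omega
  -- card map is injective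
  have inj : Set.InjOn (fun v => (T v).card) S := by
    intro v hv w hw hcard
    rcases comp v hv w hw with h | h
    · exact Tinj v hv w hw (Finset.eq_of_subset_of_card_le h (le_of_eq hcard.symm))
    · exact Tinj v hv w hw (Finset.eq_of_subset_of_card_le h (le_of_eq hcard)).symm
  calc S.card = (S.image fun v => (T v).card).card := (Finset.card_image_of_injOn inj).symm
    _ ≤ (Finset.range (n + 1)).card := by
        apply Finset.card_le_card
        intro m hm
        simp only [Finset.mem_image] at hm
        obtain ⟨v, _, rfl⟩ := hm
        simp only [Finset.mem_range, Nat.lt_succ_iff]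
        exact le_trans (Finset.card_filter_le _ _) (by simp)
    _ = n + 1 := Finset.card_range _

/-- Every compact subspace of `ℝ^n` has topological dimension at most `n`. -/
theorem statement3 (n : ℕ) (K : Set (Fin n → ℝ)) (hK : IsCompact K) :
    TopDimLE ↥K n := by
  classical
  intro 𝒰 hopen hcov
  choose O hOopen hOpre using fun U : 𝒰 => isOpen_induced_iff.mp (hopen U U.2)
  have hKsub : K ⊆ ⋃ U : 𝒰, O U := by
    intro x hx
    have : (⟨x, hx⟩ : ↥K) ∈ ⋃₀ 𝒰 := hcov ▸ mem_univ _
    obtain ⟨U, hU, hxU⟩ := this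
    refine mem_iUnion.mpr ⟨⟨U, hU⟩, ?_⟩
    have h := hOpre ⟨U, hU⟩
    have : (⟨x, hx⟩ : ↥K) ∈ Subtype.val ⁻¹' O ⟨U, hU⟩ := by rw [h]; exact hxU
    exact this
  obtain ⟨δ₀, hδ₀, hleb⟩ := lebesgue_number_lemma_of_metric hK hOopen hKsub
  set δ := δ₀ / 2 with hδdef
  have hδ : 0 < δ := by positivity
  refine ⟨{A | ∃ v : Fin n → ℤ,
    Subtype.val ⁻¹' cell δ v = A ∧ (cell δ v ∩ K).Nonempty}, ?_, ?_, ?_, ?_⟩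
  · rintro V ⟨v, rfl, -⟩
    exact (cell_isOpen δ v).preimage continuous_subtype_val
  · ext x
    simp only [mem_sUnion, mem_univ, iff_true, mem_setOf_eq]
    exact ⟨Subtype.val ⁻¹' cell δ (fun i => ⌈x.1 i / δ⌉),
      ⟨_, rfl, ⟨x.1, mem_cell_ceil hδ x.1, x.2⟩⟩, mem_cell_ceil hδ x.1⟩
  · rintro V ⟨v, rfl, y, hyc, hyK⟩
    obtain ⟨U, hU⟩ := hleb y hyK
    refine ⟨U.1, U.2, ?_⟩
    intro z hz
    have hz' : z.1 ∈ Metric.ball y δ₀ := by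
      rw [Metric.mem_ball]
      have h1 : dist z.1 (fun i => δ * (v i : ℝ)) < δ := by
        rw [dist_pi_lt_iff hδ]
        intro i
        rw [Real.dist_eq]
        exact hz.1 i
      have h2 : dist (fun i => δ * (v i : ℝ)) y < δ := by
        rw [dist_pi_lt_iff hδ]
        intro i
        rw [Real.dist_eq, abs_sub_comm]
        exact hyc.1 i
      calc dist z.1 y ≤ dist z.1 (fun i => δ * (v i : ℝ))
            + dist (fun i => δ * (v i : ℝ)) y := dist_triangle _ _ _
        _ < δ + δ := add_lt_add h1 h2
        _ = δ₀ := by rw [hδdef]; ring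
    have hzO : z ∈ Subtype.val ⁻¹' O U := hU hz'
    rw [hOpre U] at hzO
    exact hzO
  · intro x 𝒮 h𝒮
    have gex : ∀ A ∈ 𝒮, ∃ v, Subtype.val ⁻¹' cell δ v = A ∧ x.1 ∈ cell δ v := by
      intro A hA
      obtain ⟨⟨v, hva, -⟩, hxA⟩ := h𝒮 A hA
      exact ⟨v, hva, by rw [← hva] at hxA; exact hxA⟩
    choose! g hg1 hg2 using gex
    have hinj : Set.InjOn g ↑𝒮 := fun A hA B hB h => by
      rw [← hg1 A hA, ← hg1 B hB, h]
    calc 𝒮.card = (𝒮.image g).card := (Finset.card_image_of_injOn hinj).symm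
      _ ≤ n + 1 := cell_order hδ x.1 _ (by
          intro v hv
          simp only [Finset.mem_image] at hv
          obtain ⟨A, hA, rfl⟩ := hv
          exact hg2 A hA)
end

section
/- Let X be a topological space with X = X₁ ∪ X₂ for closed finite-dimensional subspaces X₁, X₂ ⊆ X. Then X is finite-dimensional and dim X = max{dim X₁, dim X₂}. -/
/-- `X` is finite-dimensional: some `m` bounds its topological dimension. -/
def FiniteDim (X : Type*) [TopologicalSpace X] : Prop := ∃ m, TopDimLE X m

/-- The topological dimension of `X`: the least `m` such that every open cover of `X`
has an open refinement of order at most `m` (junk value `0` if no such `m` exists). -/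
noncomputable def topDim (X : Type*) [TopologicalSpace X] : ℕ := sInf {m | TopDimLE X m}

lemma topDimLE_mono {X : Type*} [TopologicalSpace X] {m n : ℕ} (hmn : m ≤ n)
    (h : TopDimLE X m) : TopDimLE X n := by
  intro 𝒰 ho hc
  obtain ⟨𝒱, hv1, hv2, hv3, hv4⟩ := h 𝒰 ho hc
  exact ⟨𝒱, hv1, hv2, hv3, fun x 𝒮 hS => (hv4 x 𝒮 hS).trans (by omega)⟩

lemma topDimLE_closed_subset {X : Type*} [TopologicalSpace X] {A : Set X}
    (hA : IsClosed A) {m : ℕ} (h : TopDimLE X m) : TopDimLE ↥A m := by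
  classical
  intro 𝒰 ho hc
  by_cases hne : Nonempty ↥A
  · obtain ⟨x₀⟩ := hne
    have hx₀ : x₀ ∈ ⋃₀ 𝒰 := hc ▸ Set.mem_univ x₀
    obtain ⟨U₀, hU₀, _⟩ := hx₀
    have hsel : ∀ V : Set ↥A, ∃ E : Set X, V ∈ 𝒰 →
        IsOpen E ∧ Subtype.val ⁻¹' E = V := by
      intro V
      by_cases hV : V ∈ 𝒰
      · obtain ⟨E, hEo, hE⟩ := isOpen_induced_iff.mp (ho V hV)
        exact ⟨E, fun _ => ⟨hEo, hE⟩⟩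
      · exact ⟨∅, fun h' => absurd h' hV⟩
    choose e he using hsel
    set 𝒲 : Set (Set X) := (e '' 𝒰) ∪ {Aᶜ} with h𝒲
    have h𝒲o : ∀ W ∈ 𝒲, IsOpen W := by
      rintro W (⟨U, hU, rfl⟩ | hW)
      · exact (he U hU).1
      · simp only [Set.mem_singleton_iff] at hW
        subst hW; exact hA.isOpen_compl
    have h𝒲c : ⋃₀ 𝒲 = Set.univ := by
      apply Set.eq_univ_of_forall
      intro x
      by_cases hx : x ∈ A
      · have : (⟨x, hx⟩ : ↥A) ∈ ⋃₀ 𝒰 := hc ▸ Set.mem_univ _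
        obtain ⟨U, hU, hxU⟩ := this
        have : x ∈ e U := by rw [← (he U hU).2] at hxU; exact hxU
        exact ⟨e U, Or.inl ⟨U, hU, rfl⟩, this⟩
      · exact ⟨Aᶜ, Or.inr rfl, hx⟩
    obtain ⟨𝒱, hVo, hVc, hVr, hVord⟩ := h 𝒲 h𝒲o h𝒲c
    refine ⟨(fun V => (Subtype.val ⁻¹' V : Set ↥A)) '' 𝒱, ?_, ?_, ?_, ?_⟩
    · rintro V' ⟨V, hV, rfl⟩
      exact (hVo V hV).preimage continuous_subtype_val
    · apply Set.eq_univ_of_forall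
      intro x
      have : (x : X) ∈ ⋃₀ 𝒱 := hVc ▸ Set.mem_univ _
      obtain ⟨V, hV, hxV⟩ := this
      exact ⟨Subtype.val ⁻¹' V, ⟨V, hV, rfl⟩, hxV⟩
    · rintro V' ⟨V, hV, rfl⟩
      obtain ⟨W, hW, hVW⟩ := hVr V hV
      rcases hW with ⟨U, hU, rfl⟩ | hW
      · refine ⟨U, hU, ?_⟩
        rw [← (he U hU).2]
        exact fun y hy => hVW hy
      · simp only [Set.mem_singleton_iff] at hW
        subst hW
        refine ⟨U₀, hU₀, ?_⟩
        intro y hy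
        exact absurd (hVW hy) (by simp [y.2])
    · intro x 𝒮 h𝒮
      set f : Set ↥A → Set X := fun S =>
        if h' : ∃ V ∈ 𝒱, Subtype.val ⁻¹' V = S then h'.choose else ∅ with hf
      have hfspec : ∀ S ∈ 𝒮, f S ∈ 𝒱 ∧ Subtype.val ⁻¹' (f S) = S := by
        intro S hS
        obtain ⟨V, hV, hVS⟩ := (h𝒮 S hS).1
        have h' : ∃ V ∈ 𝒱, Subtype.val ⁻¹' V = S := ⟨V, hV, hVS⟩
        simp only [hf, dif_pos h']
        exact ⟨h'.choose_spec.1, h'.choose_spec.2⟩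
      have hinj : Set.InjOn f ↑𝒮 := by
        intro S hS S' hS' hff
        rw [← (hfspec S hS).2, ← (hfspec S' hS').2, hff]
      calc 𝒮.card = (𝒮.image f).card := (Finset.card_image_of_injOn hinj).symm
        _ ≤ m + 1 := by
            apply hVord (x : X)
            intro B hB
            obtain ⟨S, hS, rfl⟩ := Finset.mem_image.mp hB
            refine ⟨(hfspec S hS).1, ?_⟩
            have : x ∈ S := (h𝒮 S hS).2
            rw [← (hfspec S hS).2] at this
            exact this
  · refine ⟨𝒰, ho, hc, fun V hV => ⟨V, hV, subset_rfl⟩, ?_⟩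
    intro x
    exact absurd ⟨x⟩ hne

lemma topDimLE_union {X : Type*} [TopologicalSpace X] {X₁ X₂ : Set X}
    (h₁ : IsClosed X₁) (h₂ : IsClosed X₂) (hu : X₁ ∪ X₂ = Set.univ) {m : ℕ}
    (d₁ : TopDimLE ↥X₁ m) (d₂ : TopDimLE ↥X₂ m) : TopDimLE X m := by
  classical
  intro 𝒰 ho hc
  -- Step 1: refine the trace of 𝒰 on X₁
  set 𝒰₁ : Set (Set ↥X₁) := (fun U => (Subtype.val ⁻¹' U : Set ↥X₁)) '' 𝒰 with h𝒰₁
  have h𝒰₁o : ∀ U ∈ 𝒰₁, IsOpen U := by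
    rintro _ ⟨U, hU, rfl⟩
    exact (ho U hU).preimage continuous_subtype_val
  have h𝒰₁c : ⋃₀ 𝒰₁ = Set.univ := by
    apply Set.eq_univ_of_forall
    intro x
    have : (x : X) ∈ ⋃₀ 𝒰 := hc ▸ Set.mem_univ _
    obtain ⟨U, hU, hxU⟩ := this
    exact ⟨Subtype.val ⁻¹' U, ⟨U, hU, rfl⟩, hxU⟩
  obtain ⟨𝒱₁, hV₁o, hV₁c, hV₁r, hV₁ord⟩ := d₁ 𝒰₁ h𝒰₁o h𝒰₁c
  -- choose open extensions s V of members of 𝒱₁, each inside a member of 𝒰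
  have hsel₁ : ∀ V : Set ↥X₁, ∃ E : Set X, V ∈ 𝒱₁ →
      IsOpen E ∧ (∃ U ∈ 𝒰, E ⊆ U) ∧ Subtype.val ⁻¹' E = V := by
    intro V
    by_cases hV : V ∈ 𝒱₁
    · obtain ⟨E, hEo, hE⟩ := isOpen_induced_iff.mp (hV₁o V hV)
      obtain ⟨U', hU', hVU'⟩ := hV₁r V hV
      obtain ⟨U, hU, rfl⟩ := hU'
      refine ⟨E ∩ U, fun _ => ⟨hEo.inter (ho U hU), ⟨U, hU, Set.inter_subset_right⟩, ?_⟩⟩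
      rw [Set.preimage_inter, hE]
      exact Set.inter_eq_left.mpr hVU'
    · exact ⟨∅, fun h' => absurd h' hV⟩
  choose s hs using hsel₁
  -- Step 2: cover of X refining 𝒰, whose traces on X₂ we refine
  set 𝒲 : Set (Set X) := (s '' 𝒱₁) ∪ ((fun U => U \ X₁) '' 𝒰) with h𝒲
  have h𝒲o : ∀ W ∈ 𝒲, IsOpen W := by
    rintro _ (⟨V, hV, rfl⟩ | ⟨U, hU, rfl⟩)
    · exact (hs V hV).1
    · exact (ho U hU).sdiff h₁
  have h𝒲r : ∀ W ∈ 𝒲, ∃ U ∈ 𝒰, W ⊆ U := by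
    rintro _ (⟨V, hV, rfl⟩ | ⟨U, hU, rfl⟩)
    · exact (hs V hV).2.1
    · exact ⟨U, hU, Set.diff_subset⟩
  have hmemX₁ : ∀ x : X, x ∈ X₁ → ∃ V ∈ 𝒱₁, x ∈ s V := by
    intro x hx
    have : (⟨x, hx⟩ : ↥X₁) ∈ ⋃₀ 𝒱₁ := hV₁c ▸ Set.mem_univ _
    obtain ⟨V, hV, hxV⟩ := this
    refine ⟨V, hV, ?_⟩
    rw [← (hs V hV).2.2] at hxV
    exact hxV
  have h𝒲c : ⋃₀ 𝒲 = Set.univ := by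
    apply Set.eq_univ_of_forall
    intro x
    by_cases hx : x ∈ X₁
    · obtain ⟨V, hV, hxV⟩ := hmemX₁ x hx
      exact ⟨s V, Or.inl ⟨V, hV, rfl⟩, hxV⟩
    · have : x ∈ ⋃₀ 𝒰 := hc ▸ Set.mem_univ _
      obtain ⟨U, hU, hxU⟩ := this
      exact ⟨U \ X₁, Or.inr ⟨U, hU, rfl⟩, hxU, hx⟩
  -- trace of 𝒲 on X₂, refine
  set 𝒰₂ : Set (Set ↥X₂) := (fun W => (Subtype.val ⁻¹' W : Set ↥X₂)) '' 𝒲 with h𝒰₂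
  have h𝒰₂o : ∀ W ∈ 𝒰₂, IsOpen W := by
    rintro _ ⟨W, hW, rfl⟩
    exact (h𝒲o W hW).preimage continuous_subtype_val
  have h𝒰₂c : ⋃₀ 𝒰₂ = Set.univ := by
    apply Set.eq_univ_of_forall
    intro x
    have : (x : X) ∈ ⋃₀ 𝒲 := h𝒲c ▸ Set.mem_univ _
    obtain ⟨W, hW, hxW⟩ := this
    exact ⟨Subtype.val ⁻¹' W, ⟨W, hW, rfl⟩, hxW⟩
  obtain ⟨𝒱₂, hV₂o, hV₂c, hV₂r, hV₂ord⟩ := d₂ 𝒰₂ h𝒰₂o h𝒰₂c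
  -- choose open extensions t W ⊆ a W ∈ 𝒲 of members of 𝒱₂
  have hsel₂ : ∀ W : Set ↥X₂, ∃ (E : Set X) (T : Set X), W ∈ 𝒱₂ →
      IsOpen E ∧ T ∈ 𝒲 ∧ E ⊆ T ∧ Subtype.val ⁻¹' E = W := by
    intro W
    by_cases hW : W ∈ 𝒱₂
    · obtain ⟨E, hEo, hE⟩ := isOpen_induced_iff.mp (hV₂o W hW)
      obtain ⟨T', hT', hWT'⟩ := hV₂r W hW
      obtain ⟨T, hT, rfl⟩ := hT'
      refine ⟨E ∩ T, T, fun _ => ⟨hEo.inter (h𝒲o T hT), hT, Set.inter_subset_right, ?_⟩⟩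
      rw [Set.preimage_inter, hE]
      exact Set.inter_eq_left.mpr hWT'
    · exact ⟨∅, ∅, fun h' => absurd h' hW⟩
  choose t a ht using hsel₂
  -- Step 3: amalgamated final cover
  set G : Set X → Set X := fun T =>
    (T ∩ X₂ᶜ) ∪ ⋃₀ (t '' {W | W ∈ 𝒱₂ ∧ a W = T}) with hG
  have hGsub : ∀ T, G T ⊆ T := by
    intro T x hx
    rcases hx with hx | ⟨E, ⟨W, ⟨hW, haW⟩, rfl⟩, hxE⟩
    · exact hx.1
    · have := (ht W hW).2.2.1 hxE
      rwa [haW] at this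
  have hGx₂ : ∀ T x, x ∈ X₂ → x ∈ G T → ∃ W ∈ 𝒱₂, a W = T ∧ x ∈ t W := by
    intro T x hx2 hx
    rcases hx with hx | ⟨E, ⟨W, ⟨hW, haW⟩, rfl⟩, hxE⟩
    · exact absurd hx.2 (by simpa using hx2)
    · exact ⟨W, hW, haW, hxE⟩
  refine ⟨G '' 𝒲, ?_, ?_, ?_, ?_⟩
  · rintro _ ⟨T, hT, rfl⟩
    apply IsOpen.union ((h𝒲o T hT).inter h₂.isOpen_compl)
    apply isOpen_sUnion
    rintro _ ⟨W, ⟨hW, _⟩, rfl⟩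
    exact (ht W hW).1
  · apply Set.eq_univ_of_forall
    intro x
    by_cases hx2 : x ∈ X₂
    · have : (⟨x, hx2⟩ : ↥X₂) ∈ ⋃₀ 𝒱₂ := hV₂c ▸ Set.mem_univ _
      obtain ⟨W, hW, hxW⟩ := this
      have hxt : x ∈ t W := by rw [← (ht W hW).2.2.2] at hxW; exact hxW
      refine ⟨G (a W), ⟨a W, (ht W hW).2.1, rfl⟩, Or.inr ?_⟩
      exact ⟨t W, ⟨W, ⟨hW, rfl⟩, rfl⟩, hxt⟩
    · have hx1 : x ∈ X₁ := by
        have : x ∈ X₁ ∪ X₂ := hu ▸ Set.mem_univ x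
        exact this.resolve_right hx2
      obtain ⟨V, hV, hxV⟩ := hmemX₁ x hx1
      exact ⟨G (s V), ⟨s V, Or.inl ⟨V, hV, rfl⟩, rfl⟩, Or.inl ⟨hxV, hx2⟩⟩
  · rintro _ ⟨T, hT, rfl⟩
    obtain ⟨U, hU, hTU⟩ := h𝒲r T hT
    exact ⟨U, hU, (hGsub T).trans hTU⟩
  · intro x 𝒮 h𝒮
    by_cases hx2 : x ∈ X₂
    · -- count via 𝒱₂
      set f : Set X → Set ↥X₂ := fun S =>
        if h' : ∃ W ∈ 𝒱₂, x ∈ t W ∧ G (a W) = S then h'.choose else ∅ with hf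
      have hfspec : ∀ S ∈ 𝒮, f S ∈ 𝒱₂ ∧ x ∈ t (f S) ∧ G (a (f S)) = S := by
        intro S hS
        obtain ⟨⟨T, hT, rfl⟩, hxS⟩ := h𝒮 S hS
        obtain ⟨W, hW, haW, hxtW⟩ := hGx₂ T x hx2 hxS
        have h' : ∃ W ∈ 𝒱₂, x ∈ t W ∧ G (a W) = G T :=
          ⟨W, hW, hxtW, by rw [haW]⟩
        simp only [hf, dif_pos h']
        exact ⟨h'.choose_spec.1, h'.choose_spec.2.1, h'.choose_spec.2.2⟩
      have hinj : Set.InjOn f ↑𝒮 := by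
        intro S hS S' hS' hff
        rw [← (hfspec S hS).2.2, ← (hfspec S' hS').2.2, hff]
      calc 𝒮.card = (𝒮.image f).card := (Finset.card_image_of_injOn hinj).symm
        _ ≤ m + 1 := by
            apply hV₂ord ⟨x, hx2⟩
            intro B hB
            obtain ⟨S, hS, rfl⟩ := Finset.mem_image.mp hB
            refine ⟨(hfspec S hS).1, ?_⟩
            have := (hfspec S hS).2.1
            rw [← (ht (f S) (hfspec S hS).1).2.2.2]
            exact this
    · have hx1 : x ∈ X₁ := by
        have : x ∈ X₁ ∪ X₂ := hu ▸ Set.mem_univ x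
        exact this.resolve_right hx2
      set f : Set X → Set ↥X₁ := fun S =>
        if h' : ∃ V ∈ 𝒱₁, (⟨x, hx1⟩ : ↥X₁) ∈ V ∧ G (s V) = S then h'.choose else ∅
        with hf
      have hfspec : ∀ S ∈ 𝒮, f S ∈ 𝒱₁ ∧ (⟨x, hx1⟩ : ↥X₁) ∈ f S ∧ G (s (f S)) = S := by
        intro S hS
        obtain ⟨⟨T, hT, rfl⟩, hxS⟩ := h𝒮 S hS
        have hxT : x ∈ T := hGsub T hxS
        rcases hT with ⟨V, hV, rfl⟩ | ⟨U, hU, rfl⟩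
        · have hmem : (⟨x, hx1⟩ : ↥X₁) ∈ V := by
            rw [← (hs V hV).2.2]; exact hxT
          have h' : ∃ V' ∈ 𝒱₁, (⟨x, hx1⟩ : ↥X₁) ∈ V' ∧ G (s V') = G (s V) :=
            ⟨V, hV, hmem, rfl⟩
          simp only [hf, dif_pos h']
          exact ⟨h'.choose_spec.1, h'.choose_spec.2.1, h'.choose_spec.2.2⟩
        · exact absurd hx1 hxT.2
      have hinj : Set.InjOn f ↑𝒮 := by
        intro S hS S' hS' hff
        rw [← (hfspec S hS).2.2, ← (hfspec S' hS').2.2, hff]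
      calc 𝒮.card = (𝒮.image f).card := (Finset.card_image_of_injOn hinj).symm
        _ ≤ m + 1 := by
            apply hV₁ord ⟨x, hx1⟩
            intro B hB
            obtain ⟨S, hS, rfl⟩ := Finset.mem_image.mp hB
            exact ⟨(hfspec S hS).1, (hfspec S hS).2.1⟩


lemma topDimLE_iff_parts {X : Type} [TopologicalSpace X] {X₁ X₂ : Set X}
    (h₁ : IsClosed X₁) (h₂ : IsClosed X₂) (hu : X₁ ∪ X₂ = Set.univ) (m : ℕ) :
    TopDimLE X m ↔ TopDimLE ↥X₁ m ∧ TopDimLE ↥X₂ m :=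
  ⟨fun h => ⟨topDimLE_closed_subset h₁ h, topDimLE_closed_subset h₂ h⟩,
   fun ⟨d₁, d₂⟩ => topDimLE_union h₁ h₂ hu d₁ d₂⟩

/-- If `X = X₁ ∪ X₂` for closed finite-dimensional subspaces `X₁, X₂`, then `X` is
finite-dimensional and `dim X = max (dim X₁) (dim X₂)`. -/
theorem statement5 (X : Type) [TopologicalSpace X] (X₁ X₂ : Set X)
    (h₁ : IsClosed X₁) (h₂ : IsClosed X₂)
    (hfd₁ : FiniteDim ↥X₁) (hfd₂ : FiniteDim ↥X₂)
    (hunion : X₁ ∪ X₂ = Set.univ) :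
    FiniteDim X ∧ topDim X = max (topDim ↥X₁) (topDim ↥X₂) := by
  obtain ⟨m₁, hm₁⟩ := hfd₁
  obtain ⟨m₂, hm₂⟩ := hfd₂
  have hfd : FiniteDim X := by
    refine ⟨max m₁ m₂, (topDimLE_iff_parts h₁ h₂ hunion _).mpr ⟨?_, ?_⟩⟩
    · exact topDimLE_mono (le_max_left _ _) hm₁
    · exact topDimLE_mono (le_max_right _ _) hm₂
  refine ⟨hfd, ?_⟩
  have hS₁ : {m | TopDimLE ↥X₁ m}.Nonempty := ⟨m₁, hm₁⟩
  have hS₂ : {m | TopDimLE ↥X₂ m}.Nonempty := ⟨m₂, hm₂⟩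
  have hS : {m | TopDimLE X m}.Nonempty := hfd
  have hd₁ : TopDimLE ↥X₁ (topDim ↥X₁) := Nat.sInf_mem hS₁
  have hd₂ : TopDimLE ↥X₂ (topDim ↥X₂) := Nat.sInf_mem hS₂
  have hd : TopDimLE X (topDim X) := Nat.sInf_mem hS
  apply le_antisymm
  · apply Nat.sInf_le
    refine (topDimLE_iff_parts h₁ h₂ hunion _).mpr ⟨?_, ?_⟩
    · exact topDimLE_mono (le_max_left _ _) hd₁
    · exact topDimLE_mono (le_max_right _ _) hd₂
  · obtain ⟨hp₁, hp₂⟩ := (topDimLE_iff_parts h₁ h₂ hunion _).mp hd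
    exact max_le (Nat.sInf_le hp₁) (Nat.sInf_le hp₂)
end

section
/- Let X be a topological space with X = ⋃_{i=0}^∞ C_i, where every C_i is closed, C₀ = ∅, C_i is contained in the interior of C_{i+1} for all i, and there exists d ∈ ℕ₀ such that the closure of C_{i+1} \ C_i has topological dimension at most d for all i. Then X is finite-dimensional and dim X ≤ d. -/
theorem shrink_lemma {X : Type} [TopologicalSpace X] {d : ℕ} {F : Set X}
    (hFc : IsClosed F) (hFd : TopDimLE ↥F d) {ι : Type} (V : ι → Set X)
    (hVo : ∀ s, IsOpen (V s)) (hVcov : (⋃ s, V s) = Set.univ) :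
    ∃ W : ι → Set X, (∀ s, IsOpen (W s)) ∧ (∀ s, W s ⊆ V s) ∧
      ((⋃ s, W s) = Set.univ) ∧ (∀ s x, x ∉ F → (x ∈ W s ↔ x ∈ V s)) ∧
      (∀ x ∈ F, ∀ T : Finset ι, (∀ s ∈ T, x ∈ W s) → T.card ≤ d + 1) := by
  classical
  rcases isEmpty_or_nonempty ι with hι | hι
  · refine ⟨V, hVo, fun s => le_refl _, hVcov, fun s x _ => Iff.rfl, ?_⟩
    intro x hx T hT
    have : T = ∅ := Finset.eq_empty_of_isEmpty T
    simp [this]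
  set 𝒰' : Set (Set ↥F) := {A | ∃ s, A = Subtype.val ⁻¹' (V s)} with h𝒰'
  have h1 : ∀ U ∈ 𝒰', IsOpen U := by rintro U ⟨s, rfl⟩; exact (hVo s).preimage continuous_subtype_val
  have h2 : ⋃₀ 𝒰' = Set.univ := by
    ext x; simp only [Set.mem_sUnion, Set.mem_univ, iff_true]
    have hx : (x : X) ∈ ⋃ s, V s := hVcov ▸ Set.mem_univ _
    obtain ⟨s, hs⟩ := Set.mem_iUnion.1 hx
    exact ⟨_, ⟨s, rfl⟩, hs⟩
  obtain ⟨𝒱', hVo', hVcov', hVref', hVord'⟩ := hFd 𝒰' h1 h2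
  have htag : ∀ G : Set ↥F, ∃ s : ι, G ∈ 𝒱' → G ⊆ Subtype.val ⁻¹' (V s) := by
    intro G
    by_cases hG : G ∈ 𝒱'
    · obtain ⟨U, ⟨s, rfl⟩, hGU⟩ := hVref' G hG
      exact ⟨s, fun _ => hGU⟩
    · exact ⟨Classical.arbitrary ι, fun h => absurd h hG⟩
  choose tag htag using htag
  have hop : ∀ G : Set ↥F, ∃ O : Set X, G ∈ 𝒱' → (IsOpen O ∧ G = Subtype.val ⁻¹' O) := by
    intro G
    by_cases hG : G ∈ 𝒱'
    · obtain ⟨O, hO, hOG⟩ := isOpen_induced_iff.1 (hVo' G hG)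
      exact ⟨O, fun _ => ⟨hO, hOG.symm⟩⟩
    · exact ⟨∅, fun h => absurd h hG⟩
  choose op hop using hop
  set Ot : ι → Set X := fun s => ⋃ (G : Set ↥F) (_ : G ∈ 𝒱') (_ : tag G = s), op G with hOt
  have hOtopen : ∀ s, IsOpen (Ot s) := fun s =>
    isOpen_iUnion fun G => isOpen_iUnion fun hG => isOpen_iUnion fun _ => (hop G hG).1
  -- membership characterization of Ot for x ∈ F
  have hOtmem : ∀ s x (hx : x ∈ F), x ∈ Ot s ↔ ∃ G, G ∈ 𝒱' ∧ tag G = s ∧ (⟨x, hx⟩ : ↥F) ∈ G := by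
    intro s x hx
    simp only [hOt, Set.mem_iUnion]
    constructor
    · rintro ⟨G, hG, htg, hxO⟩
      exact ⟨G, hG, htg, by rw [(hop G hG).2]; exact hxO⟩
    · rintro ⟨G, hG, htg, hxG⟩
      exact ⟨G, hG, htg, by rw [(hop G hG).2] at hxG; exact hxG⟩
  refine ⟨fun s => V s ∩ (Ot s ∪ Fᶜ), fun s => (hVo s).inter ((hOtopen s).union hFc.isOpen_compl),
    fun s => Set.inter_subset_left, ?_, ?_, ?_⟩
  · -- cover
    ext x; simp only [Set.mem_iUnion, Set.mem_univ, iff_true]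
    by_cases hx : x ∈ F
    · have hxu : (⟨x, hx⟩ : ↥F) ∈ ⋃₀ 𝒱' := hVcov' ▸ Set.mem_univ _
      obtain ⟨G, hG, hxG⟩ := hxu
      refine ⟨tag G, htag G hG hxG, Or.inl ?_⟩
      exact (hOtmem (tag G) x hx).2 ⟨G, hG, rfl, hxG⟩
    · have hxV : x ∈ ⋃ s, V s := hVcov ▸ Set.mem_univ _
      obtain ⟨s, hs⟩ := Set.mem_iUnion.1 hxV
      exact ⟨s, hs, Or.inr hx⟩
  · intro s x hx
    constructor
    · exact fun h => h.1
    · exact fun h => ⟨h, Or.inr hx⟩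
  · -- order
    intro x hx T hT
    have hmem : ∀ s : ι, ∃ G : Set ↥F, s ∈ T → (G ∈ 𝒱' ∧ tag G = s ∧ (⟨x, hx⟩ : ↥F) ∈ G) := by
      intro s
      by_cases hs : s ∈ T
      · have := (hT s hs).2
        rcases this with hOt' | hF'
        · obtain ⟨G, hG, htg, hxG⟩ := (hOtmem s x hx).1 hOt'
          exact ⟨G, fun _ => ⟨hG, htg, hxG⟩⟩
        · exact absurd hx hF'
      · exact ⟨∅, fun h => absurd h hs⟩
    choose g hg using hmem
    have hinj : Set.InjOn g T := by
      intro s1 h1 s2 h2 he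
      have e1 := (hg s1 h1).2.1
      have e2 := (hg s2 h2).2.1
      rw [← e1, ← e2, he]
    have hcard : (T.image g).card = T.card := Finset.card_image_of_injOn hinj
    have := hVord' ⟨x, hx⟩ (T.image g) ?_
    · rwa [hcard] at this
    · intro A hA
      obtain ⟨s, hs, rfl⟩ := Finset.mem_image.1 hA
      exact ⟨(hg s hs).1, (hg s hs).2.2⟩

theorem seq_lemma {α : Type*} (P : ℕ → α → Prop) (Q : ℕ → α → α → Prop)
    (a0 : α) (h0 : P 0 a0)
    (hstep : ∀ i a, P i a → ∃ b, P (i+1) b ∧ Q i a b) :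
    ∃ f : ℕ → α, f 0 = a0 ∧ (∀ i, P i (f i)) ∧ ∀ i, Q i (f i) (f (i+1)) := by
  classical
  let g : ∀ n : ℕ, {a : α // P n a} := fun n =>
    Nat.rec ⟨a0, h0⟩ (fun i p => ⟨(hstep i p.1 p.2).choose, (hstep i p.1 p.2).choose_spec.1⟩) n
  exact ⟨fun n => (g n).1, rfl, fun i => (g i).2,
    fun i => (hstep i (g i).1 (g i).2).choose_spec.2⟩

/-- If `X = ⋃ᵢ Cᵢ` with each `Cᵢ` closed, `C₀ = ∅`, `Cᵢ ⊆ int C_{i+1}`, and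
`dim (closure (C_{i+1} \\ Cᵢ)) ≤ d` for all `i`, then `X` is finite-dimensional with
`dim X ≤ d`. -/
theorem statement8 (X : Type) [TopologicalSpace X] (C : ℕ → Set X)
    (hclosed : ∀ i, IsClosed (C i)) (h0 : C 0 = ∅)
    (hsub : ∀ i, C i ⊆ interior (C (i + 1)))
    (hcover : ⋃ i, C i = Set.univ) (d : ℕ)
    (hdim : ∀ i, TopDimLE ↥(closure (C (i + 1) \ C i)) d) :
    FiniteDim X ∧ topDim X ≤ d := by
  classical
  have hmono : ∀ i j, i ≤ j → C i ⊆ C j := by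
    intro i j hij
    induction j, hij using Nat.le_induction with
    | base => exact le_refl _
    | succ j hij ih => exact ih.trans ((hsub j).trans interior_subset)
  set A : ℕ → Set X := fun i => closure (C (i + 1) \ C i) with hA
  have hAint : ∀ i, A i ⊆ (interior (C i))ᶜ := by
    intro i
    have : C (i + 1) \ C i ⊆ (interior (C i))ᶜ := by
      intro x hx
      exact fun h => hx.2 (interior_subset h)
    exact closure_minimal this (isOpen_interior.isClosed_compl)
  have main : TopDimLE X d := by
    intro 𝒰 h𝒰o h𝒰cov
    set ι := {U : Set X // U ∈ 𝒰} with hι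
    set V0 : ι → Set X := fun s => s.1 with hV0
    have hV0o : ∀ s, IsOpen (V0 s) := fun s => h𝒰o s.1 s.2
    have hV0cov : (⋃ s, V0 s) = Set.univ := by
      rw [← h𝒰cov, Set.sUnion_eq_iUnion]
    set P : ℕ → (ι → Set X) → Prop := fun _ v => (∀ s, IsOpen (v s)) ∧ (⋃ s, v s) = Set.univ
      with hP
    set Q : ℕ → (ι → Set X) → (ι → Set X) → Prop := fun i v w =>
      (∀ s, w s ⊆ v s) ∧ (∀ s x, x ∉ A i → (x ∈ w s ↔ x ∈ v s)) ∧
      (∀ x ∈ A i, ∀ T : Finset ι, (∀ s ∈ T, x ∈ w s) → T.card ≤ d + 1) with hQ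
    obtain ⟨f, hf0, hfP, hfQ⟩ := seq_lemma P Q V0 ⟨hV0o, hV0cov⟩ (by
      intro i v hv
      obtain ⟨w, h1, h2, h3, h4, h5⟩ := shrink_lemma isClosed_closure (hdim i) v hv.1 hv.2
      exact ⟨w, ⟨h1, h3⟩, h2, h4, h5⟩)
    have hmonof : ∀ s i j, i ≤ j → f j s ⊆ f i s := by
      intro s i j hij
      induction j, hij using Nat.le_induction with
      | base => exact le_refl _
      | succ j hij ih => exact ((hfQ j).1 s).trans ih
    have hstab : ∀ j i, j ≤ i → ∀ s x, x ∈ interior (C j) → (x ∈ f i s ↔ x ∈ f j s) := by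
      intro j i hij s x hx
      induction i, hij using Nat.le_induction with
      | base => exact Iff.rfl
      | succ i hij ih =>
        have hxi : x ∈ interior (C i) := interior_mono (hmono j i hij) hx
        have hxA : x ∉ A i := fun h => hAint i h hxi
        exact ((hfQ i).2.1 s x hxA).trans ih
    set W : ι → Set X := fun s => ⋃ j, (f j s ∩ interior (C j)) with hW
    have hWo : ∀ s, IsOpen (W s) := fun s =>
      isOpen_iUnion fun j => ((hfP j).1 s).inter isOpen_interior
    have hWsub : ∀ s, W s ⊆ s.1 := by
      intro s x hx
      obtain ⟨j, hj⟩ := Set.mem_iUnion.1 hx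
      have := hmonof s 0 j (Nat.zero_le j) hj.1
      rwa [hf0] at this
    have htrace : ∀ j s x, x ∈ interior (C j) → (x ∈ W s ↔ x ∈ f j s) := by
      intro j s x hx
      constructor
      · intro hxW
        obtain ⟨j', hj'⟩ := Set.mem_iUnion.1 hxW
        rcases le_total j j' with h | h
        · exact (hstab j j' h s x hx).1 hj'.1
        · exact (hstab j' j h s x hj'.2).2 hj'.1
      · intro hxf
        exact Set.mem_iUnion.2 ⟨j, hxf, hx⟩
    have hWcov : (⋃ s, W s) = Set.univ := by
      ext x
      simp only [Set.mem_iUnion, Set.mem_univ, iff_true]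
      have hx : x ∈ ⋃ i, C i := hcover ▸ Set.mem_univ x
      obtain ⟨m, hm⟩ := Set.mem_iUnion.1 hx
      have hxint : x ∈ interior (C (m + 1)) := hsub m hm
      have hxf : x ∈ ⋃ s, f (m + 1) s := (hfP (m + 1)).2 ▸ Set.mem_univ x
      obtain ⟨s, hs⟩ := Set.mem_iUnion.1 hxf
      exact ⟨s, (htrace (m + 1) s x hxint).2 hs⟩
    have horder : ∀ x : X, ∀ T : Finset ι, (∀ s ∈ T, x ∈ W s) → T.card ≤ d + 1 := by
      intro x T hT
      have hx : x ∈ ⋃ i, C i := hcover ▸ Set.mem_univ x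
      have hex : ∃ i, x ∈ C i := Set.mem_iUnion.1 hx
      set m := Nat.find hex with hm
      have hm0 : m ≠ 0 := by
        intro h
        have := Nat.find_spec hex
        rw [← hm, h, h0] at this
        exact this
      obtain ⟨k, hk⟩ := Nat.exists_eq_succ_of_ne_zero hm0
      have hxk1 : x ∈ C (k + 1) := by have := Nat.find_spec hex; rwa [← hm, hk] at this
      have hxk : x ∉ C k := Nat.find_min hex (by omega)
      have hxA : x ∈ A k := subset_closure ⟨hxk1, hxk⟩
      have hxint : x ∈ interior (C (k + 2)) := hsub (k + 1) hxk1
      refine (hfQ k).2.2 x hxA T (fun s hs => ?_)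
      have h1 : x ∈ f (k + 2) s := (htrace (k + 2) s x hxint).1 (hT s hs)
      exact hmonof s (k + 1) (k + 2) (by omega) h1
    refine ⟨Set.range W, ?_, ?_, ?_, ?_⟩
    · rintro V ⟨s, rfl⟩; exact hWo s
    · rw [Set.sUnion_range]; exact hWcov
    · rintro V ⟨s, rfl⟩; exact ⟨s.1, s.2, hWsub s⟩
    · intro x 𝒮 h𝒮
      rcases 𝒮.eq_empty_or_nonempty with rfl | ⟨A0, hA0⟩
      · simp
      · obtain ⟨s0, _⟩ := (h𝒮 A0 hA0).1
        haveI : Nonempty ι := ⟨s0⟩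
        have hch : ∀ B : Set X, ∃ s : ι, B ∈ 𝒮 → W s = B := by
          intro B
          by_cases hB : B ∈ 𝒮
          · obtain ⟨s, hs⟩ := (h𝒮 B hB).1
            exact ⟨s, fun _ => hs⟩
          · exact ⟨Classical.arbitrary ι, fun h => absurd h hB⟩
        choose g hg using hch
        have hinj : Set.InjOn g 𝒮 := by
          intro B1 h1 B2 h2 he
          rw [← hg B1 h1, ← hg B2 h2, he]
        have hcard : (𝒮.image g).card = 𝒮.card := Finset.card_image_of_injOn hinj
        have := horder x (𝒮.image g) (by
          intro s hs
          obtain ⟨B, hB, rfl⟩ := Finset.mem_image.1 hs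
          rw [hg B hB]
          exact (h𝒮 B hB).2)
        rwa [hcard] at this
  exact ⟨⟨d, main⟩, Nat.sInf_le main⟩
end

section
/- Let x₁,…,x_m ∈ ℝ^N be distinct points and let r > 0. Then there exist distinct points y₁,…,y_m ∈ ℝ^N such that ‖x_i − y_i‖_∞ < r for all 1 ≤ i ≤ m, and {y₁,…,y_m} is in general position, i.e. every subset S ⊆ {y₁,…,y_m} with card(S) ≤ N+1 is affinely independent. -/
open MeasureTheory

lemma stepA (N : ℕ) (hN : 0 < N) (F : Finset (Fin N → ℝ)) (x : Fin N → ℝ) (r : ℝ) (hr : 0 < r) :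
    ∃ y : Fin N → ℝ, ‖x - y‖ < r ∧
      ∀ T ⊆ F, T.card ≤ N → y ∉ affineSpan ℝ (T : Set (Fin N → ℝ)) := by
  classical
  have : Nonempty (Fin N) := ⟨⟨0, hN⟩⟩
  set 𝒯 : Finset (Finset (Fin N → ℝ)) := F.powerset.filter (fun T => T.card ≤ N) with h𝒯
  set U : Set (Fin N → ℝ) := ⋃ T ∈ 𝒯, (affineSpan ℝ (T : Set (Fin N → ℝ)) : Set (Fin N → ℝ)) with hU
  have hspan : ∀ T ∈ 𝒯, (affineSpan ℝ (T : Set (Fin N → ℝ))) ≠ ⊤ := by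
    intro T hT
    simp only [h𝒯, Finset.mem_filter, Finset.mem_powerset] at hT
    intro htop
    rcases T.eq_empty_or_nonempty with rfl | hne
    · simp at htop
    · have hcard : T.card = (T.card - 1) + 1 :=
        (Nat.succ_pred_eq_of_pos (Finset.card_pos.mpr hne)).symm
      have hfr : Module.finrank ℝ (vectorSpan ℝ (T : Set (Fin N → ℝ))) ≤ T.card - 1 := by
        have := finrank_vectorSpan_image_finset_le ℝ (id : (Fin N → ℝ) → (Fin N → ℝ)) T hcard
        rwa [Finset.image_id] at this
      have hdir : (affineSpan ℝ (T : Set (Fin N → ℝ))).direction = ⊤ := by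
        rw [htop]; exact AffineSubspace.direction_top ℝ _ _
      rw [direction_affineSpan] at hdir
      have hN' : Module.finrank ℝ (vectorSpan ℝ (T : Set (Fin N → ℝ))) = N := by
        rw [hdir]; simpa using (Module.finrank_fin_fun ℝ (n := N))
      have hTc : T.card ≤ N := hT.2
      omega
  have hUnull : volume U = 0 := by
    rw [hU, ← Finset.set_biUnion_coe]
    refine (measure_biUnion_null_iff (μ := (volume : Measure (Fin N → ℝ))) (𝒯.countable_toSet)).mpr ?_
    intro T hT
    exact Measure.addHaar_affineSubspace volume _ (hspan T hT)
  have hball : (Metric.ball x r \ U).Nonempty := by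
    rw [Set.diff_nonempty]
    intro hsub
    have := measure_mono_null hsub hUnull
    exact (Metric.measure_ball_pos volume x hr).ne' this
  obtain ⟨y, hyb, hyU⟩ := hball
  refine ⟨y, ?_, ?_⟩
  · have : dist y x < r := Metric.mem_ball.mp hyb
    rwa [show ‖x - y‖ = dist y x from by rw [dist_eq_norm, norm_sub_rev]]
  · intro T hTF hTc hmem
    refine hyU (Set.mem_iUnion₂.mpr ⟨T, ?_, hmem⟩)
    rw [h𝒯, Finset.mem_filter, Finset.mem_powerset]
    exact ⟨hTF, hTc⟩

lemma mainInd (N : ℕ) (hN : 0 < N) : ∀ (m : ℕ) (x : Fin m → Fin N → ℝ) (r : ℝ), 0 < r →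
    ∃ y : Fin m → Fin N → ℝ, Function.Injective y ∧ (∀ i, ‖x i - y i‖ < r) ∧
      ∀ S : Finset (Fin m), S.card ≤ N + 1 → AffineIndependent ℝ fun i : ↥S => y i.1 := by
  intro m
  induction m with
  | zero =>
    intro x r hr
    exact ⟨x, fun a b _ => Subsingleton.elim a b, fun i => i.elim0, fun S _ =>
      affineIndependent_of_subsingleton ℝ _⟩
  | succ m ih =>
    intro x r hr
    classical
    obtain ⟨y', hinj', hnorm', hAI'⟩ := ih (fun j => x j.castSucc) r hr
    obtain ⟨z, hznorm, hzspan⟩ := stepA N hN (Finset.image y' Finset.univ) (x (Fin.last m)) r hr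
    set y : Fin (m + 1) → Fin N → ℝ := Fin.snoc y' z with hy
    have hyc : ∀ j : Fin m, y j.castSucc = y' j := fun j => by simp [hy]
    have hyl : y (Fin.last m) = z := by simp [hy]
    have hzne : ∀ j : Fin m, z ≠ y' j := by
      intro j hzj
      refine hzspan {y' j} (by simp) (by simp; omega) ?_
      rw [hzj]
      exact mem_affineSpan ℝ (by simp)
    have hyinj : Function.Injective y := by
      intro a b hab
      induction a using Fin.lastCases with
      | last =>
        induction b using Fin.lastCases with
        | last => rfl
        | cast b => rw [hyl, hyc] at hab; exact absurd hab (hzne b)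
      | cast a =>
        induction b using Fin.lastCases with
        | last => rw [hyl, hyc] at hab; exact absurd hab.symm (hzne a)
        | cast b => rw [hyc, hyc] at hab; exact congrArg Fin.castSucc (hinj' hab)
    refine ⟨y, hyinj, ?_, ?_⟩
    · intro i
      induction i using Fin.lastCases with
      | last => rw [hyl]; exact hznorm
      | cast i => rw [hyc]; exact hnorm' i
    · intro S hScard
      by_cases hlast : Fin.last m ∈ S
      · -- insert case
        set S' : Finset (Fin m) := Finset.univ.filter (fun j => j.castSucc ∈ S) with hS'
        have hS'mem : ∀ j : Fin m, j ∈ S' ↔ j.castSucc ∈ S := by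
          intro j; simp [hS']
        have hS'card : S'.card ≤ N := by
          have : S'.card ≤ (S.erase (Fin.last m)).card := by
            apply Finset.card_le_card_of_injOn (fun j => j.castSucc)
            · intro j hj
              rw [Finset.mem_coe, hS'mem] at hj
              exact Finset.mem_erase.mpr ⟨Fin.castSucc_lt_last j |>.ne, hj⟩
            · intro a _ b _ h; exact Fin.castSucc_injective m h
          have := Finset.card_erase_of_mem hlast
          omega
        have hT : (S'.image y') ⊆ Finset.image y' Finset.univ :=
          Finset.image_subset_image (Finset.subset_univ S')
        have hTc : (S'.image y').card ≤ N := le_trans (Finset.card_image_le) hS'card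
        have hznospan := hzspan _ hT hTc
        set i₀ : ↥S := ⟨Fin.last m, hlast⟩ with hi₀
        refine AffineIndependent.affineIndependent_of_notMem_span (i := i₀) ?_ ?_
        · -- the rest is affinely independent
          have hAIS' := hAI' S' (le_trans hS'card (Nat.le_succ N))
          have hne : ∀ v : {v : ↥S // v ≠ i₀}, (v.1.1 : Fin (m+1)) ≠ Fin.last m := by
            intro v hv
            exact v.2 (Subtype.ext (show (v.1.1 : Fin (m+1)) = ((i₀ : ↥S) : Fin (m+1)) from hv))
          let e : {v : ↥S // v ≠ i₀} ↪ ↥S' :=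
            ⟨fun v => ⟨(v.1.1).castPred (hne v), by
              rw [hS'mem, Fin.castSucc_castPred]; exact v.1.2⟩, by
              intro a b h
              apply Subtype.ext; apply Subtype.ext
              have := congrArg (Fin.castSucc ∘ Subtype.val) h
              simpa [Fin.castSucc_castPred] using this⟩
          have := hAIS'.comp_embedding e
          convert this using 1
          · rfl
          funext v
          show y v.1.1 = y' ((v.1.1).castPred (hne v))
          rw [← hyc ((v.1.1).castPred (hne v)), Fin.castSucc_castPred]
        · -- z not in span of the others
          rw [show y (i₀ : Fin (m+1)) = z from hyl]
          intro hmem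
          refine hznospan ?_
          refine affineSpan_mono ℝ ?_ hmem
          rintro p ⟨v, hv, rfl⟩
          simp only [Set.mem_setOf_eq] at hv
          have hne : (v.1 : Fin (m+1)) ≠ Fin.last m := fun h => hv (Subtype.ext h)
          have heq : (fun i : ↥S => y i.1) v = y' ((v.1 : Fin (m+1)).castPred hne) := by
            show y v.1 = _
            rw [← hyc ((v.1 : Fin (m+1)).castPred hne), Fin.castSucc_castPred]
          rw [heq]
          exact Finset.mem_coe.mpr (Finset.mem_image.mpr ⟨_, (hS'mem _).mpr
            (by rw [Fin.castSucc_castPred]; exact v.2), rfl⟩)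
      · -- last not in S
        set S' : Finset (Fin m) := Finset.univ.filter (fun j => j.castSucc ∈ S) with hS'
        have hS'mem : ∀ j : Fin m, j ∈ S' ↔ j.castSucc ∈ S := by
          intro j; simp [hS']
        have hS'card : S'.card ≤ N + 1 := by
          refine le_trans ?_ hScard
          apply Finset.card_le_card_of_injOn (fun j => j.castSucc)
          · intro j hj; exact (hS'mem j).mp hj
          · intro a _ b _ h; exact Fin.castSucc_injective m h
        have hAIS' := hAI' S' hS'card
        have hne : ∀ v : ↥S, (v.1 : Fin (m+1)) ≠ Fin.last m := by
          intro v hv; exact hlast (hv ▸ v.2)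
        let e : ↥S ↪ ↥S' :=
          ⟨fun v => ⟨(v.1).castPred (hne v), by
            rw [hS'mem, Fin.castSucc_castPred]; exact v.2⟩, by
            intro a b h
            apply Subtype.ext
            have := congrArg (Fin.castSucc ∘ Subtype.val) h
            simpa [Fin.castSucc_castPred] using this⟩
        have := hAIS'.comp_embedding e
        convert this using 1
        funext v
        show y v.1 = y' ((v.1).castPred (hne v))
        rw [← hyc ((v.1).castPred (hne v)), Fin.castSucc_castPred]

/-- Distinct points `x₁, …, x_m` of `ℝ^N` can be perturbed by less than `r` (in the sup
norm) to distinct points `y₁, …, y_m` in general position: every subset of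
`{y₁, …, y_m}` of cardinality at most `N + 1` is affinely independent. -/
theorem statement13 (N m : ℕ) (x : Fin m → Fin N → ℝ) (hx : Function.Injective x)
    (r : ℝ) (hr : 0 < r) :
    ∃ y : Fin m → Fin N → ℝ, Function.Injective y ∧
      (∀ i, ‖x i - y i‖ < r) ∧
      ∀ S : Finset (Fin m), S.card ≤ N + 1 →
        AffineIndependent ℝ fun i : ↥S => y i.1 := by
  rcases Nat.eq_zero_or_pos N with rfl | hN
  · refine ⟨x, hx, fun i => by rw [sub_self, norm_zero]; exact hr, ?_⟩
    intro S hS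
    have : Subsingleton ↥S := by
      rw [Finset.card_le_one] at hS
      exact ⟨fun a b => Subtype.ext (hS _ a.2 _ b.2)⟩
    exact affineIndependent_of_subsingleton ℝ _
  · exact mainInd N hN m x r hr
end

section
/- Let X be a second-countable locally compact Hausdorff space, metrized by a metric d inducing its topology, such that every compact subspace of X has topological dimension at most n ∈ ℕ. Let ∅ ≠ C ⊆ X be compact and let ε > 0. Then for every continuous f: X → ℝ^{2n+1} and every r with 0 < r < 1 there exists a continuous g: X → ℝ^{2n+1} with ρ(f,g) ≤ r and Δ(g,C) < ε. (I.e. U_ε(C) is dense in C(X,ℝ^{2n+1}) in the metric ρ.) -/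
open scoped ENNReal

/-- The supremum metric `ρ(f,g) = sup_{x ∈ X} min (1, ‖f x - g x‖_∞)` on `C(X, ℝ^N)`
(the norm on `Fin N → ℝ` is the supremum norm). -/
noncomputable def rho {X : Type*} {N : ℕ} (f g : X → Fin N → ℝ) : ℝ :=
  ⨆ x : X, min 1 ‖f x - g x‖

/-- `Δ(f, C) = sup_{z ∈ f(C)} diam f⁻¹({z})`: the supremum, over points `z` of the
image of `C`, of the diameter of the fibre of `f` over `z`. -/
noncomputable def Delta {X : Type*} [MetricSpace X] {N : ℕ} (f : X → Fin N → ℝ)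
    (C : Set X) : ℝ≥0∞ :=
  ⨆ z ∈ f '' C, EMetric.diam (f ⁻¹' {z})

open Set Function MeasureTheory Metric


lemma aux_span_ne_top {N : ℕ} (hN : 0 < N) (q : ℕ → Fin N → ℝ) (t : Finset ℕ)
    (ht : t.card ≤ N) : affineSpan ℝ (q '' ↑t) ≠ ⊤ := by
  classical
  haveI : Nonempty (Fin N) := ⟨⟨0, hN⟩⟩
  intro htop
  rcases t.eq_empty_or_nonempty with rfl | hne
  · simp only [Finset.coe_empty, Set.image_empty, AffineSubspace.span_empty] at htop
    exact absurd htop bot_ne_top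
  · have hcard : t.card = (t.card - 1) + 1 := by
      have := Finset.card_pos.2 hne; omega
    have h1 : Module.finrank ℝ ↥(vectorSpan ℝ (↑(t.image q) : Set (Fin N → ℝ))) ≤ t.card - 1 :=
      finrank_vectorSpan_image_finset_le ℝ q t hcard
    have h2 : vectorSpan ℝ (q '' ↑t) = ⊤ := by
      have := direction_affineSpan ℝ (q '' (↑t : Set ℕ))
      rw [htop, AffineSubspace.direction_top] at this
      exact this.symm
    rw [Finset.coe_image, h2] at h1
    have h3 : Module.finrank ℝ (Fin N → ℝ) = N := by
      simp [Module.finrank_pi]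
    rw [finrank_top, h3] at h1
    omega

lemma aux_exists_point {N : ℕ} (hN : 0 < N) (c : Fin N → ℝ) {δ : ℝ} (hδ : 0 < δ)
    (q : ℕ → Fin N → ℝ) (m : ℕ) :
    ∃ p : Fin N → ℝ, p ∈ closedBall c δ ∧
      ∀ t : Finset ℕ, t ⊆ Finset.range m → t.card ≤ N → p ∉ affineSpan ℝ (q '' ↑t) := by
  classical
  set bad : Set (Fin N → ℝ) :=
    ⋃ t ∈ {t : Finset ℕ | t ⊆ Finset.range m ∧ t.card ≤ N},
      (affineSpan ℝ (q '' ↑t) : Set (Fin N → ℝ)) with hbad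
  have hbad0 : volume bad = 0 := by
    refine (measure_biUnion_null_iff (Set.to_countable _)).2 ?_
    rintro t ⟨-, ht2⟩
    exact Measure.addHaar_affineSubspace volume _ (aux_span_ne_top hN q t ht2)
  have hpos : volume (ball c δ \ bad) ≠ 0 := by
    rw [measure_diff_null hbad0]
    exact (measure_ball_pos volume c hδ).ne'
  obtain ⟨p, hp⟩ := nonempty_of_measure_ne_zero hpos
  refine ⟨p, ball_subset_closedBall hp.1, fun t ht1 ht2 hmem => hp.2 ?_⟩
  exact Set.mem_biUnion ⟨ht1, ht2⟩ hmem

lemma aux_genpos {N : ℕ} (hN : 0 < N) (c : ℕ → Fin N → ℝ) {δ : ℝ} (hδ : 0 < δ) :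
    ∃ q : ℕ → Fin N → ℝ, (∀ m, q m ∈ closedBall (c m) δ) ∧
      ∀ m (t : Finset ℕ), t ⊆ Finset.range m → t.card ≤ N → q m ∉ affineSpan ℝ (q '' ↑t) := by
  classical
  choose F hF1 hF2 using fun (q : ℕ → Fin N → ℝ) (m : ℕ) => aux_exists_point hN (c m) hδ q m
  set qs : ℕ → ℕ → Fin N → ℝ :=
    fun m => Nat.rec (fun _ => 0) (fun m' prev => Function.update prev m' (F prev m')) m with hqs
  have hqsS : ∀ m, qs (m + 1) = Function.update (qs m) m (F (qs m) m) := fun _ => rfl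
  set q : ℕ → Fin N → ℝ := fun m => qs (m + 1) m with hq
  have hqval : ∀ m, q m = F (qs m) m := by
    intro m
    show qs (m+1) m = F (qs m) m
    rw [hqsS]; simp
  have hagree : ∀ m' m, m < m' → qs m' m = q m := by
    intro m'
    induction m' with
    | zero => omega
    | succ m' ih =>
      intro m hm
      rcases Nat.lt_succ_iff_lt_or_eq.1 hm with h | rfl
      · rw [hqsS]
        rw [Function.update_of_ne (by omega)]
        exact ih m h
      · rfl
  have himg : ∀ m (t : Finset ℕ), t ⊆ Finset.range m → (qs m) '' ↑t = q '' ↑t := by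
    intro m t ht
    apply Set.image_congr
    intro i hi
    exact hagree m i (Finset.mem_range.1 (ht hi))
  refine ⟨q, fun m => ?_, fun m t h1 h2 => ?_⟩
  · rw [hqval]; exact hF1 (qs m) m
  · rw [← himg m t h1, hqval]
    exact hF2 (qs m) m t h1 h2

lemma aux_weights {N : ℕ} (hN : 0 < N) (q : ℕ → Fin N → ℝ)
    (hq : ∀ m (t : Finset ℕ), t ⊆ Finset.range m → t.card ≤ N → q m ∉ affineSpan ℝ (q '' ↑t))
    (B : Finset ℕ) (hB : B.card ≤ N + 1) (w : ℕ → ℝ) (hw0 : ∑ i ∈ B, w i = 0)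
    (hwq : ∑ i ∈ B, w i • q i = 0) : ∀ i ∈ B, w i = 0 := by
  classical
  by_contra hcon
  push_neg at hcon
  obtain ⟨i₁, hi₁B, hi₁⟩ := hcon
  set s : Finset ℕ := B.filter (fun i => w i ≠ 0) with hs
  have hsne : s.Nonempty := ⟨i₁, Finset.mem_filter.2 ⟨hi₁B, hi₁⟩⟩
  have hsum0 : ∑ i ∈ s, w i = 0 := by
    rw [Finset.sum_filter_of_ne (fun x _ h => h)]; exact hw0
  have hsumq : ∑ i ∈ s, w i • q i = 0 := by
    rw [Finset.sum_filter_of_ne]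
    · exact hwq
    · intro x _ h h0
      exact h (by rw [h0, zero_smul])
  set M := s.max' hsne with hM
  have hMs : M ∈ s := s.max'_mem hsne
  have hwM : w M ≠ 0 := (Finset.mem_filter.1 hMs).2
  set t := s.erase M with ht
  have htne : t.Nonempty := by
    rcases Finset.eq_empty_or_nonempty t with h | h
    · exfalso
      have hsub : s ⊆ {M} := by
        intro a ha
        by_contra ha2
        have : a ∈ t := Finset.mem_erase.2 ⟨by simpa using ha2, ha⟩
        simp [h] at this
      have : s = {M} := Finset.Subset.antisymm hsub (Finset.singleton_subset_iff.2 hMs)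
      rw [this, Finset.sum_singleton] at hsum0
      exact hwM hsum0
    · exact h
  have hsplit0 : w M + ∑ i ∈ t, w i = 0 := by
    rw [ht, Finset.add_sum_erase s w hMs]; exact hsum0
  have hsplitq : w M • q M + ∑ i ∈ t, w i • q i = 0 := by
    rw [ht, Finset.add_sum_erase s (fun i => w i • q i) hMs]; exact hsumq
  set u : ℕ → ℝ := fun i => -w i / w M with hu
  have hneg : ∑ i ∈ t, -w i = w M := by
    have h1 : ∑ i ∈ t, -w i = -∑ i ∈ t, w i := by simp
    rw [h1]; linarith [hsplit0]
  have husum : ∑ i ∈ t, u i = 1 := by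
    have : ∑ i ∈ t, u i = (∑ i ∈ t, -w i) / w M := by
      rw [Finset.sum_div]
    rw [this, hneg, div_self hwM]
  have hqM : q M = ∑ i ∈ t, u i • q i := by
    have h1 : ∀ i, u i • q i = (w M)⁻¹ • ((-w i) • q i) := by
      intro i
      rw [hu]
      show (-w i / w M) • q i = (w M)⁻¹ • ((-w i) • q i)
      rw [div_eq_inv_mul, mul_smul]
    have h2 : ∑ i ∈ t, u i • q i = (w M)⁻¹ • ∑ i ∈ t, (-w i) • q i := by
      rw [Finset.sum_congr rfl (fun i _ => h1 i), ← Finset.smul_sum]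
    have h3 : ∑ i ∈ t, (-w i) • q i = w M • q M := by
      have h4 : ∑ i ∈ t, (-w i) • q i = -∑ i ∈ t, w i • q i := by
        simp
      have h5 : ∑ i ∈ t, w i • q i = -(w M • q M) :=
        eq_neg_of_add_eq_zero_right hsplitq
      rw [h4, h5, neg_neg]
    rw [h2, h3, inv_smul_smul₀ hwM]
  obtain ⟨i₀, hi₀⟩ := htne
  set p : ℕ → Fin N → ℝ := fun i => if i ∈ t then q i else q i₀ with hp
  have hpq : ∀ i ∈ t, p i = q i := fun i hi => by simp [hp, hi]
  have hmem : q M ∈ affineSpan ℝ (Set.range p) := by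
    have hcomb : t.affineCombination ℝ p u = q M := by
      rw [Finset.affineCombination_eq_linear_combination t p u husum, hqM]
      exact Finset.sum_congr rfl (fun i hi => by rw [hpq i hi])
    rw [← hcomb]
    exact affineCombination_mem_affineSpan husum p
  have hsub : Set.range p ⊆ q '' ↑t := by
    rintro y ⟨i, rfl⟩
    by_cases hi : i ∈ t
    · exact ⟨i, hi, (hpq i hi).symm⟩
    · exact ⟨i₀, hi₀, by simp [hp, hi]⟩
  have hmem2 : q M ∈ affineSpan ℝ (q '' ↑t) := affineSpan_mono ℝ hsub hmem
  refine hq M t ?_ ?_ hmem2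
  · intro a ha
    have h1 : a ∈ s := (Finset.mem_erase.1 ha).2
    have h2 : a ≠ M := (Finset.mem_erase.1 ha).1
    exact Finset.mem_range.2 (lt_of_le_of_ne (s.le_max' a h1) h2)
  · have h1 : t.card = s.card - 1 := Finset.card_erase_of_mem hMs
    have h2 : s.card ≤ B.card := Finset.card_filter_le B _
    omega

lemma aux_trace {X : Type} [TopologicalSpace X] {n : ℕ} (L : Set X) (hL : TopDimLE ↥L n)
    (W : ℕ → Set X) (hWo : ∀ i, IsOpen (W i)) (hLW : L ⊆ ⋃ i, W i) :
    ∃ G : ℕ → Set X, (∀ i, IsOpen (G i)) ∧ (∀ i, G i ⊆ W i) ∧ (L ⊆ ⋃ i, G i) ∧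
      (∀ x, ∀ hx : x ∈ L, ∀ s : Finset ℕ, (∀ i ∈ s, x ∈ G i) → s.card ≤ n + 1) := by
  classical
  set 𝒰 : Set (Set ↥L) := Set.range (fun i => (Subtype.val ⁻¹' (W i) : Set ↥L)) with h𝒰
  have h1 : ∀ A ∈ 𝒰, IsOpen A := by
    rintro A ⟨i, rfl⟩
    exact (hWo i).preimage continuous_subtype_val
  have h2 : ⋃₀ 𝒰 = univ := by
    apply eq_univ_of_forall
    rintro ⟨x, hx⟩
    obtain ⟨i, hi⟩ := mem_iUnion.1 (hLW hx)
    exact ⟨Subtype.val ⁻¹' (W i), ⟨i, rfl⟩, hi⟩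
  obtain ⟨𝒱, hVo, hVc, href, hord⟩ := hL 𝒰 h1 h2
  have hch : ∀ V : {V : Set ↥L // V ∈ 𝒱}, ∃ (i : ℕ) (O : Set X),
      IsOpen O ∧ Subtype.val ⁻¹' O = V.1 ∧ V.1 ⊆ Subtype.val ⁻¹' (W i) := by
    rintro ⟨V, hV⟩
    obtain ⟨U, hU𝒰, hVU⟩ := href V hV
    obtain ⟨i, rfl⟩ := hU𝒰
    obtain ⟨O, hOo, hOe⟩ := isOpen_induced_iff.1 (hVo V hV)
    exact ⟨i, O, hOo, hOe, hVU⟩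
  choose j O hOo hOe hsub using hch
  refine ⟨fun i => ⋃ (V : {V : Set ↥L // V ∈ 𝒱}) (_ : j V = i), (O V ∩ W i), ?_, ?_, ?_, ?_⟩
  · intro i
    exact isOpen_iUnion fun V => isOpen_iUnion fun _ => (hOo V).inter (hWo i)
  · intro i
    exact iUnion₂_subset fun V _ => inter_subset_right
  · intro x hx
    have hx2 : (⟨x, hx⟩ : ↥L) ∈ ⋃₀ 𝒱 := hVc ▸ mem_univ _
    obtain ⟨V, hV, hxV⟩ := hx2
    refine mem_iUnion.2 ⟨j ⟨V, hV⟩, mem_iUnion.2 ⟨⟨V, hV⟩, mem_iUnion.2 ⟨rfl, ?_, ?_⟩⟩⟩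
    · have : (⟨x, hx⟩ : ↥L) ∈ Subtype.val ⁻¹' (O ⟨V, hV⟩) := by
        rw [hOe ⟨V, hV⟩]; exact hxV
      exact this
    · exact hsub ⟨V, hV⟩ hxV
  · intro x hx s hsG
    have hchoice : ∀ i : {i // i ∈ s}, ∃ V : {V : Set ↥L // V ∈ 𝒱},
        j V = i.1 ∧ (⟨x, hx⟩ : ↥L) ∈ V.1 := by
      rintro ⟨i, hi⟩
      obtain ⟨V, hmem⟩ := mem_iUnion.1 (hsG i hi)
      obtain ⟨hji, hxmem⟩ := mem_iUnion.1 hmem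
      refine ⟨V, hji, ?_⟩
      have : (⟨x, hx⟩ : ↥L) ∈ Subtype.val ⁻¹' (O V) := hxmem.1
      rw [hOe V] at this
      exact this
    choose Vc hVc1 hVc2 using hchoice
    have hcard : (s.attach.image (fun i => (Vc i).1)).card = s.card := by
      rw [Finset.card_image_of_injOn, Finset.card_attach]
      intro a _ b _ hab
      have h1 : Vc a = Vc b := Subtype.ext hab
      have := hVc1 a
      rw [h1, hVc1 b] at this
      exact Subtype.ext this.symm
    have := hord ⟨x, hx⟩ (s.attach.image (fun i => (Vc i).1)) ?_
    · omega
    · intro A hA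
      obtain ⟨i, _, rfl⟩ := Finset.mem_image.1 hA
      exact ⟨(Vc i).2, hVc2 i⟩

lemma aux_stage {X : Type} [MetricSpace X] [LocallyCompactSpace X] {n : ℕ}
    (hdim : ∀ K : Set X, IsCompact K → TopDimLE ↥K n)
    (V : ℕ → Set X) (hVo : ∀ i, IsOpen (V i)) (hVc : ⋃ i, V i = Set.univ)
    (D : Set X) (hD : IsCompact D) (O : Set X) (hO : IsOpen O)
    (F : Set X) (hF : IsClosed F) (hFD : F ∩ (D \ O) = ∅) :
    ∃ V' : ℕ → Set X, (∀ i, IsOpen (V' i)) ∧ (⋃ i, V' i = Set.univ) ∧ (∀ i, V' i ⊆ V i) ∧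
      (∀ i, V' i ∩ F = V i ∩ F) ∧
      ((∀ x ∈ O, ∀ s : Finset ℕ, (∀ i ∈ s, x ∈ V i) → s.card ≤ n + 1) →
        ∀ x ∈ D ∪ O, ∀ s : Finset ℕ, (∀ i ∈ s, x ∈ V' i) → s.card ≤ n + 1) := by
  classical
  have hA : IsCompact (D \ O) := hD.diff hO
  have hAF : D \ O ⊆ Fᶜ := by
    intro x hx hxF
    exact (Set.eq_empty_iff_forall_notMem.1 hFD x) ⟨hxF, hx⟩
  obtain ⟨L, hLc, hALint, hLF⟩ := exists_compact_between hA hF.isOpen_compl hAF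
  set W : ℕ → Set X := fun i => V i ∩ Fᶜ with hW
  have hWo : ∀ i, IsOpen (W i) := fun i => (hVo i).inter hF.isOpen_compl
  have hLW : L ⊆ ⋃ i, W i := by
    intro x hx
    have hx1 : x ∈ ⋃ i, V i := hVc ▸ mem_univ x
    obtain ⟨i, hi⟩ := mem_iUnion.1 hx1
    exact mem_iUnion.2 ⟨i, hi, hLF hx⟩
  obtain ⟨G, hGo, hGW, hGL, hGord⟩ := aux_trace L (hdim L hLc) W hWo hLW
  refine ⟨fun i => (V i \ L) ∪ G i, ?_, ?_, ?_, ?_, ?_⟩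
  · intro i
    exact ((hVo i).sdiff hLc.isClosed).union (hGo i)
  · apply eq_univ_of_forall
    intro x
    by_cases hx : x ∈ L
    · obtain ⟨i, hi⟩ := mem_iUnion.1 (hGL hx)
      exact mem_iUnion.2 ⟨i, Or.inr hi⟩
    · obtain ⟨i, hi⟩ := mem_iUnion.1 (hVc ▸ mem_univ x : x ∈ ⋃ i, V i)
      exact mem_iUnion.2 ⟨i, Or.inl ⟨hi, hx⟩⟩
  · intro i
    exact union_subset diff_subset ((hGW i).trans inter_subset_left)
  · intro i
    ext x
    constructor
    · rintro ⟨hx1 | hx1, hx2⟩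
      · exact ⟨hx1.1, hx2⟩
      · exact ⟨((hGW i) hx1).1, hx2⟩
    · rintro ⟨hx1, hx2⟩
      refine ⟨Or.inl ⟨hx1, fun hxL => ?_⟩, hx2⟩
      exact (hLF hxL) hx2
  · intro hOord x hxDO s hs
    by_cases hxL : x ∈ L
    · refine hGord x hxL s (fun i hi => ?_)
      rcases hs i hi with h | h
      · exact absurd hxL h.2
      · exact h
    · have hxO : x ∈ O := by
        rcases hxDO with hxD | hxO
        · by_contra hxO
          exact hxL (interior_subset (hALint ⟨hxD, hxO⟩))
        · exact hxO
      refine hOord x hxO s (fun i hi => ?_)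
      rcases hs i hi with h | h
      · exact h.1
      · exact ((hGW i) h).1

lemma aux_sum {X : Type} [MetricSpace X] [SecondCountableTopology X] [LocallyCompactSpace X]
    {n : ℕ} (hdim : ∀ K : Set X, IsCompact K → TopDimLE ↥K n)
    (U : ℕ → Set X) (hUo : ∀ i, IsOpen (U i)) (hUc : ⋃ i, U i = Set.univ) :
    ∃ V : ℕ → Set X, (∀ i, IsOpen (V i)) ∧ (⋃ i, V i = Set.univ) ∧ (∀ i, V i ⊆ U i) ∧
      (∀ x, ∀ s : Finset ℕ, (∀ i ∈ s, x ∈ V i) → s.card ≤ n + 1) := by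
  classical
  let K : CompactExhaustion X := CompactExhaustion.choice X
  set D : ℕ → Set X := fun m => K (m + 1) with hD
  set KS : ℕ → Set X := fun m => Nat.casesOn m ∅ (fun m' => K (m' + 1)) with hKS
  set O : ℕ → Set X := fun m => interior (KS m) with hOdef
  set F : ℕ → Set X := fun m => Nat.casesOn m ∅ (fun m' => K m') with hFdef
  have hDc : ∀ m, IsCompact (D m) := fun m => K.isCompact _
  have hOo : ∀ m, IsOpen (O m) := fun m => isOpen_interior
  have hFc : ∀ m, IsClosed (F m) := by
    intro m
    cases m with
    | zero => exact isClosed_empty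
    | succ m' => exact (K.isCompact m').isClosed
  have hdisj : ∀ m, F m ∩ (D m \ O m) = ∅ := by
    intro m
    cases m with
    | zero => exact Set.empty_inter _
    | succ m' =>
      apply Set.eq_empty_iff_forall_notMem.2
      rintro x ⟨hx1, _, hx3⟩
      exact hx3 (K.subset_interior_succ m' hx1)
  have hstep : ∀ m (V : ℕ → Set X), ((∀ i, IsOpen (V i)) ∧ (⋃ i, V i = Set.univ)) →
      ∃ V' : ℕ → Set X, (∀ i, IsOpen (V' i)) ∧ (⋃ i, V' i = Set.univ) ∧ (∀ i, V' i ⊆ V i) ∧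
      (∀ i, V' i ∩ F m = V i ∩ F m) ∧
      ((∀ x ∈ O m, ∀ s : Finset ℕ, (∀ i ∈ s, x ∈ V i) → s.card ≤ n + 1) →
        ∀ x ∈ D m ∪ O m, ∀ s : Finset ℕ, (∀ i ∈ s, x ∈ V' i) → s.card ≤ n + 1) :=
    fun m V h => aux_stage hdim V h.1 h.2 (D m) (hDc m) (O m) (hOo m) (F m) (hFc m) (hdisj m)
  set stageF : ℕ → (ℕ → Set X) → (ℕ → Set X) := fun m V =>
    if h : (∀ i, IsOpen (V i)) ∧ (⋃ i, V i = Set.univ) then Classical.choose (hstep m V h)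
    else V with hstageF
  set seq : ℕ → ℕ → Set X := fun m => Nat.rec U (fun m' Vm => stageF m' Vm) m with hseqdef
  have hseqS : ∀ m, seq (m + 1) = stageF m (seq m) := fun _ => rfl
  have hbasic : ∀ m, (∀ i, IsOpen (seq m i)) ∧ (⋃ i, seq m i = Set.univ) := by
    intro m
    induction m with
    | zero => exact ⟨hUo, hUc⟩
    | succ m' ih =>
      rw [hseqS, hstageF]
      simp only [dif_pos ih]
      obtain ⟨h1, h2, _⟩ := Classical.choose_spec (hstep m' (seq m') ih)
      exact ⟨h1, h2⟩
  have hrel : ∀ m, (∀ i, seq (m + 1) i ⊆ seq m i) ∧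
      (∀ i, seq (m + 1) i ∩ F m = seq m i ∩ F m) ∧
      ((∀ x ∈ O m, ∀ s : Finset ℕ, (∀ i ∈ s, x ∈ seq m i) → s.card ≤ n + 1) →
        ∀ x ∈ D m ∪ O m, ∀ s : Finset ℕ, (∀ i ∈ s, x ∈ seq (m + 1) i) → s.card ≤ n + 1) := by
    intro m
    have heq : seq (m + 1) = Classical.choose (hstep m (seq m) (hbasic m)) := by
      rw [hseqS, hstageF]
      simp only [dif_pos (hbasic m)]
    obtain ⟨_, _, h3, h4, h5⟩ := Classical.choose_spec (hstep m (seq m) (hbasic m))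
    rw [heq]
    exact ⟨h3, h4, h5⟩
  have hsubU : ∀ m i, seq m i ⊆ U i := by
    intro m
    induction m with
    | zero => exact fun i => subset_rfl
    | succ m' ih => exact fun i => ((hrel m').1 i).trans (ih i)
  have hord : ∀ m, ∀ x ∈ KS m, ∀ s : Finset ℕ, (∀ i ∈ s, x ∈ seq m i) → s.card ≤ n + 1 := by
    intro m
    induction m with
    | zero => intro x hx; exact absurd hx (notMem_empty x)
    | succ m' ih =>
      intro x hx s hs
      have hcond : ∀ y ∈ O m', ∀ s : Finset ℕ, (∀ i ∈ s, y ∈ seq m' i) → s.card ≤ n + 1 :=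
        fun y hy => ih y (interior_subset hy)
      have hx2 : x ∈ D m' ∪ O m' := Or.inl hx
      exact (hrel m').2.2 hcond x hx2 s hs
  have hstab : ∀ p d i, seq (p + 2 + d) i ∩ K p = seq (p + 2) i ∩ K p := by
    intro p d i
    induction d with
    | zero => rfl
    | succ d' ih =>
      have h1 : K p ⊆ F (p + 2 + d') := by
        show K p ⊆ Nat.casesOn (p + 2 + d') ∅ (fun m' => K m')
        have : p + 2 + d' = (p + 1 + d') + 1 := by omega
        rw [this]
        exact K.subset (by omega)
      have h2 := (hrel (p + 2 + d')).2.1 i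
      have h3 : seq (p + 2 + d' + 1) i ∩ K p = seq (p + 2 + d') i ∩ K p := by
        ext x
        constructor
        · rintro ⟨hx1, hx2⟩
          have : x ∈ seq (p + 2 + d') i ∩ F (p + 2 + d') := by
            rw [← h2]; exact ⟨hx1, h1 hx2⟩
          exact ⟨this.1, hx2⟩
        · rintro ⟨hx1, hx2⟩
          have : x ∈ seq (p + 2 + d' + 1) i ∩ F (p + 2 + d') := by
            rw [h2]; exact ⟨hx1, h1 hx2⟩
          exact ⟨this.1, hx2⟩
      have : p + 2 + (d' + 1) = p + 2 + d' + 1 := by omega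
      rw [this, h3, ih]
  have hstab2 : ∀ p m i, p + 2 ≤ m → seq m i ∩ K p = seq (p + 2) i ∩ K p := by
    intro p m i hm
    obtain ⟨d, rfl⟩ := Nat.exists_eq_add_of_le hm
    exact hstab p d i
  refine ⟨fun i => ⋃ p, seq (p + 2) i ∩ interior (K p), ?_, ?_, ?_, ?_⟩
  · intro i
    exact isOpen_iUnion fun p => ((hbasic (p + 2)).1 i).inter isOpen_interior
  · apply eq_univ_of_forall
    intro x
    obtain ⟨p, hp⟩ := mem_iUnion.1 (K.iUnion_eq ▸ mem_univ x : x ∈ ⋃ m, K m)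
    have hxint : x ∈ interior (K (p + 1)) := K.subset_interior_succ p hp
    obtain ⟨i, hi⟩ := mem_iUnion.1 ((hbasic (p + 1 + 2)).2 ▸ mem_univ x : x ∈ ⋃ i, seq (p + 1 + 2) i)
    exact mem_iUnion.2 ⟨i, mem_iUnion.2 ⟨p + 1, hi, hxint⟩⟩
  · intro i
    exact iUnion_subset fun p => inter_subset_left.trans (hsubU (p + 2) i)
  · intro x s hs
    obtain ⟨p, hp⟩ := mem_iUnion.1 (K.iUnion_eq ▸ mem_univ x : x ∈ ⋃ m, K m)
    have hxint : x ∈ interior (K (p + 1)) := K.subset_interior_succ p hp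
    have hkey : ∀ i, x ∈ (⋃ p', seq (p' + 2) i ∩ interior (K p')) → x ∈ seq (p + 1 + 2) i := by
      intro i hx
      obtain ⟨p', hx1, hx2⟩ := mem_iUnion.1 hx
      rcases le_total p' (p + 1) with h | h
      · have := hstab2 p' (p + 1 + 2) i (by omega)
        have hxK : x ∈ K p' := interior_subset hx2
        have : x ∈ seq (p + 1 + 2) i ∩ K p' := by
          rw [this]; exact ⟨hx1, hxK⟩
        exact this.1
      · have := hstab2 (p + 1) (p' + 2) i (by omega)
        have hxK : x ∈ K (p + 1) := interior_subset hxint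
        have hx3 : x ∈ seq (p + 1 + 2) i ∩ K (p + 1) := by
          rw [← this]; exact ⟨hx1, hxK⟩
        exact hx3.1
    refine hord (p + 1 + 2) x ?_ s (fun i hi => hkey i (hs i hi))
    show x ∈ K (p + 2 + 1)
    exact K.subset (by omega) (interior_subset hxint)


/-- `U_ε(C)` is dense: if `X` is a second-countable locally compact metric space whose
compact subspaces all have dimension at most `n ≥ 1`, `∅ ≠ C ⊆ X` is compact, `ε > 0`,
then for every continuous `f : X → ℝ^{2n+1}` and `0 < r < 1` there is a continuous `g`
with `ρ(f,g) ≤ r` and `Δ(g,C) < ε`. -/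


theorem statement14 (n : ℕ) (hn : 0 < n) (X : Type) [MetricSpace X]
    [SecondCountableTopology X] [LocallyCompactSpace X]
    (hdim : ∀ K : Set X, IsCompact K → TopDimLE ↥K n)
    (C : Set X) (hC : IsCompact C) (hCne : C.Nonempty) (ε : ℝ) (hε : 0 < ε)
    (f : X → Fin (2 * n + 1) → ℝ) (hf : Continuous f)
    (r : ℝ) (hr0 : 0 < r) (hr1 : r < 1) :
    ∃ g : X → Fin (2 * n + 1) → ℝ, Continuous g ∧ rho f g ≤ r ∧
      Delta g C < ENNReal.ofReal ε := by
  classical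
  haveI : Nonempty X := ⟨hCne.choose⟩
  have hNpos : 0 < 2 * n + 1 := by omega
  set S : X → Set X := fun c => f ⁻¹' (Metric.ball (f c) (r / 4)) ∩ Metric.ball c (ε / 8)
    with hSdef
  have hSo : ∀ c, IsOpen (S c) := fun c =>
    (Metric.isOpen_ball.preimage hf).inter Metric.isOpen_ball
  have hSmem : ∀ c, c ∈ S c := by
    intro c
    exact ⟨Metric.mem_ball_self (by positivity), Metric.mem_ball_self (by positivity)⟩
  have hSc : ⋃ c, S c = univ := eq_univ_of_forall fun x => mem_iUnion.2 ⟨x, hSmem x⟩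
  obtain ⟨T, hTc, hTeq⟩ := TopologicalSpace.isOpen_iUnion_countable S hSo
  have hTne : T.Nonempty := by
    obtain ⟨x⟩ := ‹Nonempty X›
    have hx : x ∈ ⋃ c, S c := hSc ▸ mem_univ x
    rw [← hTeq] at hx
    obtain ⟨c, hcT, -⟩ := mem_iUnion₂.1 hx
    exact ⟨c, hcT⟩
  obtain ⟨e, hrange⟩ := hTc.exists_eq_range hTne
  set U : ℕ → Set X := fun i => S (e i) with hUdef
  have hUo : ∀ i, IsOpen (U i) := fun i => hSo _
  have hUc : ⋃ i, U i = univ := by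
    have h1 : ⋃ i, S (e i) = ⋃ c ∈ Set.range e, S c := (Set.biUnion_range).symm
    show ⋃ i, S (e i) = univ
    rw [h1, ← hrange, hTeq, hSc]
  obtain ⟨V, hVo, hVc, hVU, hVord⟩ := aux_sum hdim U hUo hUc
  obtain ⟨ρ, hρsub⟩ := PartitionOfUnity.exists_isSubordinate isClosed_univ V hVo
    (by rw [hVc])
  obtain ⟨q, hq1, hq2⟩ := aux_genpos hNpos (fun i => f (e i)) (δ := r / 4) (by positivity)
  set g : X → Fin (2 * n + 1) → ℝ := fun x => ∑ᶠ i, ρ i x • q i with hgdef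
  have hsupp : ∀ i, support (fun x => ρ i x • q i) ⊆ support (ρ i) := by
    intro i x hx
    rw [mem_support] at hx ⊢
    intro h0
    apply hx
    rw [h0, zero_smul]
  have hgcont : Continuous g :=
    continuous_finsum (fun i => ((ρ i).continuous).smul continuous_const)
      (ρ.locallyFinite.subset hsupp)
  have hfin : ∀ x : X, ({i : ℕ | ρ i x ≠ 0}).Finite := by
    intro x
    refine (ρ.locallyFinite.point_finite x).subset ?_
    intro i hi
    exact hi
  set Sx : X → Finset ℕ := fun x => (hfin x).toFinset with hSxdef
  have hSxmem : ∀ x i, i ∈ Sx x ↔ ρ i x ≠ 0 := by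
    intro x i
    exact (hfin x).mem_toFinset
  have hgx : ∀ x, g x = ∑ i ∈ Sx x, ρ i x • q i := by
    intro x
    refine finsum_eq_sum_of_support_subset _ ?_
    intro i hi
    have h1 : ρ i x ≠ 0 := by
      intro h0
      rw [mem_support, h0, zero_smul] at hi
      exact hi rfl
    simpa using (hSxmem x i).2 h1
  have hρx : ∀ x, ∑ i ∈ Sx x, ρ i x = 1 := by
    intro x
    have h1 : ∑ᶠ i, ρ i x = ∑ i ∈ Sx x, ρ i x := by
      refine finsum_eq_sum_of_support_subset _ ?_
      intro i hi
      simpa using (hSxmem x i).2 hi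
    rw [← h1]
    exact ρ.sum_eq_one (mem_univ x)
  have memV : ∀ (x : X) (i : ℕ), ρ i x ≠ 0 → x ∈ V i := by
    intro x i h
    exact hρsub i (subset_tsupport _ (Function.mem_support.2 h))
  have memU : ∀ (x : X) (i : ℕ), ρ i x ≠ 0 → x ∈ S (e i) := by
    intro x i h
    exact hVU i (memV x i h)
  have hnq : ∀ (x : X) (i : ℕ), ρ i x ≠ 0 → ‖q i - f x‖ ≤ r / 2 := by
    intro x i h
    have h1 : dist (f x) (f (e i)) < r / 4 := Metric.mem_ball.1 (memU x i h).1
    have h2 : dist (q i) (f (e i)) ≤ r / 4 := Metric.mem_closedBall.1 (hq1 i)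
    have h3 : dist (q i) (f x) ≤ dist (q i) (f (e i)) + dist (f (e i)) (f x) :=
      dist_triangle _ _ _
    rw [← dist_eq_norm]
    rw [dist_comm (f x) (f (e i))] at h1
    linarith
  have hgf : ∀ x, ‖g x - f x‖ ≤ r / 2 := by
    intro x
    have hrep : g x - f x = ∑ i ∈ Sx x, ρ i x • (q i - f x) := by
      have h1 : ∑ i ∈ Sx x, ρ i x • (q i - f x)
          = (∑ i ∈ Sx x, ρ i x • q i) - (∑ i ∈ Sx x, ρ i x) • f x := by
        rw [Finset.sum_smul]
        rw [← Finset.sum_sub_distrib]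
        apply Finset.sum_congr rfl
        intro i _
        rw [smul_sub]
      rw [hgx x, h1, hρx x, one_smul]
    rw [hrep]
    calc ‖∑ i ∈ Sx x, ρ i x • (q i - f x)‖ ≤ ∑ i ∈ Sx x, ‖ρ i x • (q i - f x)‖ :=
          norm_sum_le _ _
      _ ≤ ∑ i ∈ Sx x, ρ i x * (r / 2) := by
          apply Finset.sum_le_sum
          intro i hi
          rw [norm_smul, Real.norm_eq_abs, abs_of_nonneg (ρ.nonneg i x)]
          exact mul_le_mul_of_nonneg_left (hnq x i ((hSxmem x i).1 hi)) (ρ.nonneg i x)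
      _ = r / 2 := by rw [← Finset.sum_mul, hρx x, one_mul]
  have hfiber : ∀ x₀ y : X, g y = g x₀ → dist y x₀ ≤ ε / 4 := by
    intro x₀ y hgy
    have hcard : ∀ z : X, (Sx z).card ≤ n + 1 := by
      intro z
      exact hVord z (Sx z) (fun i hi => memV z i ((hSxmem z i).1 hi))
    have hBcard : (Sx x₀ ∪ Sx y).card ≤ (2 * n + 1) + 1 := by
      have := Finset.card_union_le (Sx x₀) (Sx y)
      have := hcard x₀
      have := hcard y
      omega
    have hzero : ∀ z : X, ∀ i ∈ Sx x₀ ∪ Sx y, i ∉ Sx z → ρ i z = 0 := by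
      intro z i _ hi
      by_contra h
      exact hi ((hSxmem z i).2 h)
    have hsum1 : ∀ z : X, Sx z ⊆ Sx x₀ ∪ Sx y → ∑ i ∈ Sx x₀ ∪ Sx y, ρ i z = 1 := by
      intro z hz
      rw [← Finset.sum_subset hz (fun i hi hni => hzero z i hi hni)]
      exact hρx z
    have hsumq : ∀ z : X, Sx z ⊆ Sx x₀ ∪ Sx y →
        ∑ i ∈ Sx x₀ ∪ Sx y, ρ i z • q i = g z := by
      intro z hz
      rw [← Finset.sum_subset hz (fun i hi hni => by rw [hzero z i hi hni, zero_smul])]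
      exact (hgx z).symm
    have hw0 : ∑ i ∈ Sx x₀ ∪ Sx y, (ρ i x₀ - ρ i y) = 0 := by
      rw [Finset.sum_sub_distrib, hsum1 x₀ Finset.subset_union_left,
        hsum1 y Finset.subset_union_right]
      ring
    have hwq : ∑ i ∈ Sx x₀ ∪ Sx y, (ρ i x₀ - ρ i y) • q i = 0 := by
      have h1 : ∀ i, (ρ i x₀ - ρ i y) • q i = ρ i x₀ • q i - ρ i y • q i := by
        intro i
        rw [sub_smul]
      simp_rw [h1]
      rw [Finset.sum_sub_distrib, hsumq x₀ Finset.subset_union_left,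
        hsumq y Finset.subset_union_right, hgy, sub_self]
    have hall := aux_weights hNpos q hq2 (Sx x₀ ∪ Sx y) hBcard _ hw0 hwq
    have hρeq : ∀ i, ρ i x₀ = ρ i y := by
      intro i
      by_cases hi : i ∈ Sx x₀ ∪ Sx y
      · have := hall i hi
        linarith [this]
      · rw [Finset.mem_union, not_or] at hi
        have h1 : ρ i x₀ = 0 := by
          by_contra h
          exact hi.1 ((hSxmem x₀ i).2 h)
        have h2 : ρ i y = 0 := by
          by_contra h
          exact hi.2 ((hSxmem y i).2 h)
        rw [h1, h2]
    have hne : (Sx x₀).Nonempty := by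
      by_contra h
      rw [Finset.not_nonempty_iff_eq_empty] at h
      have := hρx x₀
      rw [h, Finset.sum_empty] at this
      norm_num at this
    obtain ⟨i₀, hi₀⟩ := hne
    have hρ0 : ρ i₀ x₀ ≠ 0 := (hSxmem x₀ i₀).1 hi₀
    have hy0 : ρ i₀ y ≠ 0 := by
      rw [← hρeq i₀]
      exact hρ0
    have d1 : dist y (e i₀) < ε / 8 := Metric.mem_ball.1 (memU y i₀ hy0).2
    have d2 : dist x₀ (e i₀) < ε / 8 := Metric.mem_ball.1 (memU x₀ i₀ hρ0).2
    have := dist_triangle y (e i₀) x₀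
    rw [dist_comm (e i₀) x₀] at this
    linarith
  refine ⟨g, hgcont, ?_, ?_⟩
  · show (⨆ x : X, min 1 ‖f x - g x‖) ≤ r
    apply ciSup_le
    intro x
    refine le_trans (min_le_right _ _) ?_
    rw [norm_sub_rev]
    linarith [hgf x]
  · have hle : Delta g C ≤ ENNReal.ofReal (ε / 2) := by
      show (⨆ z ∈ g '' C, EMetric.diam (g ⁻¹' {z})) ≤ ENNReal.ofReal (ε / 2)
      refine iSup₂_le ?_
      rintro z ⟨x₀, hx₀C, rfl⟩
      apply EMetric.diam_le
      intro y hy y' hy'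
      have h1 : dist y x₀ ≤ ε / 4 := hfiber x₀ y (by simpa using hy)
      have h2 : dist y' x₀ ≤ ε / 4 := hfiber x₀ y' (by simpa using hy')
      calc edist y y' ≤ edist y x₀ + edist x₀ y' := edist_triangle _ _ _
        _ = ENNReal.ofReal (dist y x₀) + ENNReal.ofReal (dist x₀ y') := by
            rw [edist_dist, edist_dist]
        _ ≤ ENNReal.ofReal (ε / 4) + ENNReal.ofReal (ε / 4) := by
            refine add_le_add (ENNReal.ofReal_le_ofReal h1) (ENNReal.ofReal_le_ofReal ?_)
            rw [dist_comm]
            exact h2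
        _ = ENNReal.ofReal (ε / 2) := by
            rw [← ENNReal.ofReal_add (by positivity) (by positivity)]
            congr 1
            ring
    exact lt_of_le_of_lt hle ((ENNReal.ofReal_lt_ofReal_iff hε).2 (by linarith))
end

section
/- Every open subset of an ANR is again an ANR. -/
/-- `X` is an Absolute Neighbourhood Retract: every continuous map to `X` from a closed
subset `A` of a paracompact (Hausdorff) space `P` extends continuously to an open
neighbourhood of `A` in `P`. -/
def IsANR (X : Type u) [TopologicalSpace X] : Prop :=
  ∀ (P : Type u) [TopologicalSpace P] [ParacompactSpace P] [T2Space P]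
    (A : Set P), IsClosed A → ∀ f : A → X, Continuous f →
      ∃ (W : Set P) (_ : IsOpen W) (hAW : A ⊆ W) (F : W → X), Continuous F ∧
        ∀ (x : P) (hx : x ∈ A), F ⟨x, hAW hx⟩ = f ⟨x, hx⟩

/-- Every open subset of an ANR is again an ANR. -/
theorem statement18 (X : Type) [TopologicalSpace X] (hX : IsANR X)
    (U : Set X) (hU : IsOpen U) : IsANR ↥U := by
  intro P _ _ _ A hA f hf
  obtain ⟨W, hW, hAW, F, hFc, hFext⟩ :=
    hX P A hA (fun a => (f a : X)) (continuous_subtype_val.comp hf)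
  -- F ⁻¹' U is open in W
  have hpre : IsOpen (F ⁻¹' U) := hFc.isOpen_preimage U hU
  rw [isOpen_induced_iff] at hpre
  obtain ⟨V, hV, hVeq⟩ := hpre
  refine ⟨W ∩ V, hW.inter hV, ?_, ?_, ?_, ?_⟩
  · intro x hx
    refine ⟨hAW hx, ?_⟩
    have : (⟨x, hAW hx⟩ : W) ∈ F ⁻¹' U := by
      simp only [Set.mem_preimage, hFext x hx]
      exact (f ⟨x, hx⟩).2
    rw [← hVeq] at this
    exact this
  · intro x
    refine ⟨F ⟨x.1, x.2.1⟩, ?_⟩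
    have : (⟨x.1, x.2.1⟩ : W) ∈ Subtype.val ⁻¹' V := x.2.2
    rw [hVeq] at this
    exact this
  · exact Continuous.subtype_mk (hFc.comp (Continuous.subtype_mk continuous_subtype_val _)) _
  · intro x hx
    ext
    exact hFext x hx
end

section
/- Every topological n-manifold M is an ANR. -/
section Aux
open Set Topology


/-- Absolute neighbourhood extensor property of a subset `S` of `M`,
with respect to paracompact Hausdorff ambient spaces. -/
def IsANE {M : Type} [TopologicalSpace M] (S : Set M) : Prop :=
  ∀ (P : Type) [TopologicalSpace P] [ParacompactSpace P] [T2Space P]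
    (A : Set P), IsClosed A → ∀ f : A → M, Continuous f → (∀ a : A, f a ∈ S) →
      ∃ (W : Set P) (_ : IsOpen W) (hAW : A ⊆ W) (F : W → M), Continuous F ∧
        (∀ w : W, F w ∈ S) ∧ ∀ (x : P) (hx : x ∈ A), F ⟨x, hAW hx⟩ = f ⟨x, hx⟩

variable {M : Type} [TopologicalSpace M]

theorem isANE_of_isANR {S : Set M} (h : IsANR ↥S) : IsANE S := by
  intro P _ _ _ A hA f hf hfS
  obtain ⟨W, hW, hAW, F, hFc, hFe⟩ :=
    h P A hA (fun a => ⟨f a, hfS a⟩) (hf.subtype_mk _)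
  exact ⟨W, hW, hAW, fun w => (F w : M), continuous_subtype_val.comp hFc,
    fun w => (F w).2, fun x hx => congrArg Subtype.val (hFe x hx)⟩

theorem isANR_of_isANE {S : Set M} (h : IsANE S) : IsANR ↥S := by
  intro P _ _ _ A hA f hf
  obtain ⟨W, hW, hAW, F, hFc, hFS, hFe⟩ :=
    h P A hA (fun a => (f a : M)) (continuous_subtype_val.comp hf) (fun a => (f a).2)
  refine ⟨W, hW, hAW, fun w => ⟨F w, hFS w⟩, hFc.subtype_mk _, fun x hx => ?_⟩
  exact Subtype.ext (hFe x hx)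

theorem isANR_of_isANE_univ (h : IsANE (univ : Set M)) : IsANR M := by
  intro P _ _ _ A hA f hf
  obtain ⟨W, hW, hAW, F, hFc, _, hFe⟩ := h P A hA f hf (fun a => mem_univ _)
  exact ⟨W, hW, hAW, F, hFc, hFe⟩

theorem IsANR.of_homeomorph {X Y : Type} [TopologicalSpace X] [TopologicalSpace Y]
    (e : X ≃ₜ Y) (h : IsANR X) : IsANR Y := by
  intro P _ _ _ A hA f hf
  obtain ⟨W, hW, hAW, F, hFc, hFe⟩ := h P A hA (fun a => e.symm (f a))
    (e.symm.continuous.comp hf)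
  exact ⟨W, hW, hAW, fun w => e (F w), e.continuous.comp hFc, fun x hx =>
    (congrArg e (hFe x hx)).trans (e.apply_symm_apply _)⟩

theorem isANE_empty : IsANE (∅ : Set M) := by
  intro P _ _ _ A hA f hf hfS
  have hAe : A = ∅ := by
    by_contra h
    obtain ⟨a, ha⟩ := nonempty_iff_ne_empty.2 h
    exact (hfS ⟨a, ha⟩).elim
  subst hAe
  exact ⟨∅, isOpen_empty, le_refl _, fun w => (notMem_empty _ w.2).elim,
    continuous_of_const (fun a b => (notMem_empty _ a.2).elim), fun w => (notMem_empty _ w.2).elim,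
    fun x hx => (notMem_empty _ hx).elim⟩

/-- Gluing piecewise-defined functions over two closed sets. -/
theorem continuousOn_piecewise_of_isClosed {α β : Type*} [TopologicalSpace α] [TopologicalSpace β]
    {C D s : Set α} (hC : IsClosed C) (hD : IsClosed D) {f g : α → β}
    (hf : ContinuousOn f (s ∩ C)) (hg : ContinuousOn g (s ∩ D)) (hsub : s ⊆ C ∪ D)
    (heq : ∀ x ∈ s ∩ C ∩ D, f x = g x) [∀ x, Decidable (x ∈ C)] :
    ContinuousOn (C.piecewise f g) s := by
  intro x hx
  have hsu : s = (s ∩ C) ∪ (s ∩ D) := by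
    rw [← inter_union_distrib_left]
    exact (inter_eq_left.mpr hsub).symm
  have hEqC : EqOn (C.piecewise f g) f (s ∩ C) := fun y hy => piecewise_eq_of_mem _ _ _ hy.2
  have hEqD : EqOn (C.piecewise f g) g (s ∩ D) := by
    intro y hy
    by_cases hyC : y ∈ C
    · rw [piecewise_eq_of_mem _ _ _ hyC]; exact heq y ⟨⟨hy.1, hyC⟩, hy.2⟩
    · exact piecewise_eq_of_notMem _ _ _ hyC
  have hcC : ContinuousWithinAt (C.piecewise f g) (s ∩ C) x := by
    by_cases hxC : x ∈ closure (s ∩ C)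
    · have hxC' : x ∈ C := by
        have := closure_mono (inter_subset_right (s := s) (t := C)) hxC
        rwa [hC.closure_eq] at this
      by_cases hxs : x ∈ s ∩ C
      · exact ((hf x hxs).congr hEqC (hEqC hxs)).mono (le_refl _)
      · -- x ∈ closure (s∩C) \ (s∩C); but x ∈ s, so x ∉ C is false... x ∈ C, x ∈ s: contradiction
        exact absurd ⟨hx, hxC'⟩ hxs
    · exact continuousWithinAt_of_notMem_closure hxC
  have hcD : ContinuousWithinAt (C.piecewise f g) (s ∩ D) x := by
    by_cases hxD : x ∈ closure (s ∩ D)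
    · have hxD' : x ∈ D := by
        have := closure_mono (inter_subset_right (s := s) (t := D)) hxD
        rwa [hD.closure_eq] at this
      exact ((hg x ⟨hx, hxD'⟩).congr hEqD (hEqD ⟨hx, hxD'⟩)).mono (le_refl _)
    · exact continuousWithinAt_of_notMem_closure hxD
  rw [hsu]
  exact hcC.union hcD

/-- An open subset of an ANE set is ANE. -/
theorem IsANE.of_isOpen_subset {S S' : Set M} (h : IsANE S) (hS' : IsOpen S') (hsub : S' ⊆ S) :
    IsANE S' := by
  intro P _ _ _ A hA f hf hfS
  obtain ⟨W, hW, hAW, F, hFc, hFS, hFe⟩ := h P A hA f hf (fun a => hsub (hfS a))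
  classical
  refine ⟨{p : P | ∃ h : p ∈ W, F ⟨p, h⟩ ∈ S'}, ?_, ?_, fun w => F ⟨w.1, w.2.1⟩, ?_, ?_, ?_⟩
  · have : {p : P | ∃ h : p ∈ W, F ⟨p, h⟩ ∈ S'} = Subtype.val '' (F ⁻¹' S') := by
      ext p
      simp only [mem_setOf_eq, mem_image]
      constructor
      · rintro ⟨hp, hFp⟩; exact ⟨⟨p, hp⟩, hFp, rfl⟩
      · rintro ⟨⟨q, hq⟩, hFq, rfl⟩; exact ⟨hq, hFq⟩
    rw [this]
    exact hW.isOpenMap_subtype_val _ (hS'.preimage hFc)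
  · intro a ha
    refine ⟨hAW ha, ?_⟩
    rw [hFe a ha]; exact hfS ⟨a, ha⟩
  · exact hFc.comp (continuous_subtype_val.subtype_mk _)
  · exact fun w => w.2.2
  · intro x hx; exact hFe x hx


/-- Retraction of `ℝ^n` onto the half-space. -/
noncomputable def halfRetr (n : ℕ) (y : Fin n → ℝ) : Fin n → ℝ :=
  fun i => if (i : ℕ) + 1 = n then max (y i) 0 else y i

theorem continuous_halfRetr (n : ℕ) : Continuous (halfRetr n) := by
  refine continuous_pi fun i => ?_
  by_cases h : (i : ℕ) + 1 = n
  · simp only [halfRetr, h, if_true]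
    exact ((continuous_apply i).max continuous_const)
  · simp only [halfRetr, h, if_false]
    exact continuous_apply i

theorem halfRetr_mem (n : ℕ) (y : Fin n → ℝ) : halfRetr n y ∈ HalfSpace n := by
  intro i hi
  simp only [halfRetr, hi, if_true]
  exact le_max_right _ _

theorem halfRetr_eq_of_mem {n : ℕ} {y : Fin n → ℝ} (hy : y ∈ HalfSpace n) :
    halfRetr n y = y := by
  funext i
  by_cases h : (i : ℕ) + 1 = n
  · simp only [halfRetr, h, if_true]
    exact max_eq_left (hy i h)
  · simp only [halfRetr, h, if_false]

/-- An open subset of `ℝ^n` is an ANR. -/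
theorem isANR_of_isOpen_euclidean {n : ℕ} {s : Set (Fin n → ℝ)} (hs : IsOpen s) :
    IsANR ↥s := by
  intro P _ _ _ A hA f hf
  obtain ⟨G, hG⟩ := ContinuousMap.exists_restrict_eq (Y := Fin n → ℝ) hA
    ⟨fun a => (f a : Fin n → ℝ), continuous_subtype_val.comp hf⟩
  have hGa : ∀ (x : P) (hx : x ∈ A), G x = (f ⟨x, hx⟩ : Fin n → ℝ) := by
    intro x hx
    exact congrFun (congrArg DFunLike.coe hG) ⟨x, hx⟩
  refine ⟨G ⁻¹' s, hs.preimage G.continuous, fun a ha => ?_, fun w => ⟨G w, w.2⟩,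
    (G.continuous.comp continuous_subtype_val).subtype_mk _, fun x hx => ?_⟩
  · have := hGa a ha
    simp only [mem_preimage, this]
    exact (f ⟨a, ha⟩).2
  · exact Subtype.ext (hGa x hx)

/-- A relatively open subset of the half-space is an ANR. -/
theorem isANR_of_isOpen_halfspace {n : ℕ} {t : Set (Fin n → ℝ)} (ht : IsOpen t) :
    IsANR ↥(t ∩ HalfSpace n) := by
  intro P _ _ _ A hA f hf
  obtain ⟨G, hG⟩ := ContinuousMap.exists_restrict_eq (Y := Fin n → ℝ) hA
    ⟨fun a => (f a : Fin n → ℝ), continuous_subtype_val.comp hf⟩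
  have hGa : ∀ (x : P) (hx : x ∈ A), G x = (f ⟨x, hx⟩ : Fin n → ℝ) := by
    intro x hx
    exact congrFun (congrArg DFunLike.coe hG) ⟨x, hx⟩
  set r : P → (Fin n → ℝ) := fun p => halfRetr n (G p) with hr
  have hrc : Continuous r := (continuous_halfRetr n).comp G.continuous
  have hra : ∀ (x : P) (hx : x ∈ A), r x = (f ⟨x, hx⟩ : Fin n → ℝ) := by
    intro x hx
    rw [hr]
    simp only [hGa x hx]
    exact halfRetr_eq_of_mem (f ⟨x, hx⟩).2.2
  refine ⟨r ⁻¹' t, ht.preimage hrc, fun a ha => ?_, fun w => ⟨r w, w.2, halfRetr_mem n _⟩,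
    (hrc.comp continuous_subtype_val).subtype_mk _, fun x hx => ?_⟩
  · simp only [mem_preimage, hra a ha]
    exact (f ⟨a, ha⟩).2.1
  · exact Subtype.ext (hra x hx)
theorem IsANE.union' {M : Type} [TopologicalSpace M] {U V : Set M} (hU : IsOpen U) (hV : IsOpen V)
    (hUa : IsANE U) (hVa : IsANE V) : IsANE (U ∪ V) := by
  classical
  cases isEmpty_or_nonempty M with
  | inl h =>
    rw [Set.eq_empty_of_isEmpty (U ∪ V)]
    exact isANE_empty
  | inr hne =>
  obtain ⟨m₀⟩ := hne
  intro P _ _ _ A hA f hf hfS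
  -- totalize f
  set ft : P → M := fun p => if h : p ∈ A then f ⟨p, h⟩ else m₀ with hft
  have hftA : ∀ (x : P) (hx : x ∈ A), ft x = f ⟨x, hx⟩ := fun x hx => dif_pos hx
  have hftc : ContinuousOn ft A := by
    rw [continuousOn_iff_continuous_restrict]
    have heq : A.domRestrict ft = f := funext fun a => hftA a.1 a.2
    rwa [heq]
  have hftS : ∀ p ∈ A, ft p ∈ U ∪ V := by
    intro p hp; rw [hftA p hp]; exact hfS ⟨p, hp⟩
  -- Urysohn separation of the two "bad" sets
  have hC1 : IsClosed (A ∩ ft ⁻¹' Vᶜ) :=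
    hftc.preimage_isClosed_of_isClosed hA hV.isClosed_compl
  have hC2 : IsClosed (A ∩ ft ⁻¹' Uᶜ) :=
    hftc.preimage_isClosed_of_isClosed hA hU.isClosed_compl
  have hdisj : Disjoint (A ∩ ft ⁻¹' Vᶜ) (A ∩ ft ⁻¹' Uᶜ) := by
    rw [Set.disjoint_left]
    rintro p ⟨hpA, hpV⟩ ⟨_, hpU⟩
    rcases hftS p hpA with h | h
    exacts [hpU h, hpV h]
  obtain ⟨u, hu0, hu1, _⟩ := exists_continuous_zero_one_of_isClosed hC1 hC2 hdisj
  set P₁ : Set P := {p | u p ≤ 1/2} with hP₁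
  set P₂ : Set P := {p | (1:ℝ)/2 ≤ u p} with hP₂
  have hP₁c : IsClosed P₁ := isClosed_le u.continuous continuous_const
  have hP₂c : IsClosed P₂ := isClosed_le continuous_const u.continuous
  have hP₁₂ : ∀ p : P, p ∈ P₁ ∪ P₂ := fun p => by
    rcases le_total (u p) (1/2) with h | h
    exacts [Or.inl h, Or.inr h]
  have hAP₁ : ∀ p ∈ A ∩ P₁, ft p ∈ U := by
    rintro p ⟨hpA, hpP⟩
    by_contra hpU
    have h1 : u p = 1 := hu1 ⟨hpA, hpU⟩
    have h2 : u p ≤ 1/2 := hpP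
    rw [h1] at h2; norm_num at h2
  have hAP₂ : ∀ p ∈ A ∩ P₂, ft p ∈ V := by
    rintro p ⟨hpA, hpP⟩
    by_contra hpV
    have h1 : u p = 0 := hu0 ⟨hpA, hpV⟩
    have h2 : (1:ℝ)/2 ≤ u p := hpP
    rw [h1] at h2; norm_num at h2
  set P₀ : Set P := P₁ ∩ P₂ with hP₀
  have hP₀c : IsClosed P₀ := hP₁c.inter hP₂c
  have hAP₀ : ∀ p ∈ A ∩ P₀, ft p ∈ U ∩ V :=
    fun p hp => ⟨hAP₁ p ⟨hp.1, hp.2.1⟩, hAP₂ p ⟨hp.1, hp.2.2⟩⟩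
  -- extend over the middle
  haveI : ParacompactSpace ↥P₀ := hP₀c.isClosedEmbedding_subtypeVal.paracompactSpace
  set A₀ : Set ↥P₀ := Subtype.val ⁻¹' A with hA₀
  have hA₀c : IsClosed A₀ := hA.preimage continuous_subtype_val
  have hX₀ : IsANE (U ∩ V) := hUa.of_isOpen_subset (hU.inter hV) Set.inter_subset_left
  obtain ⟨W₀, hW₀o, hA₀W₀, G₀, hG₀c, hG₀S, hG₀e⟩ := hX₀ ↥P₀ A₀ hA₀c
    (fun q => ft q.1.1)
    (hftc.comp_continuous (continuous_subtype_val.comp continuous_subtype_val) fun q => q.2)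
    (fun q => hAP₀ q.1.1 ⟨q.2, q.1.2⟩)
  obtain ⟨V₀, hV₀o, hA₀V₀, hV₀W₀⟩ := normal_exists_closure_subset hA₀c hW₀o hA₀W₀
  obtain ⟨O₀, hO₀o, hO₀⟩ : ∃ O, IsOpen O ∧ Subtype.val ⁻¹' O = V₀ := isOpen_induced_iff.mp hV₀o
  set Z₀ : Set P := Subtype.val '' (closure V₀) with hZ₀
  have hZ₀c : IsClosed Z₀ := hP₀c.isClosedEmbedding_subtypeVal.isClosedMap _ isClosed_closure
  have hZ₀P₀ : Z₀ ⊆ P₀ := by rintro p ⟨q, _, rfl⟩; exact q.2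
  have hZmem₂ : ∀ {p : P} (h : p ∈ Z₀), (⟨p, hZ₀P₀ h⟩ : ↥P₀) ∈ W₀ := by
    rintro p ⟨q, hq, rfl⟩
    exact hV₀W₀ hq
  have hVZ : ∀ {p : P} (hp : p ∈ P₀), p ∈ O₀ → p ∈ Z₀ := by
    intro p hp hpO
    have : (⟨p, hp⟩ : ↥P₀) ∈ V₀ := by rw [← hO₀]; exact hpO
    exact ⟨⟨p, hp⟩, subset_closure this, rfl⟩
  -- totalized middle extension
  set g₀ : P → M := fun p => if h : p ∈ Z₀ then G₀ ⟨⟨p, hZ₀P₀ h⟩, hZmem₂ h⟩ else m₀ with hg₀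
  have hg₀S : ∀ p ∈ Z₀, g₀ p ∈ U ∩ V := by
    intro p h; rw [hg₀]; simp only [dif_pos h]; exact hG₀S _
  have hg₀A : ∀ p ∈ Z₀, p ∈ A → g₀ p = ft p := by
    intro p h hpA
    rw [hg₀]; simp only [dif_pos h]
    exact hG₀e ⟨p, hZ₀P₀ h⟩ hpA
  have hg₀c : ContinuousOn g₀ Z₀ := by
    rw [continuousOn_iff_continuous_restrict]
    have heq : Z₀.domRestrict g₀
        = G₀ ∘ (fun z : ↥Z₀ => (⟨⟨z.1, hZ₀P₀ z.2⟩, hZmem₂ z.2⟩ : ↥W₀)) := by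
      funext z
      simp only [Set.restrict_apply, Function.comp_apply, hg₀, dif_pos z.2]
    rw [heq]
    exact hG₀c.comp ((continuous_subtype_val.subtype_mk _).subtype_mk _)
  -- the glued boundary data
  set h₀ : P → M := Z₀.piecewise g₀ ft with hh₀
  have hpwA : ∀ p ∈ A, h₀ p = ft p := by
    intro p hp
    by_cases hz : p ∈ Z₀
    · rw [hh₀, Set.piecewise_eq_of_mem _ _ _ hz]; exact hg₀A p hz hp
    · rw [hh₀, Set.piecewise_eq_of_notMem _ _ _ hz]
  -- one-sided extensions
  have side : ∀ (T : Set M) (Ps : Set P), IsANE T → IsClosed Ps → Z₀ ⊆ Ps →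
      (∀ p ∈ A ∩ Ps, ft p ∈ T) → U ∩ V ⊆ T →
      ∃ (O : Set P) (Fs : P → M), IsOpen O ∧ (A ∩ Ps) ∪ Z₀ ⊆ O ∧
        ContinuousOn Fs (O ∩ Ps) ∧ (∀ p ∈ O ∩ Ps, Fs p ∈ T) ∧
        (∀ p ∈ (A ∩ Ps) ∪ Z₀, Fs p = h₀ p) := by
    intro T Ps hTa hPsc hZPs hAPs hUVT
    set B : Set P := (A ∩ Ps) ∪ Z₀ with hB
    have hBc : IsClosed B := (hA.inter hPsc).union hZ₀c
    have hBPs : B ⊆ Ps := by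
      rintro p (hp | hp)
      exacts [hp.2, hZPs hp]
    have hh₀c : ContinuousOn h₀ B := by
      apply continuousOn_piecewise_of_isClosed hZ₀c (hA.inter hPsc)
        (hg₀c.mono Set.inter_subset_right)
        (hftc.mono (fun p hp => hp.2.1)) (fun p hp => Or.symm hp)
      intro p hp
      exact hg₀A p hp.1.2 hp.2.1
    have hh₀T : ∀ p ∈ B, h₀ p ∈ T := by
      rintro p hp
      by_cases hz : p ∈ Z₀
      · rw [hh₀, Set.piecewise_eq_of_mem _ _ _ hz]
        exact hUVT (hg₀S p hz)
      · rcases hp with hp | hp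
        · rw [hh₀, Set.piecewise_eq_of_notMem _ _ _ hz]
          exact hAPs p hp
        · exact absurd hp hz
    haveI : ParacompactSpace ↥Ps := hPsc.isClosedEmbedding_subtypeVal.paracompactSpace
    obtain ⟨Ws, hWso, hBWs, F', hF'c, hF'T, hF'e⟩ := hTa ↥Ps (Subtype.val ⁻¹' B)
      (hBc.preimage continuous_subtype_val)
      (fun q => h₀ q.1.1)
      (hh₀c.comp_continuous (continuous_subtype_val.comp continuous_subtype_val) fun q => q.2)
      (fun q => hh₀T q.1.1 q.2)
    obtain ⟨O, hOo, hOW⟩ : ∃ O, IsOpen O ∧ Subtype.val ⁻¹' O = Ws := isOpen_induced_iff.mp hWso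
    have hmemW : ∀ {p : P} (hps : p ∈ Ps), p ∈ O → (⟨p, hps⟩ : ↥Ps) ∈ Ws := by
      intro p hps hO; rw [← hOW]; exact hO
    set Fs : P → M :=
      fun p => if h : p ∈ Ps ∧ p ∈ O then F' ⟨⟨p, h.1⟩, hmemW h.1 h.2⟩ else m₀ with hFs
    have hFsval : ∀ {p : P} (h : p ∈ Ps ∧ p ∈ O), Fs p = F' ⟨⟨p, h.1⟩, hmemW h.1 h.2⟩ :=
      fun h => dif_pos h
    refine ⟨O, Fs, hOo, ?_, ?_, ?_, ?_⟩
    · intro p hp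
      have h1 : (⟨p, hBPs hp⟩ : ↥Ps) ∈ Ws := hBWs hp
      rw [← hOW] at h1
      exact h1
    · rw [continuousOn_iff_continuous_restrict]
      have heq : (O ∩ Ps).domRestrict Fs
          = F' ∘ (fun z : ↥(O ∩ Ps) => (⟨⟨z.1, z.2.2⟩, hmemW z.2.2 z.2.1⟩ : ↥Ws)) := by
        funext z
        simp only [Set.restrict_apply, Function.comp_apply]
        exact hFsval ⟨z.2.2, z.2.1⟩
      rw [heq]
      exact hF'c.comp ((continuous_subtype_val.subtype_mk _).subtype_mk _)
    · intro p hp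
      rw [hFsval ⟨hp.2, hp.1⟩]
      exact hF'T _
    · intro p hp
      have hps : p ∈ Ps := hBPs hp
      have hpo : p ∈ O := by
        have h1 : (⟨p, hps⟩ : ↥Ps) ∈ Ws := hBWs hp
        rw [← hOW] at h1; exact h1
      rw [hFsval ⟨hps, hpo⟩]
      exact hF'e ⟨p, hps⟩ hp
  obtain ⟨O₁, F₁, hO₁o, hB₁O₁, hF₁c, hF₁T, hF₁e⟩ :=
    side U P₁ hUa hP₁c (fun p hp => (hZ₀P₀ hp).1) hAP₁ Set.inter_subset_left
  obtain ⟨O₂, F₂, hO₂o, hB₂O₂, hF₂c, hF₂T, hF₂e⟩ :=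
    side V P₂ hVa hP₂c (fun p hp => (hZ₀P₀ hp).2) hAP₂ Set.inter_subset_right
  -- final neighbourhood
  set W : Set P := (O₁ ∩ {p | u p < 1/2}) ∪ (O₂ ∩ {p | (1:ℝ)/2 < u p}) ∪ (O₀ ∩ (O₁ ∩ O₂))
    with hW
  have hWo : IsOpen W :=
    (((hO₁o.inter (isOpen_lt u.continuous continuous_const)).union
      (hO₂o.inter (isOpen_lt continuous_const u.continuous))).union
      (hO₀o.inter (hO₁o.inter hO₂o)))
  have hWP₁ : W ∩ P₁ ⊆ O₁ ∩ P₁ := by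
    rintro p ⟨hpW, hpP⟩
    refine ⟨?_, hpP⟩
    rcases hpW with (⟨h, _⟩ | ⟨_, h⟩) | ⟨_, h, _⟩
    · exact h
    · exact absurd (show (1:ℝ)/2 < u p from h) (not_lt.mpr hpP)
    · exact h
  have hWP₂ : W ∩ P₂ ⊆ O₂ ∩ P₂ := by
    rintro p ⟨hpW, hpP⟩
    refine ⟨?_, hpP⟩
    rcases hpW with (⟨_, h⟩ | ⟨h, _⟩) | ⟨_, _, h⟩
    · exact absurd (show u p < 1/2 from h) (not_lt.mpr hpP)
    · exact h
    · exact h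
  have hWZ : ∀ p ∈ W ∩ P₀, p ∈ Z₀ := by
    rintro p ⟨hpW, hpP⟩
    rcases hpW with (⟨_, h⟩ | ⟨_, h⟩) | ⟨h, _⟩
    · exact absurd (show u p < 1/2 from h) (not_lt.mpr hpP.2)
    · exact absurd (show (1:ℝ)/2 < u p from h) (not_lt.mpr hpP.1)
    · exact hVZ hpP h
  have hAW : A ⊆ W := by
    intro a ha
    rcases lt_trichotomy (u a) (1/2) with h | h | h
    · exact Or.inl (Or.inl ⟨(hB₁O₁ (Or.inl ⟨ha, le_of_lt h⟩)), h⟩)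
    · have hp₀ : a ∈ P₀ := ⟨le_of_eq h, ge_of_eq h⟩
      have haZ : a ∈ O₀ := by
        have : (⟨a, hp₀⟩ : ↥P₀) ∈ V₀ := hA₀V₀ ha
        rw [← hO₀] at this
        exact this
      exact Or.inr ⟨haZ, hB₁O₁ (Or.inl ⟨ha, hp₀.1⟩), hB₂O₂ (Or.inl ⟨ha, hp₀.2⟩)⟩
    · exact Or.inl (Or.inr ⟨(hB₂O₂ (Or.inl ⟨ha, le_of_lt h⟩)), h⟩)
  set Ft : P → M := P₁.piecewise F₁ F₂ with hFt
  have hmidZ : ∀ p ∈ W ∩ P₀, F₁ p = F₂ p := by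
    intro p hp
    have hz : p ∈ Z₀ := hWZ p hp
    rw [hF₁e p (Or.inr hz), hF₂e p (Or.inr hz)]
  have hFtc : ContinuousOn Ft W := by
    apply continuousOn_piecewise_of_isClosed hP₁c hP₂c
      (hF₁c.mono hWP₁) (hF₂c.mono hWP₂) (fun p _ => hP₁₂ p)
    rintro p ⟨⟨hpW, hp1⟩, hp2⟩
    exact hmidZ p ⟨hpW, hp1, hp2⟩
  have hFtS : ∀ p ∈ W, Ft p ∈ U ∪ V := by
    intro p hp
    by_cases h1 : p ∈ P₁
    · rw [hFt, Set.piecewise_eq_of_mem _ _ _ h1]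
      exact Or.inl (hF₁T p ((hWP₁ ⟨hp, h1⟩).imp_right fun _ => h1))
    · have h2 : p ∈ P₂ := (hP₁₂ p).resolve_left h1
      rw [hFt, Set.piecewise_eq_of_notMem _ _ _ h1]
      exact Or.inr (hF₂T p ((hWP₂ ⟨hp, h2⟩).imp_right fun _ => h2))
  have hFtA : ∀ p ∈ A, Ft p = ft p := by
    intro p hp
    by_cases h1 : p ∈ P₁
    · rw [hFt, Set.piecewise_eq_of_mem _ _ _ h1, hF₁e p (Or.inl ⟨hp, h1⟩)]
      exact hpwA p hp
    · have h2 : p ∈ P₂ := (hP₁₂ p).resolve_left h1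
      rw [hFt, Set.piecewise_eq_of_notMem _ _ _ h1, hF₂e p (Or.inl ⟨hp, h2⟩)]
      exact hpwA p hp
  refine ⟨W, hWo, hAW, fun w => Ft w.1, ?_, fun w => hFtS w.1 w.2, fun x hx => ?_⟩
  · exact continuousOn_iff_continuous_restrict.mp hFtc
  · exact (hFtA x hx).trans (hftA x hx)
/-- Paracompact Hausdorff spaces are collectionwise normal (for countable discrete families). -/
theorem exists_disjoint_opens {P : Type} [TopologicalSpace P] [ParacompactSpace P] [T2Space P]
    (A : ℕ → Set P) (hc : ∀ i, IsClosed (A i))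
    (hdisc : ∀ p : P, ∃ N : Set P, N ∈ nhds p ∧ {i | (N ∩ A i).Nonempty}.Subsingleton) :
    ∃ G : ℕ → Set P, (∀ i, IsOpen (G i)) ∧ (∀ i, A i ⊆ G i) ∧
      Pairwise (Function.onFun Disjoint G) := by
  classical
  have hreg : ∀ p : P, ∃ Vp : Set P, IsOpen Vp ∧ p ∈ Vp ∧
      {i | (closure Vp ∩ A i).Nonempty}.Subsingleton := by
    intro p
    obtain ⟨N, hN, hsub⟩ := hdisc p
    obtain ⟨t, ht, htc, hts⟩ := exists_mem_nhds_isClosed_subset hN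
    refine ⟨interior t, isOpen_interior, mem_interior_iff_mem_nhds.2 ht, ?_⟩
    intro i hi j hj
    have hcl : closure (interior t) ⊆ N :=
      (closure_minimal interior_subset htc).trans hts
    exact hsub (hi.mono (inter_subset_inter_left _ hcl))
      (hj.mono (inter_subset_inter_left _ hcl))
  choose Vp hVo hVmem hVsub using hreg
  obtain ⟨v, hvo, hvcov, hvlf, hvsub⟩ := precise_refinement Vp hVo
    (by rw [Set.iUnion_eq_univ_iff]; exact fun p => ⟨p, hVmem p⟩)
  have hvcl : ∀ p : P, {i | (closure (v p) ∩ A i).Nonempty}.Subsingleton := by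
    intro p
    intro i hi j hj
    have hmono : closure (v p) ⊆ closure (Vp p) := closure_mono (hvsub p)
    exact hVsub p (hi.mono (inter_subset_inter_left _ hmono))
      (hj.mono (inter_subset_inter_left _ hmono))
  set G : ℕ → Set P := fun i =>
    (⋃ p : P, if (closure (v p) ∩ A i).Nonempty then v p else ∅) \
      (⋃ p : P, if (closure (v p) ∩ A i).Nonempty then ∅ else closure (v p)) with hG
  have hGclosedpart : ∀ i, IsClosed (⋃ p : P,
      if (closure (v p) ∩ A i).Nonempty then ∅ else closure (v p)) := by
    intro i
    apply LocallyFinite.isClosed_iUnion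
    · apply (hvlf.closure).subset
      intro p
      split <;> simp
    · intro p
      split
      exacts [isClosed_empty, isClosed_closure]
  refine ⟨G, fun i => ?_, fun i => ?_, ?_⟩
  · exact IsOpen.sdiff (isOpen_iUnion fun p => by split; exacts [hvo p, isOpen_empty])
      (hGclosedpart i)
  · intro a ha
    have hcov : a ∈ ⋃ p, v p := by rw [hvcov]; trivial
    obtain ⟨p, hp⟩ := Set.mem_iUnion.mp hcov
    have hcond : (closure (v p) ∩ A i).Nonempty := ⟨a, subset_closure hp, ha⟩
    constructor
    · exact Set.mem_iUnion.mpr ⟨p, by rw [if_pos hcond]; exact hp⟩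
    · intro hbad
      obtain ⟨q, hq⟩ := Set.mem_iUnion.mp hbad
      by_cases hcq : (closure (v q) ∩ A i).Nonempty
      · rw [if_pos hcq] at hq; exact hq
      · rw [if_neg hcq] at hq
        exact hcq ⟨a, hq, ha⟩
  · intro i j hij
    rw [Function.onFun, Set.disjoint_left]
    intro x hxi hxj
    obtain ⟨p, hp⟩ := Set.mem_iUnion.mp hxi.1
    by_cases hci : (closure (v p) ∩ A i).Nonempty
    · rw [if_pos hci] at hp
      by_cases hcj : (closure (v p) ∩ A j).Nonempty
      · exact hij (hvcl p hci hcj)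
      · exact hxj.2 (Set.mem_iUnion.mpr ⟨p, by rw [if_neg hcj]; exact subset_closure hp⟩)
    · rw [if_neg hci] at hp; exact hp
/-- A pairwise disjoint countable union of open ANE sets is ANE. -/
theorem isANE_iUnion_of_disjoint {M : Type} [TopologicalSpace M] (S : ℕ → Set M)
    (ho : ∀ i, IsOpen (S i)) (ha : ∀ i, IsANE (S i))
    (hd : Pairwise (Function.onFun Disjoint S)) : IsANE (⋃ i, S i) := by
  classical
  cases isEmpty_or_nonempty M with
  | inl h =>
    rw [Set.eq_empty_of_isEmpty (⋃ i, S i)]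
    exact isANE_empty
  | inr hne =>
  obtain ⟨m₀⟩ := hne
  intro P _ _ _ A hA f hf hfS
  set ft : P → M := fun p => if h : p ∈ A then f ⟨p, h⟩ else m₀ with hft
  have hftA : ∀ (x : P) (hx : x ∈ A), ft x = f ⟨x, hx⟩ := fun x hx => dif_pos hx
  have hftc : ContinuousOn ft A := by
    rw [continuousOn_iff_continuous_restrict]
    have heq : A.domRestrict ft = f := funext fun a => hftA a.1 a.2
    rwa [heq]
  have hftS : ∀ p ∈ A, ft p ∈ ⋃ i, S i := by
    intro p hp; rw [hftA p hp]; exact hfS ⟨p, hp⟩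
  set Ai : ℕ → Set P := fun i => A ∩ ft ⁻¹' (S i) with hAi
  have huniqS : ∀ (m : M), m ∈ ⋃ i, S i → ∀ i j, m ∈ S i → m ∈ S j → i = j := by
    intro m _ i j hi hj
    by_contra hij
    exact Set.disjoint_left.mp (hd hij) hi hj
  have hAic : ∀ i, IsClosed (Ai i) := by
    intro i
    set Ti : Set M := ⋃ j, if j = i then (∅ : Set M) else S j with hTi
    have hTio : IsOpen Ti := isOpen_iUnion fun j => by split; exacts [isOpen_empty, ho j]
    have hiff : ∀ p ∈ A, (ft p ∈ S i ↔ ft p ∉ Ti) := by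
      intro p hp
      constructor
      · intro hpi hpT
        obtain ⟨j, hj⟩ := Set.mem_iUnion.mp hpT
        by_cases hji : j = i
        · rw [if_pos hji] at hj; exact hj
        · rw [if_neg hji] at hj
          exact hji (huniqS _ (hftS p hp) j i hj hpi)
      · intro hpT
        obtain ⟨j, hj⟩ := Set.mem_iUnion.mp (hftS p hp)
        by_cases hji : j = i
        · rwa [hji] at hj
        · exact (hpT (Set.mem_iUnion.mpr ⟨j, by rw [if_neg hji]; exact hj⟩)).elim
    have heq : Ai i = A ∩ ft ⁻¹' Tiᶜ := by
      ext p
      simp only [hAi, Set.mem_inter_iff, Set.mem_preimage, Set.mem_compl_iff]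
      exact ⟨fun ⟨h1, h2⟩ => ⟨h1, (hiff p h1).mp h2⟩, fun ⟨h1, h2⟩ => ⟨h1, (hiff p h1).mpr h2⟩⟩
    rw [heq]
    exact hftc.preimage_isClosed_of_isClosed hA hTio.isClosed_compl
  have hmemAi : ∀ p ∈ A, ∃ i, p ∈ Ai i := by
    intro p hp
    obtain ⟨i, hi⟩ := Set.mem_iUnion.mp (hftS p hp)
    exact ⟨i, hp, hi⟩
  have hdisc : ∀ p : P, ∃ N : Set P, N ∈ nhds p ∧ {i | (N ∩ Ai i).Nonempty}.Subsingleton := by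
    intro p
    by_cases hp : p ∈ A
    · obtain ⟨i₀, hpi₀⟩ := hmemAi p hp
      have hCc : IsClosed (A ∩ ft ⁻¹' (S i₀)ᶜ) :=
        hftc.preimage_isClosed_of_isClosed hA (ho i₀).isClosed_compl
      refine ⟨(A ∩ ft ⁻¹' (S i₀)ᶜ)ᶜ, hCc.isOpen_compl.mem_nhds ?_, ?_⟩
      · intro hmem
        exact hmem.2 hpi₀.2
      · intro i ⟨q, hqN, hqA⟩ j ⟨r, hrN, hrA⟩
        have hqi : ft q ∈ S i₀ := by
          by_contra hq
          exact hqN ⟨hqA.1, hq⟩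
        have hri : ft r ∈ S i₀ := by
          by_contra hr
          exact hrN ⟨hrA.1, hr⟩
        rw [huniqS _ (hftS q hqA.1) i i₀ hqA.2 hqi,
          huniqS _ (hftS r hrA.1) j i₀ hrA.2 hri]
    · refine ⟨Aᶜ, hA.isOpen_compl.mem_nhds hp, ?_⟩
      rintro i ⟨q, hqN, hqA⟩
      exact (hqN hqA.1).elim
  obtain ⟨G, hGo, hAG, hGd⟩ := exists_disjoint_opens Ai hAic hdisc
  choose W hWo hWsub F hFc hFS hFe using fun i => ha i P (Ai i) (hAic i)
    (fun a => ft a.1)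
    (continuousOn_iff_continuous_restrict.mp (hftc.mono Set.inter_subset_left))
    (fun a => a.2.2)
  have huniqW : ∀ (p : P) (i j : ℕ), p ∈ W i ∩ G i → p ∈ W j ∩ G j → i = j := by
    intro p i j hi hj
    by_contra hij
    exact Set.disjoint_left.mp (hGd hij) hi.2 hj.2
  set Wfin : Set P := ⋃ i, W i ∩ G i with hWfin
  set Ftot : P → M := fun p =>
    if h : ∃ i, p ∈ W i ∩ G i then F h.choose ⟨p, h.choose_spec.1⟩ else m₀ with hFtot
  have hFtval : ∀ (p : P) (i : ℕ) (h : p ∈ W i ∩ G i), Ftot p = F i ⟨p, h.1⟩ := by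
    intro p i h
    have hex : ∃ j, p ∈ W j ∩ G j := ⟨i, h⟩
    rw [hFtot]
    simp only [dif_pos hex]
    have heq : hex.choose = i := huniqW p _ _ hex.choose_spec h
    subst heq
    rfl
  have hFtCO : ∀ i, ContinuousOn Ftot (W i ∩ G i) := by
    intro i
    rw [continuousOn_iff_continuous_restrict]
    have heq : (W i ∩ G i).domRestrict Ftot
        = F i ∘ (fun z : ↥(W i ∩ G i) => (⟨z.1, z.2.1⟩ : ↥(W i))) := by
      funext z
      exact hFtval z.1 i z.2
    rw [heq]
    exact (hFc i).comp (continuous_subtype_val.subtype_mk _)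
  refine ⟨Wfin, isOpen_iUnion fun i => (hWo i).inter (hGo i), ?_,
    fun w => Ftot w.1, ?_, ?_, ?_⟩
  · intro a ha'
    obtain ⟨i, hi⟩ := hmemAi a ha'
    exact Set.mem_iUnion.mpr ⟨i, hWsub i hi, hAG i hi⟩
  · have : Continuous (Wfin.domRestrict Ftot) := by
      rw [← continuousOn_iff_continuous_restrict]
      intro x hx
      obtain ⟨i, hi⟩ := Set.mem_iUnion.mp hx
      exact (((hFtCO i).continuousAt (((hWo i).inter (hGo i)).mem_nhds hi)).continuousWithinAt)
    exact this
  · intro w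
    obtain ⟨i, hi⟩ := Set.mem_iUnion.mp w.2
    show Ftot w.1 ∈ ⋃ i, S i
    rw [hFtval w.1 i hi]
    exact Set.mem_iUnion.mpr ⟨i, hFS i _⟩
  · intro x hx
    obtain ⟨i, hi⟩ := hmemAi x hx
    have h1 : x ∈ W i ∩ G i := ⟨hWsub i hi, hAG i hi⟩
    have h2 := hFtval x i h1
    have h3 := hFe i x hi
    exact h2.trans (h3.trans (hftA x hi.1))
theorem isClosed_halfSpace (n : ℕ) : IsClosed (HalfSpace n) := by
  have heq : HalfSpace n = ⋂ i : Fin n, {y : Fin n → ℝ | (i : ℕ) + 1 = n → 0 ≤ y i} := by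
    ext y; simp [HalfSpace, Set.mem_iInter]
  rw [heq]
  refine isClosed_iInter fun i => ?_
  by_cases h : (i : ℕ) + 1 = n
  · have : {y : Fin n → ℝ | (i : ℕ) + 1 = n → 0 ≤ y i} = {y | 0 ≤ y i} := by
      ext y; simp [h]
    rw [this]
    exact isClosed_le continuous_const (continuous_apply i)
  · have : {y : Fin n → ℝ | (i : ℕ) + 1 = n → 0 ≤ y i} = Set.univ := by
      ext y; simp [h]
    rw [this]
    exact isClosed_univ

theorem exists_compact_nbhd_subtype {n : ℕ} {s : Set (Fin n → ℝ)}
    (h : ∃ t C : Set (Fin n → ℝ), IsOpen t ∧ IsClosed C ∧ s = t ∩ C) (y : ↥s) :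
    ∃ K : Set ↥s, IsCompact K ∧ K ∈ nhds y := by
  obtain ⟨t, C, ht, hC, rfl⟩ := h
  obtain ⟨ε, hε, hball⟩ := Metric.isOpen_iff.mp ht y.1 y.2.1
  refine ⟨Subtype.val ⁻¹' Metric.closedBall y.1 (ε/2), ?_, ?_⟩
  · rw [Subtype.isCompact_iff]
    have himg : (Subtype.val : ↥(t ∩ C) → (Fin n → ℝ)) '' (Subtype.val ⁻¹' Metric.closedBall (y : Fin n → ℝ) (ε/2))
        = Metric.closedBall (y : Fin n → ℝ) (ε/2) ∩ (t ∩ C) := by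
      apply Set.image_preimage_eq_inter_range.trans
      rw [Subtype.range_coe]
    rw [himg]
    have hsub : Metric.closedBall (y : Fin n → ℝ) (ε/2) ⊆ t :=
      (Metric.closedBall_subset_ball (by linarith)).trans hball
    have : Metric.closedBall (y : Fin n → ℝ) (ε/2) ∩ (t ∩ C)
        = Metric.closedBall (y : Fin n → ℝ) (ε/2) ∩ C := by
      ext z
      exact ⟨fun hz => ⟨hz.1, hz.2.2⟩, fun hz => ⟨hz.1, hsub hz.1, hz.2⟩⟩
    rw [this]
    exact (isCompact_closedBall _ _).inter_right hC
  · refine Filter.mem_of_superset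
      ((Metric.isOpen_ball.preimage continuous_subtype_val).mem_nhds ?_)
      (Set.preimage_mono Metric.ball_subset_closedBall)
    show (y : Fin n → ℝ) ∈ Metric.ball (y : Fin n → ℝ) (ε/2)
    exact Metric.mem_ball_self (by linarith)

/-- Finite unions of open ANE sets are ANE. -/
theorem isANE_finset_biUnion {M : Type} [TopologicalSpace M] {ι : Type} (t : Finset ι)
    (U : ι → Set M) (ho : ∀ i, IsOpen (U i)) (ha : ∀ i, IsANE (U i)) :
    IsANE (⋃ i ∈ t, U i) := by
  classical
  induction t using Finset.induction_on with
  | empty => simpa using (isANE_empty (M := M))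
  | @insert a s hx ih =>
    rw [Finset.set_biUnion_insert]
    exact (ha a).union' (ho a) (isOpen_biUnion fun i _ => ho i) ih
end Aux

/-- Every topological `n`-manifold is an ANR. -/
theorem statement19 (n : ℕ) (M : Type) [TopologicalSpace M] (hM : IsTopManifold n M) :
    IsANR M := by
  classical
  obtain ⟨hSC, hT2, hch⟩ := hM
  haveI := hSC
  haveI := hT2
  choose u huo humem hrest using hch
  have hsdata : ∀ x : M, ∃ s : Set (Fin n → ℝ),
      (∃ t C : Set (Fin n → ℝ), IsOpen t ∧ IsClosed C ∧ s = t ∩ C) ∧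
        Nonempty (↥(u x) ≃ₜ ↥s) ∧ IsANR ↥s := by
    intro x
    obtain ⟨s, hcase, he⟩ := hrest x
    rcases hcase with hs | ⟨t, ht, rfl⟩
    · exact ⟨s, ⟨s, Set.univ, hs, isClosed_univ, (Set.inter_univ s).symm⟩, he,
        isANR_of_isOpen_euclidean hs⟩
    · exact ⟨t ∩ HalfSpace n, ⟨t, HalfSpace n, ht, isClosed_halfSpace n, rfl⟩, he,
        isANR_of_isOpen_halfspace ht⟩
  choose sx hsx hex hanr using hsdata
  have hANEu : ∀ x : M, IsANE (u x) := by
    intro x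
    obtain ⟨e⟩ := hex x
    exact isANE_of_isANR ((hanr x).of_homeomorph e.symm)
  haveI : WeaklyLocallyCompactSpace M := by
    constructor
    intro x
    obtain ⟨e⟩ := hex x
    obtain ⟨K, hKc, hKn⟩ := exists_compact_nbhd_subtype (hsx x) (e ⟨x, humem x⟩)
    refine ⟨Subtype.val '' (e ⁻¹' K),
      (e.isCompact_preimage.mpr hKc).image continuous_subtype_val, ?_⟩
    have h1 : e ⁻¹' K ∈ nhds (⟨x, humem x⟩ : ↥(u x)) :=
      e.continuous.continuousAt.preimage_mem_nhds hKn
    exact ((huo x).isOpenMap_subtype_val).image_mem_nhds h1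
  haveI : SigmaCompactSpace M := inferInstance
  set K : CompactExhaustion M := (CompactExhaustion.choice M).shiftr with hK
  have hK0 : K 0 = ∅ := rfl
  set O : ℕ → Set M := fun i => interior (K (i+2)) \ K i with hO
  have hOopen : ∀ i, IsOpen (O i) := fun i => isOpen_interior.sdiff (K.isCompact i).isClosed
  have hOcover : ∀ x : M, ∃ i, x ∈ O i := by
    intro x
    have h0 : K.find x ≠ 0 := by
      intro h
      have hm := K.mem_find x
      rw [h, hK0] at hm
      exact hm
    obtain ⟨j, hj⟩ := Nat.exists_eq_succ_of_ne_zero h0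
    refine ⟨j, ?_, ?_⟩
    · have hx1 : x ∈ K (j+1) := by
        have hm := K.mem_find x
        rw [hj] at hm
        exact hm
      exact interior_mono (K.subset (by omega)) (K.subset_interior_succ _ hx1)
    · intro hxj
      have := K.mem_iff_find_le.mp hxj
      omega
  have hOdisj : ∀ a b, a + 2 ≤ b → Disjoint (O a) (O b) := by
    intro a b hab
    rw [Set.disjoint_left]
    rintro z ⟨hz1, _⟩ ⟨_, hzb⟩
    exact hzb (K.subset hab (interior_subset hz1))
  have hANEO : ∀ i, IsANE (O i) := by
    intro i
    have hclsub : closure (O i) ⊆ K (i+2) :=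
      closure_minimal (Set.diff_subset.trans interior_subset) (K.isCompact _).isClosed
    have hclcomp : IsCompact (closure (O i)) :=
      (K.isCompact (i+2)).of_isClosed_subset isClosed_closure hclsub
    obtain ⟨t, hts⟩ := hclcomp.elim_finite_subcover u huo
      (fun z _ => Set.mem_iUnion.mpr ⟨z, humem z⟩)
    exact (isANE_finset_biUnion t u huo hANEu).of_isOpen_subset (hOopen i)
      (subset_closure.trans hts)
  have hEane : IsANE (⋃ m, O (2*m)) := by
    refine isANE_iUnion_of_disjoint _ (fun m => hOopen _) (fun m => hANEO _) ?_
    intro a b hab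
    rcases lt_or_gt_of_ne hab with h | h
    · exact hOdisj _ _ (by omega)
    · exact (hOdisj _ _ (by omega)).symm
  have hDane : IsANE (⋃ m, O (2*m+1)) := by
    refine isANE_iUnion_of_disjoint _ (fun m => hOopen _) (fun m => hANEO _) ?_
    intro a b hab
    rcases lt_or_gt_of_ne hab with h | h
    · exact hOdisj _ _ (by omega)
    · exact (hOdisj _ _ (by omega)).symm
  have huniv : (⋃ m, O (2*m)) ∪ (⋃ m, O (2*m+1)) = Set.univ := by
    apply Set.eq_univ_of_forall
    intro x
    obtain ⟨i, hi⟩ := hOcover x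
    rcases Nat.even_or_odd i with ⟨m, hm⟩ | ⟨m, hm⟩
    · refine Or.inl (Set.mem_iUnion.mpr ⟨m, ?_⟩)
      have h2 : 2*m = i := by omega
      rw [h2]; exact hi
    · refine Or.inr (Set.mem_iUnion.mpr ⟨m, ?_⟩)
      have h2 : 2*m+1 = i := by omega
      rw [h2]; exact hi
  have hfin : IsANE (Set.univ : Set M) := by
    rw [← huniv]
    exact hEane.union' (isOpen_iUnion fun _ => hOopen _) (isOpen_iUnion fun _ => hOopen _) hDane
  exact isANR_of_isANE_univ hfin
end
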